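/- arXiv:math/0607391 — 5 statements merged into one kernel-verified Lean document; each statement's English description precedes it below -/
import Mathlib

section
/- For all subsets D, E ⊆ {1,…,n−1}, the space of right H𝔖_n-module homomorphisms from P_D to P_E has dimension dim_ℂ Hom_{H𝔖_n}(P_D, P_E) = 1 if D ⊆ E, and 0 otherwise. In other words, the Cartan matrix of H𝔖_n is the incidence matrix of the boolean lattice of subsets of {1,…,n−1}. -/
open scoped Classical

set_option maxHeartbeats 1000000
set_option synthInstance.maxHeartbeats 400000

noncomputable section

/-- The symmetric group on `{1, …, n}`, 0-indexed as permutations of `Fin n`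
(so positions/descents are indexed by `i ∈ {0, …, n-2}` instead of `{1, …, n-1}`). -/
abbrev PermN (n : ℕ) := Equiv.Perm (Fin n)

/-- The vector space `ℂ𝔖ₙ` with basis the symmetric group. -/
abbrev CS (n : ℕ) := Equiv.Perm (Fin n) →₀ ℂ

/-- The elementary transposition `sᵢ` exchanging `i` and `i+1` (0-indexed). -/
def swapAt (n i : ℕ) (h : i + 1 < n) : PermN n :=
  Equiv.swap ⟨i, Nat.lt_of_succ_lt h⟩ ⟨i + 1, h⟩

/-- The operator `σᵢ` on `ℂ𝔖ₙ`: right multiplication by `sᵢ` (action on positions),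
`μ ↦ μ sᵢ`. -/
def sigmaOp (n i : ℕ) : Module.End ℂ (CS n) :=
  if h : i + 1 < n then Finsupp.lmapDomain ℂ ℂ (fun μ => μ * swapAt n i h) else 1

/-- The elementary decreasing sorting operator `πᵢ` on `ℂ𝔖ₙ`:
`μ ↦ μ` if `μᵢ > μᵢ₊₁` and `μ ↦ μ sᵢ` otherwise. -/
def piOp (n i : ℕ) : Module.End ℂ (CS n) :=
  if h : i + 1 < n then
    Finsupp.lmapDomain ℂ ℂ (fun μ : PermN n =>
      if μ ⟨i + 1, h⟩ < μ ⟨i, Nat.lt_of_succ_lt h⟩ then μ else μ * swapAt n i h)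
  else 1

/-- The operator `σ̄ᵢ` on `ℂ𝔖ₙ`: left multiplication by `sᵢ` (action on values),
`μ ↦ sᵢ μ`. -/
def sigmaBarOp (n i : ℕ) : Module.End ℂ (CS n) :=
  if h : i + 1 < n then Finsupp.lmapDomain ℂ ℂ (fun μ => swapAt n i h * μ) else 1

/-- The operator `σ_σ` of right multiplication by a permutation `σ`
(equal to the product of the `σᵢ` along any reduced word for `σ`). -/
def rightMulOp (n : ℕ) (σ : PermN n) : Module.End ℂ (CS n) :=
  Finsupp.lmapDomain ℂ ℂ (fun μ => μ * σ)

/-- The algebra `H𝔖ₙ`: the subalgebra of `End(ℂ𝔖ₙ)` generated by the operators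
`σ₁, …, σ_{n-1}, π₁, …, π_{n-1}`.

Note on conventions: the paper composes operators left to right, `v·(fg) = (v·f)·g`,
while multiplication in `Module.End` is `(f * g) v = f (g v)`.  Hence the paper's
product `f·g` is `g * f` here.  This does not affect the generated subalgebra. -/
def HS (n : ℕ) : Subalgebra ℂ (Module.End ℂ (CS n)) :=
  Algebra.adjoin ℂ
    ({f | ∃ i, ∃ _ : i + 1 < n, f = sigmaOp n i} ∪ {f | ∃ i, ∃ _ : i + 1 < n, f = piOp n i})

/-- The descent set `Des(μ) = {i : μᵢ > μᵢ₊₁}` (0-indexed positions). -/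
def Des (n : ℕ) (μ : PermN n) : Set ℕ :=
  {i | ∃ h : i + 1 < n, μ ⟨i + 1, h⟩ < μ ⟨i, Nat.lt_of_succ_lt h⟩}

/-- The module `P_D`: the vectors of `ℂ𝔖ₙ` that are left `i`-antisymmetric
for every `i ∉ D` (0-indexed, `i+1 < n`). -/
def PD (n : ℕ) (D : Set ℕ) : Submodule ℂ (CS n) :=
  ⨅ i : {i : ℕ // i + 1 < n ∧ i ∉ D}, LinearMap.ker (1 + sigmaBarOp n i.1)

/-- The Young subgroup `𝔖_⟨D⟩` generated by the `sᵢ` for `i ∉ D`. -/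
def Young (n : ℕ) (D : Set ℕ) : Subgroup (PermN n) :=
  Subgroup.closure {g | ∃ i, ∃ h : i + 1 < n, i ∉ D ∧ g = swapAt n i h}

/-- The vector `v_D = ∑_{ν ∈ 𝔖_⟨D⟩} (-1)^{ℓ(ν)} ν` (the sign `(-1)^{ℓ(ν)}` is the
signature of `ν`). -/
def vD (n : ℕ) (D : Set ℕ) : CS n :=
  ∑ᶠ ν ∈ (Young n D : Set (PermN n)),
    ((Equiv.Perm.sign ν : ℤ) : ℂ) • Finsupp.single ν 1

/-- The vector `v_σ := v_{Des(σ⁻¹)} · σ_σ`. -/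
def vPerm (n : ℕ) (σ : PermN n) : CS n :=
  rightMulOp n σ (vD n (Des n σ⁻¹))

-- Helper instances, to avoid very deep instance searches.
noncomputable instance (priority := 10000) pdACG (n : ℕ) (D : Set ℕ) :
    AddCommGroup ↥(PD n D) :=
  @Submodule.addCommGroup ℂ (CS n) _ _ _ (PD n D)

noncomputable instance (priority := 10000) pdHomACG (n : ℕ) (D E : Set ℕ) :
    AddCommGroup (↥(PD n D) →ₗ[ℂ] ↥(PD n E)) :=
  LinearMap.addCommGroup

/-- The space `Hom_{H𝔖ₙ}(P_D, P_E)` of `H𝔖ₙ`-module homomorphisms from `P_D` to `P_E`: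
`ℂ`-linear maps commuting with the action of every operator of `H𝔖ₙ`. -/
def HomPD (n : ℕ) (D E : Set ℕ) : Submodule ℂ (↥(PD n D) →ₗ[ℂ] ↥(PD n E)) where
  carrier := {φ | ∀ a : Module.End ℂ (CS n), a ∈ HS n →
    ∀ v w : ↥(PD n D), (w : CS n) = a (v : CS n) → (φ w : CS n) = a (φ v : CS n)}
  add_mem' := by
    intro φ ψ hφ hψ a ha v w hw
    simp only [LinearMap.add_apply, Submodule.coe_add, hφ a ha v w hw,
      hψ a ha v w hw, map_add]
  zero_mem' := by
    intro a ha v w hw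
    simp
  smul_mem' := by
    intro c φ hφ a ha v w hw
    simp only [LinearMap.smul_apply, Submodule.coe_smul, hφ a ha v w hw, map_smul]


namespace Cartan

variable {n : ℕ}

lemma swapAt_mul_self (n i : ℕ) (h : i + 1 < n) : swapAt n i h * swapAt n i h = 1 :=
  Equiv.swap_mul_self _ _

lemma swapAt_ne (n i : ℕ) (h : i+1 < n) : (⟨i, Nat.lt_of_succ_lt h⟩ : Fin n) ≠ ⟨i+1, h⟩ := by
  simp [Fin.ext_iff]

lemma sign_swapAt (n i : ℕ) (h : i+1<n) : Equiv.Perm.sign (swapAt n i h) = -1 :=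
  Equiv.Perm.sign_swap (swapAt_ne n i h)

lemma sigmaOp_apply (i : ℕ) (h : i+1<n) (x : CS n) (τ : PermN n) :
    sigmaOp n i x τ = x (τ * swapAt n i h) := by
  rw [sigmaOp, dif_pos h, Finsupp.lmapDomain_apply]
  have hinj : Function.Injective (fun μ : PermN n => μ * swapAt n i h) := by
    intro a b hab
    simpa [mul_assoc, swapAt_mul_self] using congrArg (· * swapAt n i h) hab
  have := Finsupp.mapDomain_apply hinj x (τ * swapAt n i h)
  simpa [mul_assoc, swapAt_mul_self] using this

lemma sigmaBarOp_apply (i : ℕ) (h : i+1<n) (x : CS n) (τ : PermN n) :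
    sigmaBarOp n i x τ = x (swapAt n i h * τ) := by
  rw [sigmaBarOp, dif_pos h, Finsupp.lmapDomain_apply]
  have hinj : Function.Injective (fun μ : PermN n => swapAt n i h * μ) := by
    intro a b hab
    simpa [← mul_assoc, swapAt_mul_self] using congrArg (swapAt n i h * ·) hab
  have := Finsupp.mapDomain_apply hinj x (swapAt n i h * τ)
  simpa [← mul_assoc, swapAt_mul_self] using this

lemma rightMulOp_apply (σ : PermN n) (x : CS n) (τ : PermN n) :
    rightMulOp n σ x τ = x (τ * σ⁻¹) := by
  rw [rightMulOp, Finsupp.lmapDomain_apply]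
  have hinj : Function.Injective (fun μ : PermN n => μ * σ) := by
    intro a b hab
    simpa [mul_assoc] using congrArg (· * σ⁻¹) hab
  have := Finsupp.mapDomain_apply hinj x (τ * σ⁻¹)
  simpa [mul_assoc] using this

/-- descent at i -/
def desc (i : ℕ) (h : i+1 < n) (μ : PermN n) : Prop :=
  μ ⟨i + 1, h⟩ < μ ⟨i, Nat.lt_of_succ_lt h⟩

lemma desc_mul_swap_iff (i : ℕ) (h : i+1<n) (τ : PermN n) :
    desc i h (τ * swapAt n i h) ↔ ¬ desc i h τ := by
  have e1 : (τ * swapAt n i h) ⟨i+1, h⟩ = τ ⟨i, Nat.lt_of_succ_lt h⟩ := by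
    rw [Equiv.Perm.mul_apply, swapAt, Equiv.swap_apply_right]
  have e2 : (τ * swapAt n i h) ⟨i, Nat.lt_of_succ_lt h⟩ = τ ⟨i+1, h⟩ := by
    rw [Equiv.Perm.mul_apply, swapAt, Equiv.swap_apply_left]
  rw [desc, desc, e1, e2]
  constructor
  · exact fun h1 h2 => absurd h1 (lt_asymm h2)
  · intro h1
    rcases lt_or_eq_of_le (not_lt.mp h1) with h2 | h2
    · exact h2
    · exact absurd (τ.injective h2) (by simp [Fin.ext_iff])

lemma piOp_sub_sigmaOp (i : ℕ) (h : i+1<n) (x : CS n) :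
    piOp n i x - sigmaOp n i x = x.filter (desc i h) - sigmaOp n i (x.filter (desc i h)) := by
  classical
  have hsplit := Finsupp.filter_pos_add_filter_neg x (desc i h)
  set xd := x.filter (desc i h) with hxd
  set xn := x.filter (fun a => ¬ desc i h a) with hxn
  have hpi : piOp n i x = xd + sigmaOp n i xn := by
    rw [piOp, dif_pos h, ← hsplit, map_add]
    congr 1
    · rw [Finsupp.lmapDomain_apply]
      rw [Finsupp.mapDomain_congr (g := id) ?_, Finsupp.mapDomain_id]
      intro a ha
      rw [Finsupp.support_filter, Finset.mem_filter] at ha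
      exact if_pos ha.2
    · rw [Finsupp.lmapDomain_apply, sigmaOp, dif_pos h, Finsupp.lmapDomain_apply]
      apply Finsupp.mapDomain_congr
      intro a ha
      rw [Finsupp.support_filter, Finset.mem_filter] at ha
      exact if_neg ha.2
  have hsig : sigmaOp n i x = sigmaOp n i xd + sigmaOp n i xn := by
    rw [← map_add, hsplit]
  rw [hpi, hsig]; abel

lemma piOp_eq_sigmaOp_of (i : ℕ) (h : i+1<n) (x : CS n)
    (hx : ∀ τ, desc i h τ → x τ = 0) : piOp n i x = sigmaOp n i x := by
  have hd : x.filter (desc i h) = 0 := by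
    ext τ
    rw [Finsupp.filter_apply]
    split_ifs with hτ
    · exact hx τ hτ
    · rfl
  have := piOp_sub_sigmaOp i h x
  rw [hd] at this
  simpa [sub_eq_zero] using this

lemma desc_coeff_zero_of_pi_eq_sigma (i : ℕ) (h : i+1<n) (x : CS n)
    (hps : piOp n i x = sigmaOp n i x) : ∀ τ, desc i h τ → x τ = 0 := by
  intro τ hτ
  have h0 : x.filter (desc i h) - sigmaOp n i (x.filter (desc i h)) = 0 := by
    rw [← piOp_sub_sigmaOp i h x, hps, sub_self]
  have := DFunLike.congr_fun h0 τ
  rw [Finsupp.sub_apply, Finsupp.zero_apply, sigmaOp_apply i h, Finsupp.filter_apply,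
    Finsupp.filter_apply, if_pos hτ, if_neg ((desc_mul_swap_iff i h τ).not.mpr (not_not.mpr hτ))] at this
  simpa using this

/-- number of elements of `D` below `k` -/
def bcount (D : Set ℕ) (k : ℕ) : ℕ := ((Finset.range k).filter (· ∈ D)).card

lemma bcount_mono (D : Set ℕ) : Monotone (bcount D) := by
  intro a b hab
  exact Finset.card_le_card (Finset.filter_subset_filter _ (Finset.range_subset_range.mpr hab))

lemma bcount_succ_not_mem {D : Set ℕ} {j : ℕ} (hj : j ∉ D) : bcount D (j+1) = bcount D j := by
  unfold bcount
  rw [Finset.range_add_one, Finset.filter_insert, if_neg hj]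

lemma bcount_succ_mem {D : Set ℕ} {j : ℕ} (hj : j ∈ D) : bcount D (j+1) = bcount D j + 1 := by
  unfold bcount
  rw [Finset.range_add_one, Finset.filter_insert, if_pos hj,
    Finset.card_insert_of_notMem (by simp)]

lemma young_bcount {D : Set ℕ} {ν : PermN n} (hν : ν ∈ Young n D) :
    ∀ k : Fin n, bcount D (ν k).val = bcount D k.val := by
  refine Subgroup.closure_induction ?_ ?_ ?_ ?_ hν
  · rintro g ⟨i, h, hiD, rfl⟩ k
    rcases eq_or_ne k ⟨i, Nat.lt_of_succ_lt h⟩ with rfl | h1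
    · rw [swapAt, Equiv.swap_apply_left]
      exact (bcount_succ_not_mem hiD).symm ▸ (bcount_succ_not_mem hiD)
    rcases eq_or_ne k ⟨i+1, h⟩ with rfl | h2
    · rw [swapAt, Equiv.swap_apply_right]
      exact (bcount_succ_not_mem hiD).symm
    · rw [swapAt, Equiv.swap_apply_of_ne_of_ne h1 h2]
  · intro k; rfl
  · intro a b _ _ ha hb k
    rw [Equiv.Perm.mul_apply, ha, hb]
  · intro a _ ha k
    have := ha (a⁻¹ k)
    rw [show a (a⁻¹ k) = k from a.apply_symm_apply k] at this
    exact this.symm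

lemma young_no_descent {D : Set ℕ} {ν : PermN n} (hν : ν ∈ Young n D)
    {i : ℕ} (h : i+1<n) (hiD : i ∈ D) : ¬ desc i h ν := by
  intro hlt
  have h1 := young_bcount hν ⟨i, Nat.lt_of_succ_lt h⟩
  have h2 := young_bcount hν ⟨i+1, h⟩
  have hle : bcount D (ν ⟨i+1, h⟩).val ≤ bcount D (ν ⟨i, Nat.lt_of_succ_lt h⟩).val :=
    bcount_mono D (le_of_lt hlt)
  rw [h1, h2] at hle
  simp only [bcount_succ_mem hiD] at hle
  omega

lemma eq_one_of_no_descent (μ : PermN n) (hnd : ∀ i (h : i+1<n), ¬ desc i h μ) : μ = 1 := by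
  have hadj : ∀ (a b : Fin n), (b : ℕ) = (a : ℕ) + 1 → μ a < μ b := by
    intro a b hab
    have h : (a : ℕ) + 1 < n := hab ▸ b.isLt
    have ha : a = ⟨(a:ℕ), Nat.lt_of_succ_lt h⟩ := by simp [Fin.ext_iff]
    have hb : b = ⟨(a:ℕ)+1, h⟩ := by simp [Fin.ext_iff, hab]
    have hne : μ a ≠ μ b := fun hc => by
      have := μ.injective hc
      rw [ha, hb] at this
      simp [Fin.ext_iff] at this
    have := hnd (a : ℕ) h
    rw [desc, ← ha, ← hb] at this
    exact lt_of_le_of_ne (not_lt.mp this) hne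
  have hstep : ∀ (k : ℕ) (a b : Fin n), (b : ℕ) = (a : ℕ) + k + 1 → μ a < μ b := by
    intro k
    induction k with
    | zero => intro a b hab; exact hadj a b hab
    | succ k ih =>
      intro a b hab
      have hc : (a : ℕ) + k + 1 < n := by have := b.isLt; omega
      exact lt_trans (ih a ⟨(a:ℕ)+k+1, hc⟩ rfl) (hadj _ b (by simp [hab]; omega))
  have hmono : StrictMono μ := by
    intro a b hab
    exact hstep ((b:ℕ) - (a:ℕ) - 1) a b (by have := Fin.lt_def.mp hab; omega)
  have hr : Set.range μ = Set.range (id : Fin n → Fin n) := by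
    rw [Set.range_id, Set.range_eq_univ]
    exact μ.surjective
  have hwf : WellFoundedLT (Fin n) := inferInstance
  have h2 := (@StrictMono.range_inj (Fin n) (Fin n) _ _ hwf _ _ hmono strictMono_id).mp hr
  exact Equiv.ext fun x => congrFun h2 x

def invSet (μ : PermN n) : Finset (Fin n × Fin n) :=
  Finset.univ.filter fun p => p.1 < p.2 ∧ μ p.2 < μ p.1

lemma swapAt_lt {i : ℕ} (h : i+1<n) {a b : Fin n}
    (hab : a < b) (hne : ¬(a = ⟨i, Nat.lt_of_succ_lt h⟩ ∧ b = ⟨i+1, h⟩)) :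
    swapAt n i h a < swapAt n i h b := by
  rcases a with ⟨av, hav⟩; rcases b with ⟨bv, hbv⟩
  simp only [swapAt, Equiv.swap_apply_def]
  split_ifs <;>
    simp_all [Fin.ext_iff, Fin.lt_def] <;> omega

lemma invCount_mul_swap_lt (μ : PermN n) (i : ℕ) (h : i+1<n) (hd : desc i h μ) :
    (invSet (μ * swapAt n i h)).card < (invSet μ).card := by
  set i0 : Fin n := ⟨i, Nat.lt_of_succ_lt h⟩
  set i1 : Fin n := ⟨i+1, h⟩
  set s := swapAt n i h with hs
  have hs0 : s i0 = i1 := Equiv.swap_apply_left _ _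
  have hs1 : s i1 = i0 := Equiv.swap_apply_right _ _
  have hinj : Function.Injective (fun p : Fin n × Fin n => (s p.1, s p.2)) := by
    intro p q hpq
    have h1 := congrArg Prod.fst hpq
    have h2 := congrArg Prod.snd hpq
    simp only at h1 h2
    exact Prod.ext (s.injective h1) (s.injective h2)
  have hmem : (i0, i1) ∈ invSet μ := by
    simp only [invSet, Finset.mem_filter, Finset.mem_univ, true_and]
    exact ⟨by simp [i0, i1, Fin.lt_def], hd⟩
  have hsub : (invSet (μ * s)).image (fun p => (s p.1, s p.2)) ⊆ (invSet μ).erase (i0, i1) := by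
    intro p hp
    rw [Finset.mem_image] at hp
    obtain ⟨⟨a, b⟩, hab, rfl⟩ := hp
    simp only [invSet, Finset.mem_filter, Finset.mem_univ, true_and] at hab
    simp only [Equiv.Perm.mul_apply] at hab
    obtain ⟨hlt, hval⟩ := hab
    have hnab : ¬(a = i0 ∧ b = i1) := by
      rintro ⟨rfl, rfl⟩
      rw [hs0, hs1] at hval
      exact absurd hd (lt_asymm hval)
    refine Finset.mem_erase.mpr ⟨?_, ?_⟩
    · intro hc
      have hss : ∀ x : Fin n, s (s x) = x := fun x => by
        have := swapAt_mul_self n i h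
        have h2 := congrArg (fun (g : PermN n) => g x) this
        simpa [Equiv.Perm.mul_apply] using h2
      have h1 : a = s i0 := by
        have h3 := congrArg Prod.fst hc; simp only at h3
        rw [← h3, hss]
      have h2 : b = s i1 := by
        have h3 := congrArg Prod.snd hc; simp only at h3
        rw [← h3, hss]
      rw [hs0] at h1; rw [hs1] at h2
      subst h1; subst h2
      exact absurd hlt (by simp [i0, i1, Fin.lt_def])
    · simp only [invSet, Finset.mem_filter, Finset.mem_univ, true_and]
      exact ⟨swapAt_lt h hlt hnab, hval⟩
  calc (invSet (μ * s)).card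
      = ((invSet (μ * s)).image (fun p => (s p.1, s p.2))).card :=
        (Finset.card_image_of_injective _ hinj).symm
    _ ≤ ((invSet μ).erase (i0, i1)).card := Finset.card_le_card hsub
    _ < (invSet μ).card := Finset.card_erase_lt_of_mem hmem

lemma exists_descent (μ : PermN n) (hμ : μ ≠ 1) :
    ∃ i, ∃ h : i+1<n, desc i h μ := by
  by_contra hno
  push_neg at hno
  exact hμ (eq_one_of_no_descent μ hno)

lemma mem_young_of_no_descents (D : Set ℕ) (μ : PermN n)
    (hP : ∀ ν ∈ Young n D, ∀ i, ∀ h : i+1<n, i ∈ D → ¬ desc i h (μ * ν)) :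
    μ ∈ Young n D := by
  suffices H : ∀ m (μ : PermN n), (invSet μ).card ≤ m →
      (∀ ν ∈ Young n D, ∀ i, ∀ h : i+1<n, i ∈ D → ¬ desc i h (μ * ν)) →
      μ ∈ Young n D from H _ μ le_rfl hP
  intro m
  induction m with
  | zero =>
    intro μ hc hP
    rcases eq_or_ne μ 1 with rfl | hμ
    · exact one_mem _
    obtain ⟨j, hj, hd⟩ := exists_descent μ hμ
    have : (⟨j, Nat.lt_of_succ_lt hj⟩, (⟨j+1, hj⟩ : Fin n)) ∈ invSet μ := by
      simp only [invSet, Finset.mem_filter, Finset.mem_univ, true_and]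
      exact ⟨by simp [Fin.lt_def], hd⟩
    have := Finset.card_pos.mpr ⟨_, this⟩
    omega
  | succ m ih =>
    intro μ hc hP
    rcases eq_or_ne μ 1 with rfl | hμ
    · exact one_mem _
    obtain ⟨j, hj, hd⟩ := exists_descent μ hμ
    have hjD : j ∉ D := by
      intro hjD
      exact hP 1 (one_mem _) j hj hjD (by rwa [mul_one])
    have hsY : swapAt n j hj ∈ Young n D :=
      Subgroup.subset_closure ⟨j, hj, hjD, rfl⟩
    have hcard : (invSet (μ * swapAt n j hj)).card ≤ m := by
      have := invCount_mul_swap_lt μ j hj hd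
      omega
    have hP' : ∀ ν ∈ Young n D, ∀ i, ∀ h : i+1<n, i ∈ D →
        ¬ desc i h (μ * swapAt n j hj * ν) := by
      intro ν hν i h hiD
      rw [mul_assoc]
      exact hP _ (mul_mem hsY hν) i h hiD
    have hμ' := ih (μ * swapAt n j hj) hcard hP'
    have : μ = μ * swapAt n j hj * swapAt n j hj := by
      rw [mul_assoc, swapAt_mul_self, mul_one]
    rw [this]
    exact mul_mem hμ' hsY

lemma vD_apply (D : Set ℕ) (τ : PermN n) :
    vD n D τ = if τ ∈ Young n D then ((Equiv.Perm.sign τ : ℤ) : ℂ) else 0 := by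
  rw [vD, finsum_mem_eq_finite_toFinset_sum _ (Set.toFinite _)]
  rw [Finset.sum_apply']
  have : ∀ ν ∈ (Set.toFinite (Young n D : Set (PermN n))).toFinset,
      (((Equiv.Perm.sign ν : ℤ) : ℂ) • Finsupp.single ν (1:ℂ)) τ
      = if ν = τ then ((Equiv.Perm.sign ν : ℤ) : ℂ) else 0 := by
    intro ν _
    rw [Finsupp.smul_apply, Finsupp.single_apply, smul_eq_mul]
    split_ifs <;> simp
  rw [Finset.sum_congr rfl this, Finset.sum_ite_eq']
  simp only [Set.Finite.mem_toFinset]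
  exact if_congr Iff.rfl rfl rfl

lemma vD_one (D : Set ℕ) : vD n D 1 = 1 := by
  rw [vD_apply, if_pos (one_mem _)]
  simp

lemma sign_cast_mul_self (ν : PermN n) :
    ((Equiv.Perm.sign ν : ℤ) : ℂ) * ((Equiv.Perm.sign ν : ℤ) : ℂ) = 1 := by
  rcases Int.units_eq_one_or (Equiv.Perm.sign ν) with h | h <;> rw [h] <;> norm_num

lemma sign_cast_ne_zero (ν : PermN n) : ((Equiv.Perm.sign ν : ℤ) : ℂ) ≠ 0 := by
  rcases Int.units_eq_one_or (Equiv.Perm.sign ν) with h | h <;> rw [h] <;> norm_num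

lemma vD_add_sigma_vD (D : Set ℕ) (i : ℕ) (h : i+1<n) (hiD : i ∉ D) :
    vD n D + sigmaOp n i (vD n D) = 0 := by
  have hsY : swapAt n i h ∈ Young n D := Subgroup.subset_closure ⟨i, h, hiD, rfl⟩
  ext τ
  rw [Finsupp.add_apply, sigmaOp_apply i h, Finsupp.zero_apply, vD_apply, vD_apply]
  by_cases hτ : τ ∈ Young n D
  · rw [if_pos hτ, if_pos (mul_mem hτ hsY)]
    rw [map_mul, sign_swapAt]
    push_cast
    ring
  · rw [if_neg hτ, if_neg ?_]
    · ring
    · intro hc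
      apply hτ
      have := mul_mem hc hsY
      rwa [mul_assoc, swapAt_mul_self, mul_one] at this

lemma vD_add_sigmaBar_vD (D : Set ℕ) (i : ℕ) (h : i+1<n) (hiD : i ∉ D) :
    vD n D + sigmaBarOp n i (vD n D) = 0 := by
  have hsY : swapAt n i h ∈ Young n D := Subgroup.subset_closure ⟨i, h, hiD, rfl⟩
  ext τ
  rw [Finsupp.add_apply, sigmaBarOp_apply i h, Finsupp.zero_apply, vD_apply, vD_apply]
  by_cases hτ : τ ∈ Young n D
  · rw [if_pos hτ, if_pos (mul_mem hsY hτ)]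
    rw [map_mul, sign_swapAt]
    push_cast
    ring
  · rw [if_neg hτ, if_neg ?_]
    · ring
    · intro hc
      apply hτ
      have := mul_mem hsY hc
      rwa [← mul_assoc, swapAt_mul_self, one_mul] at this

lemma vD_mem_PD (D : Set ℕ) : vD n D ∈ PD n D := by
  rw [PD, Submodule.mem_iInf]
  rintro ⟨i, h, hiD⟩
  rw [LinearMap.mem_ker, LinearMap.add_apply, Module.End.one_apply]
  exact vD_add_sigmaBar_vD D i h hiD

lemma mem_PD_left_antisym {D : Set ℕ} {w : CS n} (hw : w ∈ PD n D) :
    ∀ ν ∈ Young n D, ∀ τ, w (ν * τ) = ((Equiv.Perm.sign ν : ℤ) : ℂ) * w τ := by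
  intro ν hν
  refine Subgroup.closure_induction ?_ ?_ ?_ ?_ hν
  · rintro g ⟨i, h, hiD, rfl⟩ τ
    rw [PD, Submodule.mem_iInf] at hw
    have := hw ⟨i, h, hiD⟩
    rw [LinearMap.mem_ker, LinearMap.add_apply, Module.End.one_apply] at this
    have h2 := DFunLike.congr_fun this τ
    rw [Finsupp.add_apply, sigmaBarOp_apply i h, Finsupp.zero_apply] at h2
    rw [sign_swapAt]
    push_cast
    linear_combination h2
  · intro τ; simp
  · intro a b _ _ ha hb τ
    rw [mul_assoc, ha, hb, map_mul]
    push_cast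
    ring
  · intro a _ ha τ
    have h1 := ha (a⁻¹ * τ)
    rw [← mul_assoc, mul_inv_cancel, one_mul] at h1
    have h2 : ((Equiv.Perm.sign a⁻¹ : ℤ) : ℂ) = ((Equiv.Perm.sign a : ℤ) : ℂ) := by
      rw [Equiv.Perm.sign_inv]
    rw [h2, h1]
    rw [← mul_assoc, sign_cast_mul_self, one_mul]

lemma right_antisym {D : Set ℕ} {x : CS n}
    (h1 : ∀ i (h : i+1<n), i ∉ D → ∀ τ, x (τ * swapAt n i h) = - x τ) :
    ∀ ν ∈ Young n D, ∀ τ, x (τ * ν) = ((Equiv.Perm.sign ν : ℤ) : ℂ) * x τ := by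
  intro ν hν
  refine Subgroup.closure_induction ?_ ?_ ?_ ?_ hν
  · rintro g ⟨i, h, hiD, rfl⟩ τ
    rw [h1 i h hiD τ, sign_swapAt]
    push_cast
    ring
  · intro τ; simp
  · intro a b _ _ ha hb τ
    rw [← mul_assoc, hb, ha, map_mul]
    push_cast
    ring
  · intro a _ ha τ
    have hx := ha (τ * a⁻¹)
    rw [mul_assoc, inv_mul_cancel, mul_one] at hx
    have h2 : ((Equiv.Perm.sign a⁻¹ : ℤ) : ℂ) = ((Equiv.Perm.sign a : ℤ) : ℂ) := by
      rw [Equiv.Perm.sign_inv]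
    rw [h2, hx, ← mul_assoc, sign_cast_mul_self, one_mul]

lemma eq_smul_vD {D : Set ℕ} (x : CS n)
    (h1 : ∀ i (h : i+1<n), i ∉ D → ∀ τ, x (τ * swapAt n i h) = - x τ)
    (h2 : ∀ i (h : i+1<n), i ∈ D → ∀ τ, desc i h τ → x τ = 0) :
    x = x 1 • vD n D := by
  have hra := right_antisym h1
  ext τ
  rw [Finsupp.smul_apply, vD_apply, smul_eq_mul]
  by_cases hτ : τ ∈ Young n D
  · rw [if_pos hτ]
    have := hra τ hτ 1
    rw [one_mul] at this
    rw [this, mul_comm]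
  · rw [if_neg hτ, mul_zero]
    by_contra hxτ
    apply hτ
    apply mem_young_of_no_descents
    intro ν hν i h hiD hdesc
    have hval := hra ν hν τ
    have hne : x (τ * ν) ≠ 0 := by
      rw [hval]
      exact mul_ne_zero (sign_cast_ne_zero ν) hxτ
    exact hne (h2 i h hiD (τ * ν) hdesc)

lemma sigmaOp_mem (i : ℕ) (h : i+1<n) : sigmaOp n i ∈ HS n :=
  Algebra.subset_adjoin (Or.inl ⟨i, h, rfl⟩)

lemma piOp_mem (i : ℕ) (h : i+1<n) : piOp n i ∈ HS n :=
  Algebra.subset_adjoin (Or.inr ⟨i, h, rfl⟩)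

lemma rightMulOp_one : rightMulOp n (1 : PermN n) = 1 := by
  refine LinearMap.ext fun x => Finsupp.ext fun τ => ?_
  rw [rightMulOp_apply, Module.End.one_apply]
  simp

lemma rightMulOp_mul (g h : PermN n) :
    rightMulOp n (g * h) = rightMulOp n h * rightMulOp n g := by
  refine LinearMap.ext fun x => Finsupp.ext fun τ => ?_
  rw [rightMulOp_apply, Module.End.mul_apply, rightMulOp_apply, rightMulOp_apply]
  rw [mul_inv_rev, mul_assoc]

lemma rightMulOp_swapAt (i : ℕ) (h : i+1<n) :
    rightMulOp n (swapAt n i h) = sigmaOp n i := by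
  rw [sigmaOp, dif_pos h]; rfl

lemma swapAt_inv (n i : ℕ) (h : i+1<n) : (swapAt n i h)⁻¹ = swapAt n i h :=
  Equiv.swap_inv _ _

lemma rightMulOp_mem (σ : PermN n) : rightMulOp n σ ∈ HS n := by
  have hσ : σ ∈ Young n (∅ : Set ℕ) := by
    apply mem_young_of_no_descents
    intro ν hν i h hiD
    exact absurd hiD (Set.notMem_empty i)
  have H := Subgroup.closure_induction
    (p := fun g _ => rightMulOp n g ∈ HS n ∧ rightMulOp n g⁻¹ ∈ HS n)
    ?_ ?_ ?_ ?_ hσ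
  · exact H.1
  · rintro g ⟨i, h, _, rfl⟩
    constructor
    · rw [rightMulOp_swapAt i h]
      exact sigmaOp_mem i h
    · rw [swapAt_inv n i h, rightMulOp_swapAt i h]
      exact sigmaOp_mem i h
  · constructor
    · rw [rightMulOp_one]; exact one_mem _
    · rw [inv_one, rightMulOp_one]; exact one_mem _
  · intro a b _ _ ha hb
    constructor
    · rw [rightMulOp_mul]
      exact mul_mem hb.1 ha.1
    · rw [mul_inv_rev, rightMulOp_mul]
      exact mul_mem ha.2 hb.2
  · intro a _ ha
    exact ⟨ha.2, by rw [inv_inv]; exact ha.1⟩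

lemma exists_HS_map {D : Set ℕ} {w : CS n} (hw : w ∈ PD n D) :
    ∃ a ∈ HS n, a (vD n D) = w := by
  classical
  set T : Finset (PermN n) := (Set.toFinite (Young n D : Set (PermN n))).toFinset with hT
  have hTmem : ∀ ν, ν ∈ T ↔ ν ∈ Young n D := by
    intro ν
    rw [hT, Set.Finite.mem_toFinset]
    exact Iff.rfl
  have hTpos : 0 < T.card := Finset.card_pos.mpr ⟨1, (hTmem 1).mpr (one_mem _)⟩
  have hcard_ne : ((T.card : ℂ)) ≠ 0 := by
    simp only [ne_eq, Nat.cast_eq_zero]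
    omega
  refine ⟨((T.card : ℂ))⁻¹ • ∑ τ ∈ w.support, w τ • rightMulOp n τ, ?_, ?_⟩
  · apply Subalgebra.smul_mem
    apply Subalgebra.sum_mem
    intro τ _
    exact Subalgebra.smul_mem _ (rightMulOp_mem τ) _
  · ext μ
    rw [LinearMap.smul_apply, LinearMap.sum_apply, Finsupp.smul_apply]
    have hterm : ∀ τ, ((w τ • rightMulOp n τ) (vD n D)) μ = w τ * vD n D (μ * τ⁻¹) := by
      intro τ
      rw [LinearMap.smul_apply, Finsupp.smul_apply, rightMulOp_apply, smul_eq_mul]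
    rw [Finset.sum_apply', Finset.sum_congr rfl fun τ _ => hterm τ]
    set F : PermN n → ℂ := fun τ => w τ * vD n D (μ * τ⁻¹) with hF
    set G : Finset (PermN n) := T.image (fun ν => ν⁻¹ * μ) with hG
    have hv1 : ∀ τ ∈ w.support ∪ G, τ ∉ w.support → F τ = 0 := by
      intro τ _ hτ
      rw [hF]
      simp only
      rw [Finsupp.notMem_support_iff.mp hτ, zero_mul]
    have hv2 : ∀ τ ∈ w.support ∪ G, τ ∉ G → F τ = 0 := by
      intro τ _ hτ
      rw [hF]
      simp only
      rw [vD_apply, if_neg, mul_zero]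
      intro hc
      apply hτ
      rw [hG, Finset.mem_image]
      refine ⟨μ * τ⁻¹, (hTmem _).mpr hc, ?_⟩
      group
    have e1 : ∑ τ ∈ w.support, F τ = ∑ τ ∈ w.support ∪ G, F τ :=
      Finset.sum_subset Finset.subset_union_left hv1
    have e2 : ∑ τ ∈ G, F τ = ∑ τ ∈ w.support ∪ G, F τ :=
      Finset.sum_subset Finset.subset_union_right hv2
    have e3 : ∑ τ ∈ G, F τ = ∑ ν ∈ T, F (ν⁻¹ * μ) := by
      rw [hG]
      apply Finset.sum_image
      intro ν _ ν' _ hh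
      have := congrArg (fun z => μ * z⁻¹) hh
      simpa [mul_inv_rev, mul_assoc] using this
    have e4 : ∀ ν ∈ T, F (ν⁻¹ * μ) = w μ := by
      intro ν hν
      have hνY : ν ∈ Young n D := (hTmem ν).mp hν
      rw [hF]
      simp only
      have hg : μ * (ν⁻¹ * μ)⁻¹ = ν := by group
      rw [hg, vD_apply, if_pos hνY]
      have hw2 := mem_PD_left_antisym hw ν⁻¹ (inv_mem hνY) μ
      rw [hw2, Equiv.Perm.sign_inv]
      rw [mul_comm ((Equiv.Perm.sign ν : ℤ) : ℂ) (w μ), mul_assoc, sign_cast_mul_self, mul_one]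
    have e5 : ∑ ν ∈ T, F (ν⁻¹ * μ) = (T.card : ℂ) * w μ := by
      rw [Finset.sum_congr rfl e4, Finset.sum_const, nsmul_eq_mul]
    rw [e1, ← e2, e3, e5, smul_eq_mul, ← mul_assoc, inv_mul_cancel₀ hcard_ne, one_mul]

lemma vD_not_mem {D E : Set ℕ} {i : ℕ} (h : i+1<n) (hiD : i ∈ D) (hiE : i ∉ E) :
    vD n D ∉ PD n E := by
  intro hmem
  rw [PD, Submodule.mem_iInf] at hmem
  have h1 := hmem ⟨i, h, hiE⟩
  rw [LinearMap.mem_ker, LinearMap.add_apply, Module.End.one_apply] at h1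
  have h2 := DFunLike.congr_fun h1 (swapAt n i h)
  rw [Finsupp.add_apply, sigmaBarOp_apply i h, Finsupp.zero_apply, swapAt_mul_self] at h2
  have hs_not : swapAt n i h ∉ Young n D := by
    intro hc
    apply young_no_descent hc h hiD
    show (swapAt n i h) ⟨i+1, h⟩ < (swapAt n i h) ⟨i, Nat.lt_of_succ_lt h⟩
    rw [swapAt, Equiv.swap_apply_right, Equiv.swap_apply_left]
    simp [Fin.lt_def]
  rw [vD_one, vD_apply, if_neg hs_not] at h2
  norm_num at h2

lemma mem_HomPD_iff {D E : Set ℕ} (φ : ↥(PD n D) →ₗ[ℂ] ↥(PD n E)) :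
    φ ∈ HomPD n D E ↔ ∀ a : Module.End ℂ (CS n), a ∈ HS n →
      ∀ v w : ↥(PD n D), (w : CS n) = a (v : CS n) →
        ((φ w : ↥(PD n E)) : CS n) = a ((φ v : ↥(PD n E)) : CS n) :=
  Iff.rfl

lemma phi_spec {D E : Set ℕ} (hD : ∀ i ∈ D, i + 1 < n)
    (φ : ↥(PD n D) →ₗ[ℂ] ↥(PD n E)) (hφ : φ ∈ HomPD n D E) :
    ∃ c : ℂ, (((φ ⟨vD n D, vD_mem_PD D⟩) : ↥(PD n E)) : CS n) = c • vD n D ∧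
      ∀ w : ↥(PD n D), ((φ w : ↥(PD n E)) : CS n) = c • (w : CS n) := by
  have hmem := (mem_HomPD_iff φ).mp hφ
  set vd : ↥(PD n D) := ⟨vD n D, vD_mem_PD D⟩ with hvd
  set x₀ : CS n := ((φ vd : ↥(PD n E)) : CS n) with hx₀
  have hzero : ∀ a : Module.End ℂ (CS n), a ∈ HS n → a (vD n D) = 0 → a x₀ = 0 := by
    intro a ha hav
    have h0 : ((0 : ↥(PD n D)) : CS n) = a ((vd : ↥(PD n D)) : CS n) := by
      rw [ZeroMemClass.coe_zero]
      exact hav.symm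
    have := hmem a ha vd 0 h0
    rw [map_zero φ] at this
    rw [← this, ZeroMemClass.coe_zero]
  have h1 : ∀ i (h : i+1<n), i ∉ D → ∀ τ, x₀ (τ * swapAt n i h) = - x₀ τ := by
    intro i h hiD τ
    have ha : (1 + sigmaOp n i) ∈ HS n := add_mem (one_mem _) (sigmaOp_mem i h)
    have hrel : (1 + sigmaOp n i) (vD n D) = 0 := by
      rw [LinearMap.add_apply, Module.End.one_apply]
      exact vD_add_sigma_vD D i h hiD
    have hz := hzero _ ha hrel
    rw [LinearMap.add_apply, Module.End.one_apply] at hz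
    have h2 := DFunLike.congr_fun hz τ
    rw [Finsupp.add_apply, sigmaOp_apply i h, Finsupp.zero_apply] at h2
    linear_combination h2
  have h2 : ∀ i (h : i+1<n), i ∈ D → ∀ τ, desc i h τ → x₀ τ = 0 := by
    intro i h hiD
    have ha : (piOp n i - sigmaOp n i) ∈ HS n := by
      have hs1 : ((-1 : ℂ) • sigmaOp n i) ∈ HS n :=
        Subalgebra.smul_mem _ (sigmaOp_mem i h) _
      have hs2 := add_mem (piOp_mem i h) hs1
      have heq : piOp n i - sigmaOp n i = piOp n i + (-1 : ℂ) • sigmaOp n i := by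
        module
      rwa [heq]
    have hrel : (piOp n i - sigmaOp n i) (vD n D) = 0 := by
      rw [LinearMap.sub_apply, sub_eq_zero]
      refine piOp_eq_sigmaOp_of i h _ (fun τ hτ => ?_)
      rw [vD_apply, if_neg (fun hc => young_no_descent hc h hiD hτ)]
    have h0 := hzero _ ha hrel
    rw [LinearMap.sub_apply, sub_eq_zero] at h0
    exact desc_coeff_zero_of_pi_eq_sigma i h x₀ h0
  have hx := eq_smul_vD x₀ h1 h2
  refine ⟨x₀ 1, hx, ?_⟩
  intro w
  obtain ⟨a, haHS, hav⟩ := exists_HS_map w.2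
  have hcond : ((w : ↥(PD n D)) : CS n) = a ((vd : ↥(PD n D)) : CS n) := hav.symm
  have hfw := hmem a haHS vd w hcond
  calc ((φ w : ↥(PD n E)) : CS n) = a x₀ := by rw [hfw, ← hx₀]
    _ = x₀ 1 • (a (vD n D)) := by rw [← map_smul, ← hx]
    _ = x₀ 1 • (w : CS n) := by rw [hav]

end Cartan


/-- `dim Hom_{H𝔖ₙ}(P_D, P_E)` is `1` if `D ⊆ E` and `0` otherwise:
the Cartan matrix of `H𝔖ₙ` is the incidence matrix of the boolean lattice. -/
theorem cartan_matrix (n : ℕ) (hn : 1 ≤ n) (D E : Set ℕ)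
    (hD : ∀ i ∈ D, i + 1 < n) (hE : ∀ i ∈ E, i + 1 < n) :
    Module.finrank ℂ ↥(HomPD n D E) = if D ⊆ E then 1 else 0 := by
  classical
  by_cases hDE : D ⊆ E
  · rw [if_pos hDE]
    have hle : PD n D ≤ PD n E := by
      rw [PD, PD]
      refine le_iInf fun j => ?_
      exact iInf_le_of_le ⟨j.1, j.2.1, fun hmem => j.2.2 (hDE hmem)⟩ le_rfl
    set incl : ↥(PD n D) →ₗ[ℂ] ↥(PD n E) := Submodule.inclusion hle with hincl
    have hcoe : ∀ w : ↥(PD n D), ((incl w : ↥(PD n E)) : CS n) = (w : CS n) := fun w => rfl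
    have hinclmem : incl ∈ HomPD n D E := by
      rw [Cartan.mem_HomPD_iff]
      intro a ha v w hw
      rw [hcoe, hcoe]
      exact hw
    have hspan : HomPD n D E = Submodule.span ℂ {incl} := by
      apply le_antisymm
      · intro φ hφ
        obtain ⟨c, _, hc⟩ := Cartan.phi_spec hD φ hφ
        rw [Submodule.mem_span_singleton]
        refine ⟨c, ?_⟩
        apply LinearMap.ext
        intro w
        apply Subtype.ext
        rw [hc w, LinearMap.smul_apply, SetLike.val_smul, hcoe]
      · rw [Submodule.span_le, Set.singleton_subset_iff]
        exact hinclmem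
    rw [hspan]
    apply finrank_span_singleton
    intro h0
    have h1 := congrArg
      (fun ψ : ↥(PD n D) →ₗ[ℂ] ↥(PD n E) =>
        ((ψ ⟨vD n D, Cartan.vD_mem_PD D⟩ : ↥(PD n E)) : CS n)) h0
    simp only [LinearMap.zero_apply, ZeroMemClass.coe_zero, hcoe] at h1
    have h2 := DFunLike.congr_fun h1 (1 : PermN n)
    rw [Cartan.vD_one, Finsupp.zero_apply] at h2
    norm_num at h2
  · rw [if_neg hDE]
    obtain ⟨i, hiD, hiE⟩ := Set.not_subset.mp hDE
    have hbot : HomPD n D E = ⊥ := by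
      rw [eq_bot_iff]
      intro φ hφ
      obtain ⟨c, hc0, hc⟩ := Cartan.phi_spec hD φ hφ
      have hcz : c = 0 := by
        by_contra hne
        apply Cartan.vD_not_mem (hD i hiD) hiD hiE
        have heq : vD n D = c⁻¹ •
            (((φ ⟨vD n D, Cartan.vD_mem_PD D⟩ : ↥(PD n E))) : CS n) := by
          rw [hc0, smul_smul, inv_mul_cancel₀ hne, one_smul]
        rw [heq]
        exact Submodule.smul_mem _ _ (φ _).2
      rw [Submodule.mem_bot]
      apply LinearMap.ext
      intro w
      apply Subtype.ext
      rw [hc w, hcz, zero_smul, LinearMap.zero_apply, ZeroMemClass.coe_zero]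
    rw [hbot]
    exact finrank_bot ℂ _


end
end

section
/- The algebra homomorphism from ℂ[NDF_n] to End(⊕_{k=1}^{n} Λ^k ℂ^n) induced by the diagonal action of NDF_n on the exterior powers Λ^1 ℂ^n, …, Λ^n ℂ^n is injective; that is, the representation of ℂ[NDF_n] on ⊕_{k=1}^{n} Λ^k ℂ^n is faithful. -/
open scoped Classical

set_option maxHeartbeats 1000000
set_option synthInstance.maxHeartbeats 400000

noncomputable section

/-- The `k`-th exterior power `Λ^k ℂ^n`, with basis `{e_S}` indexed by the `k`-element
subsets `S` of `{1, …, n}` (modeled as `Fin n`). -/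
abbrev ExtP (n k : ℕ) := {S : Finset (Fin n) // S.card = k} →₀ ℂ

/-- The image of the basis vector `e_S` under a map `g`: `e_{g(S)}` if `|g(S)| = |S|`,
and `0` otherwise. -/
def extImg (n k : ℕ) (g : Fin n → Fin n) (S : {S : Finset (Fin n) // S.card = k}) :
    ExtP n k :=
  if h : (S.1.image g).card = k then Finsupp.single ⟨S.1.image g, h⟩ 1 else 0

/-- The operator on `Λ^k ℂ^n` induced by a map `g : {1,…,n} → {1,…,n}`:
`e_S ↦ e_{g(S)}` if `|g(S)| = |S|` and `e_S ↦ 0` otherwise. -/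
def actOp (n k : ℕ) (g : Fin n → Fin n) : Module.End ℂ (ExtP n k) :=
  Finsupp.lsum ℂ fun S => LinearMap.toSpanSingleton ℂ (ExtP n k) (extImg n k g S)

lemma actOp_single (n k : ℕ) (g : Fin n → Fin n) (S : {S : Finset (Fin n) // S.card = k}) :
    actOp n k g (Finsupp.single S 1) = extImg n k g S := by
  simp [actOp, LinearMap.toSpanSingleton_apply]

lemma actOp_id (n k : ℕ) : actOp n k id = 1 := by
  apply Finsupp.lhom_ext
  intro S c
  have : (Finsupp.single S c : ExtP n k) = c • Finsupp.single S 1 := by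
    rw [Finsupp.smul_single, smul_eq_mul, mul_one]
  rw [this, map_smul, map_smul, actOp_single]
  simp [extImg, S.2]

lemma actOp_comp (n k : ℕ) (f g : Fin n → Fin n) :
    actOp n k (f ∘ g) = actOp n k f * actOp n k g := by
  apply Finsupp.lhom_ext
  intro S c
  have hc : (Finsupp.single S c : ExtP n k) = c • Finsupp.single S 1 := by
    rw [Finsupp.smul_single, smul_eq_mul, mul_one]
  rw [hc, map_smul, map_smul]
  congr 1
  rw [Module.End.mul_apply, actOp_single, actOp_single]
  by_cases h1 : (S.1.image g).card = k
  · rw [show extImg n k g S = Finsupp.single (⟨S.1.image g, h1⟩ :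
        {S : Finset (Fin n) // S.card = k}) 1 from dif_pos h1, actOp_single]
    unfold extImg
    simp only [Finset.image_image]
  · rw [show extImg n k g S = 0 from dif_neg h1, map_zero]
    unfold extImg
    rw [dif_neg]
    intro hcomp
    apply h1
    have h2 := Finset.card_image_le (s := S.1.image g) (f := f)
    have h3 := Finset.card_image_le (s := S.1) (f := g)
    rw [Finset.image_image] at h2
    rw [hcomp] at *
    omega

/-- The monoid `NDFₙ` of non-decreasing functions from `{1, …, n}` to itself, under
composition.  (Left modules over its monoid algebra, with this composition
convention, are exactly the right `ℂ[NDFₙ]`-modules in the paper's left-to-right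
convention.) -/
def NDF (n : ℕ) : Type := {f : Fin n → Fin n // Monotone f}

instance (n : ℕ) : Monoid (NDF n) where
  mul f g := ⟨f.1 ∘ g.1, f.2.comp g.2⟩
  one := ⟨id, monotone_id⟩
  mul_assoc _ _ _ := Subtype.ext rfl
  one_mul _ := Subtype.ext rfl
  mul_one _ := Subtype.ext rfl

/-- The action of `NDFₙ` on the exterior power `Λ^k ℂ^n`, as a monoid morphism into
`End(Λ^k ℂ^n)`. -/
def TN (n k : ℕ) : NDF n →* Module.End ℂ (ExtP n k) where
  toFun f := actOp n k f.1
  map_one' := actOp_id n k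
  map_mul' f g := actOp_comp n k f.1 g.1

noncomputable instance endApplyExt (n k : ℕ) :
    Module (Module.End ℂ (ExtP n k)) (ExtP n k) :=
  Module.End.applyModule

/-- `Λ^k ℂ^n` as a module over the monoid algebra `ℂ[NDFₙ]`. -/
noncomputable instance extModule (n k : ℕ) :
    Module (MonoidAlgebra ℂ (NDF n)) (ExtP n k) :=
  Module.compHom _
    (MonoidAlgebra.lift ℂ (Module.End ℂ (ExtP n k)) (NDF n) (TN n k)).toRingHom

/-- The direct sum `⊕_{k=1}^{n} Λ^k ℂ^n`, with basis indexed by the nonempty subsets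
of `{1, …, n}`. -/
abbrev WSp (n : ℕ) := {S : Finset (Fin n) // S.Nonempty} →₀ ℂ

/-- The image of the basis vector `e_S` under a map `g` in `⊕_k Λ^k ℂ^n`. -/
def extImgW (n : ℕ) (g : Fin n → Fin n) (S : {S : Finset (Fin n) // S.Nonempty}) :
    WSp n :=
  if (S.1.image g).card = S.1.card then Finsupp.single ⟨S.1.image g, S.2.image g⟩ 1 else 0

/-- The operator on `⊕_{k=1}^n Λ^k ℂ^n` induced by a map `g`. -/
def actOpW (n : ℕ) (g : Fin n → Fin n) : Module.End ℂ (WSp n) :=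
  Finsupp.lsum ℂ fun S => LinearMap.toSpanSingleton ℂ (WSp n) (extImgW n g S)

lemma actOpW_single (n : ℕ) (g : Fin n → Fin n) (S : {S : Finset (Fin n) // S.Nonempty}) :
    actOpW n g (Finsupp.single S 1) = extImgW n g S := by
  simp [actOpW, LinearMap.toSpanSingleton_apply]

lemma actOpW_id (n : ℕ) : actOpW n id = 1 := by
  apply Finsupp.lhom_ext
  intro S c
  have : (Finsupp.single S c : WSp n) = c • Finsupp.single S 1 := by
    rw [Finsupp.smul_single, smul_eq_mul, mul_one]
  rw [this, map_smul, map_smul, actOpW_single]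
  simp [extImgW]

lemma actOpW_comp (n : ℕ) (f g : Fin n → Fin n) :
    actOpW n (f ∘ g) = actOpW n f * actOpW n g := by
  apply Finsupp.lhom_ext
  intro S c
  have hc : (Finsupp.single S c : WSp n) = c • Finsupp.single S 1 := by
    rw [Finsupp.smul_single, smul_eq_mul, mul_one]
  rw [hc, map_smul, map_smul]
  congr 1
  rw [Module.End.mul_apply, actOpW_single, actOpW_single]
  by_cases h1 : (S.1.image g).card = S.1.card
  · rw [show extImgW n g S = Finsupp.single (⟨S.1.image g, S.2.image g⟩ :
        {S : Finset (Fin n) // S.Nonempty}) 1 from if_pos h1, actOpW_single]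
    unfold extImgW
    simp only [Finset.image_image, h1]
  · rw [show extImgW n g S = 0 from if_neg h1, map_zero]
    unfold extImgW
    rw [if_neg]
    intro hcomp
    apply h1
    have h2 := Finset.card_image_le (s := S.1.image g) (f := f)
    have h3 := Finset.card_image_le (s := S.1) (f := g)
    rw [Finset.image_image] at h2
    rw [hcomp] at *
    omega

/-- The action of `NDFₙ` on `⊕_{k=1}^n Λ^k ℂ^n`. -/
def TW (n : ℕ) : NDF n →* Module.End ℂ (WSp n) where
  toFun f := actOpW n f.1
  map_one' := actOpW_id n
  map_mul' f g := actOpW_comp n f.1 g.1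

instance (n : ℕ) : PartialOrder (NDF n) := by unfold NDF; infer_instance

/-- Two elements of a finset of a linear order having equally many elements below them
are equal. -/
lemma rank_eq_aux {n : ℕ} (t : Finset (Fin n)) {a b : Fin n} (ha : a ∈ t) (hb : b ∈ t)
    (h : (t.filter (· ≤ a)).card = (t.filter (· ≤ b)).card) : a = b := by
  rcases lt_trichotomy a b with hlt | he | hlt
  · exfalso
    have hss : t.filter (· ≤ a) ⊂ t.filter (· ≤ b) := by
      constructor
      · intro u hu
        simp only [Finset.mem_filter] at hu ⊢
        exact ⟨hu.1, hu.2.trans hlt.le⟩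
      · intro hcon
        have : b ∈ t.filter (· ≤ a) := hcon (Finset.mem_filter.mpr ⟨hb, le_refl b⟩)
        exact absurd (Finset.mem_filter.mp this).2 (not_le.mpr hlt)
    exact absurd h (Nat.ne_of_lt (Finset.card_lt_card hss))
  · exact he
  · exfalso
    have hss : t.filter (· ≤ b) ⊂ t.filter (· ≤ a) := by
      constructor
      · intro u hu
        simp only [Finset.mem_filter] at hu ⊢
        exact ⟨hu.1, hu.2.trans hlt.le⟩
      · intro hcon
        have : a ∈ t.filter (· ≤ b) := hcon (Finset.mem_filter.mpr ⟨ha, le_refl a⟩)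
        exact absurd (Finset.mem_filter.mp this).2 (not_le.mpr hlt)
    exact absurd h.symm (Nat.ne_of_lt (Finset.card_lt_card hss))

lemma filter_le_image {n : ℕ} {f : Fin n → Fin n} (hf : Monotone f) {s : Finset (Fin n)}
    (hfi : Set.InjOn f s) {x : Fin n} (hx : x ∈ s) :
    (s.image f).filter (· ≤ f x) = (s.filter (· ≤ x)).image f := by
  ext u
  simp only [Finset.mem_filter, Finset.mem_image]
  constructor
  · rintro ⟨⟨y, hy, rfl⟩, hle⟩
    refine ⟨y, ⟨hy, ?_⟩, rfl⟩
    by_contra hxy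
    have hylt : x < y := lt_of_not_ge hxy
    have : f y = f x := le_antisymm hle (hf hylt.le)
    exact absurd (hfi hy hx this) (ne_of_gt hylt)
  · rintro ⟨y, ⟨hy1, hy2⟩, rfl⟩
    exact ⟨⟨y, hy1, rfl⟩, hf hy2⟩

/-- A monotone map injective on a finset is determined on that finset by the image. -/
lemma mono_eq_on {n : ℕ} {f g : Fin n → Fin n} (hf : Monotone f) (hg : Monotone g)
    {s : Finset (Fin n)} (hfi : Set.InjOn f s) (hgi : Set.InjOn g s)
    (him : s.image f = s.image g) {x : Fin n} (hx : x ∈ s) : f x = g x := by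
  apply rank_eq_aux (s.image f) (Finset.mem_image_of_mem f hx)
    (him ▸ Finset.mem_image_of_mem g hx)
  have h2 : (s.image f).filter (· ≤ g x) = (s.image g).filter (· ≤ g x) := by rw [him]
  rw [filter_le_image hf hfi hx, h2, filter_le_image hg hgi hx,
    Finset.card_image_of_injOn (hgi.mono (by exact_mod_cast Finset.filter_subset _ s)),
    Finset.card_image_of_injOn (hfi.mono (by exact_mod_cast Finset.filter_subset _ s))]

lemma extImgW_apply (n : ℕ) (g : Fin n → Fin n) (S T : {S : Finset (Fin n) // S.Nonempty}) :
    extImgW n g S T = if S.1.image g = T.1 ∧ (S.1.image g).card = S.1.card then 1 else 0 := by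
  unfold extImgW
  by_cases hc : (S.1.image g).card = S.1.card
  · rw [if_pos hc, Finsupp.single_apply]
    by_cases he : S.1.image g = T.1
    · rw [if_pos (Subtype.ext he), if_pos ⟨he, hc⟩]
    · rw [if_neg (fun h => he (congrArg Subtype.val h)), if_neg (fun h => he h.1)]
  · rw [if_neg hc, if_neg (fun h => hc h.2)]
    rfl

/-- The representation of `ℂ[NDFₙ]` on `⊕_{k=1}^n Λ^k ℂ^n` is
faithful: the induced algebra homomorphism `ℂ[NDFₙ] → End(⊕_{k=1}^n Λ^k ℂ^n)`
is injective. -/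
theorem ndf_exterior_faithful (n : ℕ) (hn : 1 ≤ n) :
    Function.Injective
      (MonoidAlgebra.lift ℂ (Module.End ℂ (WSp n)) (NDF n) (TW n)) := by
  rw [injective_iff_map_eq_zero]
  intro x hx
  by_contra hx0
  have hsupp : x.coeff.support.Nonempty :=
    Finsupp.support_nonempty_iff.mpr (fun h => hx0 (MonoidAlgebra.coeff_eq_zero.mp h))
  obtain ⟨f, hfs, hfmax0⟩ := Finset.exists_maximal hsupp
  have hfmax : ∀ g ∈ x.coeff.support, ¬ f < g := fun g hg h =>
    lt_irrefl _ (h.trans_le (hfmax0 hg h.le))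
  -- S : minimal representatives of the fibers of f
  set S : Finset (Fin n) := Finset.univ.filter (fun i => ∀ j, f.1 j = f.1 i → i ≤ j) with hSdef
  have hS : S.Nonempty := by
    refine ⟨⟨0, hn⟩, Finset.mem_filter.mpr ⟨Finset.mem_univ _, fun j _ => ?_⟩⟩
    exact Fin.mk_le_of_le_val (Nat.zero_le _)
  -- every x has a representative in S
  have hrep : ∀ y : Fin n, ∃ s ∈ S, s ≤ y ∧ f.1 s = f.1 y := by
    intro y
    set Fib := Finset.univ.filter (fun j => f.1 j = f.1 y) with hFib
    have hFne : Fib.Nonempty := ⟨y, Finset.mem_filter.mpr ⟨Finset.mem_univ _, rfl⟩⟩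
    refine ⟨Fib.min' hFne, ?_, Fib.min'_le y (Finset.mem_filter.mpr ⟨Finset.mem_univ _, rfl⟩), ?_⟩
    · refine Finset.mem_filter.mpr ⟨Finset.mem_univ _, fun j hj => ?_⟩
      apply Fib.min'_le
      refine Finset.mem_filter.mpr ⟨Finset.mem_univ _, ?_⟩
      rw [hj]
      exact (Finset.mem_filter.mp (Fib.min'_mem hFne)).2
    · exact (Finset.mem_filter.mp (Fib.min'_mem hFne)).2
  have hfinj : Set.InjOn f.1 S := by
    intro i hi j hj hij
    have hi' := (Finset.mem_filter.mp hi).2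
    have hj' := (Finset.mem_filter.mp hj).2
    exact le_antisymm (hi' j hij.symm) (hj' i hij)
  set T : Finset (Fin n) := S.image f.1 with hTdef
  have hT : T.Nonempty := hS.image f.1
  have hcardT : T.card = S.card := Finset.card_image_of_injOn hfinj
  -- the key uniqueness claim
  have hkey : ∀ g ∈ x.coeff.support, S.image g.1 = T → g = f := by
    intro g hgs hgT
    have hgcard : (S.image g.1).card = S.card := by rw [hgT, hcardT]
    have hginj : Set.InjOn g.1 S := Finset.injOn_of_card_image_eq hgcard
    have heq : ∀ y ∈ S, g.1 y = f.1 y := fun y hy =>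
      mono_eq_on g.2 f.2 hginj hfinj (hgT.trans hTdef) hy
    have hle : f.1 ≤ g.1 := by
      intro y
      obtain ⟨s, hsS, hsy, hsf⟩ := hrep y
      calc f.1 y = f.1 s := hsf.symm
        _ = g.1 s := (heq s hsS).symm
        _ ≤ g.1 y := g.2 hsy
    have hle' : f ≤ g := hle
    rcases eq_or_lt_of_le hle' with h | h
    · exact h.symm
    · exact absurd h (hfmax g hgs)
  -- evaluate the zero operator at the basis vector e_S, coefficient at e_T
  have h0 : ((MonoidAlgebra.lift ℂ (Module.End ℂ (WSp n)) (NDF n) (TW n)) x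
      (Finsupp.single (⟨S, hS⟩ : {S : Finset (Fin n) // S.Nonempty}) 1)) ⟨T, hT⟩ = 0 := by
    rw [hx]; rfl
  rw [MonoidAlgebra.lift_apply] at h0
  rw [Finsupp.sum] at h0
  simp only [LinearMap.coe_sum, Finset.sum_apply, LinearMap.smul_apply] at h0
  have hTW : ∀ g : NDF n, (TW n g) (Finsupp.single (⟨S, hS⟩ :
      {S : Finset (Fin n) // S.Nonempty}) 1) = extImgW n g.1 ⟨S, hS⟩ := fun g =>
    actOpW_single n g.1 ⟨S, hS⟩
  simp only [hTW] at h0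
  rw [Finsupp.finset_sum_apply] at h0
  have hterm : ∀ g ∈ x.coeff.support,
      (x.coeff g • extImgW n g.1 ⟨S, hS⟩) ⟨T, hT⟩ = if g = f then x.coeff f else 0 := by
    intro g hgs
    rw [Finsupp.smul_apply, extImgW_apply]
    split_ifs with hcond hgf hgf
    · rw [hgf, smul_eq_mul, mul_one]
    · exact absurd (hkey g hgs hcond.1) hgf
    · subst hgf
      exact absurd ⟨rfl, hcardT⟩ hcond
    · rw [smul_eq_mul, mul_zero]
  rw [Finset.sum_congr rfl hterm, Finset.sum_ite_eq' x.coeff.support f (fun _ => x.coeff f),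
    if_pos hfs] at h0
  exact (Finsupp.mem_support_iff.mp hfs) h0

end
end

section
/- For all integers 1 ≤ k, l ≤ n, the space of right ℂ[NDF_n]-module homomorphisms between exterior powers satisfies dim_ℂ Hom_{ℂ[NDF_n]}(Λ^k ℂ^n, Λ^l ℂ^n) = 1 if l ∈ {k, k−1}, and 0 otherwise. -/
open scoped Classical

set_option maxHeartbeats 1000000
set_option synthInstance.maxHeartbeats 400000

noncomputable section

/-- The space `Hom_{ℂ[NDFₙ]}(Λ^k ℂ^n, Λ^l ℂ^n)`: the `ℂ`-linear maps commuting with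
the action of every non-decreasing function. -/
def HomND (n k l : ℕ) : Submodule ℂ (ExtP n k →ₗ[ℂ] ExtP n l) where
  carrier := {φ | ∀ f : NDF n, φ.comp (actOp n k f.1) = (actOp n l f.1).comp φ}
  add_mem' := by
    intro φ ψ hφ hψ f
    rw [LinearMap.add_comp, LinearMap.comp_add, hφ f, hψ f]
  zero_mem' := by
    intro f
    rw [LinearMap.zero_comp, LinearMap.comp_zero]
  smul_mem' := by
    intro c φ hφ f
    rw [LinearMap.smul_comp, LinearMap.comp_smul, hφ f]

-- Helper instances, to avoid very deep instance searches.
noncomputable instance (priority := 10000) extHomACG (n k l : ℕ) :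
    AddCommGroup (ExtP n k →ₗ[ℂ] ExtP n l) :=
  LinearMap.addCommGroup

noncomputable instance (priority := 10000) extHomSubACG (n k l : ℕ)
    (N : Submodule ℂ (ExtP n k →ₗ[ℂ] ExtP n l)) : AddCommGroup ↥N :=
  @Submodule.addCommGroup ℂ (ExtP n k →ₗ[ℂ] ExtP n l) _ _ _ N


/-! ### Auxiliary infrastructure -/

section Aux

variable {n : ℕ}

/-- Round-down map onto a nonempty finset. -/
def rd (S : Finset (Fin n)) (hS : S.Nonempty) (x : Fin n) : Fin n :=
  if h : (S.filter (· ≤ x)).Nonempty then (S.filter (· ≤ x)).max' h else S.min' hS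

lemma rd_mem (S : Finset (Fin n)) (hS : S.Nonempty) (x : Fin n) : rd S hS x ∈ S := by
  unfold rd
  split_ifs with h
  · exact (Finset.mem_filter.1 ((S.filter (· ≤ x)).max'_mem h)).1
  · exact S.min'_mem hS

lemma rd_mono (S : Finset (Fin n)) (hS : S.Nonempty) : Monotone (rd S hS) := by
  intro x y hxy
  unfold rd
  have hsub : S.filter (· ≤ x) ⊆ S.filter (· ≤ y) := by
    intro a ha
    rw [Finset.mem_filter] at ha ⊢
    exact ⟨ha.1, le_trans ha.2 hxy⟩
  split_ifs with h1 h2 h2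
  · exact Finset.max'_subset _ hsub
  · exact absurd (h1.mono hsub) h2
  · exact S.min'_le _ (Finset.mem_filter.1 ((S.filter (· ≤ y)).max'_mem h2)).1
  · exact le_rfl

lemma rd_fix (S : Finset (Fin n)) (hS : S.Nonempty) {a : Fin n} (ha : a ∈ S) :
    rd S hS a = a := by
  have hmem : a ∈ S.filter (· ≤ a) := Finset.mem_filter.2 ⟨ha, le_rfl⟩
  have hne : (S.filter (· ≤ a)).Nonempty := ⟨a, hmem⟩
  unfold rd
  rw [dif_pos hne]
  refine le_antisymm (Finset.max'_le _ _ _ ?_) (Finset.le_max' _ _ hmem)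
  intro y hy
  exact (Finset.mem_filter.1 hy).2

lemma extImg_apply (k : ℕ) (g : Fin n → Fin n) (S : {S : Finset (Fin n) // S.card = k})
    (U : {S : Finset (Fin n) // S.card = k}) :
    (extImg n k g S) U = if S.1.image g = U.1 then 1 else 0 := by
  unfold extImg
  split_ifs with h h2 h2
  · rw [Finsupp.single_apply, if_pos (Subtype.ext h2)]
  · rw [Finsupp.single_apply, if_neg]
    intro he
    exact h2 (congrArg Subtype.val he)
  · exfalso; apply h; rw [h2]; exact U.2
  · rfl

lemma actOp_apply_eval (k : ℕ) (g : Fin n → Fin n) (v : ExtP n k)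
    (U : {S : Finset (Fin n) // S.card = k}) :
    (actOp n k g v) U = ∑ T ∈ v.support, if T.1.image g = U.1 then v T else 0 := by
  have h1 : actOp n k g v = v.sum fun T c => c • extImg n k g T := by
    simp [actOp, Finsupp.lsum_apply, Finsupp.sum, LinearMap.toSpanSingleton_apply]
  rw [h1, Finsupp.sum_apply, Finsupp.sum]
  refine Finset.sum_congr rfl fun T _ => ?_
  rw [Finsupp.smul_apply, extImg_apply, smul_eq_mul]
  split_ifs <;> simp

/-- Generic evaluation of such sums. -/
lemma sum_cond_eval {k : ℕ} (v : ExtP n k) (cond : {S : Finset (Fin n) // S.card = k} → Prop)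
    [DecidablePred cond] (s : Finset {S : Finset (Fin n) // S.card = k})
    (h1 : ∀ T, v T ≠ 0 → (cond T ↔ T ∈ s)) :
    (∑ T ∈ v.support, if cond T then v T else 0) = ∑ T ∈ s, v T := by
  have e1 : (∑ T ∈ v.support, if cond T then v T else 0) = ∑ T ∈ v.support.filter cond, v T :=
    (Finset.sum_filter _ _).symm
  rw [e1]
  have e2 : v.support.filter cond = v.support ∩ s := by
    ext T
    simp only [Finset.mem_filter, Finset.mem_inter, Finsupp.mem_support_iff]
    constructor
    · rintro ⟨hT, hc⟩; exact ⟨hT, (h1 T hT).1 hc⟩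
    · rintro ⟨hT, hs⟩; exact ⟨hT, (h1 T hT).2 hs⟩
  rw [e2]
  refine Finset.sum_subset (Finset.inter_subset_right) fun T hT hT' => ?_
  by_contra hv
  exact hT' (Finset.mem_inter.2 ⟨Finsupp.mem_support_iff.2 hv, hT⟩)


lemma injOn_image_eq {g : Fin n → Fin n} {S A B : Finset (Fin n)}
    (hinj : Set.InjOn g ↑S) (hA : A ⊆ S) (hB : B ⊆ S) (h : A.image g = B.image g) :
    A = B := by
  ext x
  constructor
  · intro hx
    have : g x ∈ B.image g := h ▸ Finset.mem_image_of_mem g hx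
    obtain ⟨y, hy, hxy⟩ := Finset.mem_image.1 this
    rw [← hinj (hB hy) (hA hx) hxy]; exact hy
  · intro hx
    have : g x ∈ A.image g := h ▸ Finset.mem_image_of_mem g hx
    obtain ⟨y, hy, hxy⟩ := Finset.mem_image.1 this
    rw [← hinj (hA hy) (hB hx) hxy]; exact hy

variable {k l : ℕ} {φ : ExtP n k →ₗ[ℂ] ExtP n l}

lemma homnd_eval (hφ : φ ∈ HomND n k l) {g : Fin n → Fin n} (hg : Monotone g)
    (x : ExtP n k) : φ (actOp n k g x) = actOp n l g (φ x) := by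
  have h : φ.comp (actOp n k g) = (actOp n l g).comp φ := hφ (⟨g, hg⟩ : NDF n)
  exact LinearMap.congr_fun h x

lemma coeff_zero_of_not_subset (hφ : φ ∈ HomND n k l)
    (S : {S : Finset (Fin n) // S.card = k}) (T : {S : Finset (Fin n) // S.card = l})
    (hk : S.1.Nonempty) (hT : ¬ T.1 ⊆ S.1) : (φ (Finsupp.single S 1)) T = 0 := by
  set g := rd S.1 hk with hg
  have him : S.1.image g = S.1 := by
    ext y
    simp only [Finset.mem_image]
    constructor
    · rintro ⟨x, hx, rfl⟩; exact rd_mem _ hk x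
    · intro hy; exact ⟨y, hy, rd_fix _ hk hy⟩
  have h1 : actOp n k g (Finsupp.single S 1) = Finsupp.single S 1 := by
    rw [actOp_single]
    unfold extImg
    rw [dif_pos (by rw [him]; exact S.2)]
    congr 1
    exact Subtype.ext him
  have h2 : φ (Finsupp.single S 1) = actOp n l g (φ (Finsupp.single S 1)) := by
    conv_lhs => rw [← h1, homnd_eval hφ (rd_mono S.1 hk)]
  have h3 := congrArg (fun v : ExtP n l => v T) h2
  rw [h3, actOp_apply_eval]
  refine Finset.sum_eq_zero fun T' _ => ?_
  rw [if_neg]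
  intro he
  apply hT
  rw [← he]
  intro y hy
  obtain ⟨x, _, rfl⟩ := Finset.mem_image.1 hy
  exact rd_mem S.1 hk x

lemma coeff_transport (hφ : φ ∈ HomND n k l)
    (S : {S : Finset (Fin n) // S.card = k}) (T : {S : Finset (Fin n) // S.card = l})
    (hkS : S.1.Nonempty) {g : Fin n → Fin n} (hg : Monotone g) (hinj : Set.InjOn g ↑S.1)
    (hTS : T.1 ⊆ S.1) (hcS : (S.1.image g).card = k) (hcT : (T.1.image g).card = l) :
    (φ (Finsupp.single (⟨S.1.image g, hcS⟩ : {S : Finset (Fin n) // S.card = k}) 1))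
      ⟨T.1.image g, hcT⟩ = (φ (Finsupp.single S 1)) T := by
  have h1 : actOp n k g (Finsupp.single S 1)
      = Finsupp.single (⟨S.1.image g, hcS⟩ : {S : Finset (Fin n) // S.card = k}) 1 := by
    rw [actOp_single]; unfold extImg; rw [dif_pos hcS]
  have h2 := homnd_eval hφ hg (Finsupp.single S 1)
  rw [h1] at h2
  have h3 := congrArg (fun v : ExtP n l => v (⟨T.1.image g, hcT⟩ :
    {S : Finset (Fin n) // S.card = l})) h2
  rw [h3, actOp_apply_eval, sum_cond_eval _ _ {T}, Finset.sum_singleton]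
  intro T' hT'
  simp only [Finset.mem_singleton]
  constructor
  · intro he
    have hT'S : T'.1 ⊆ S.1 := by
      by_contra hc
      exact hT' (coeff_zero_of_not_subset hφ S T' hkS hc)
    exact Subtype.ext (injOn_image_eq hinj hT'S hTS he)
  · rintro rfl; rfl

section Collapse

variable {S : Finset (Fin n)} {a b : Fin n}

lemma collapse_b (ha : a ∈ S) (hb : b ∈ S) (hab : a < b)
    (hadj : ∀ x ∈ S, ¬(a < x ∧ x < b)) (hne : (S.erase b).Nonempty) :
    rd (S.erase b) hne b = a := by
  have hmem : a ∈ (S.erase b).filter (· ≤ b) :=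
    Finset.mem_filter.2 ⟨Finset.mem_erase.2 ⟨ne_of_lt hab, ha⟩, le_of_lt hab⟩
  unfold rd
  rw [dif_pos ⟨a, hmem⟩]
  refine le_antisymm (Finset.max'_le _ _ _ ?_) (Finset.le_max' _ _ hmem)
  intro y hy
  obtain ⟨hy1, hy2⟩ := Finset.mem_filter.1 hy
  obtain ⟨hyb, hyS⟩ := Finset.mem_erase.1 hy1
  by_contra hya
  exact hadj y hyS ⟨lt_of_not_ge hya, lt_of_le_of_ne hy2 hyb⟩

lemma collapse_image_fix (hne : (S.erase b).Nonempty) {X : Finset (Fin n)}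
    (hX : X ⊆ S.erase b) : X.image (rd (S.erase b) hne) = X := by
  ext y
  simp only [Finset.mem_image]
  constructor
  · rintro ⟨x, hx, rfl⟩; rw [rd_fix _ hne (hX hx)]; exact hx
  · intro hy; exact ⟨y, hy, rd_fix _ hne (hX hy)⟩

lemma collapse_image_of_mem (ha : a ∈ S) (hb : b ∈ S) (hab : a < b)
    (hadj : ∀ x ∈ S, ¬(a < x ∧ x < b)) (hne : (S.erase b).Nonempty)
    {T : Finset (Fin n)} (hT : T ⊆ S) (hbT : b ∈ T) :
    T.image (rd (S.erase b) hne) = insert a (T.erase b) := by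
  conv_lhs => rw [← Finset.insert_erase hbT]
  rw [Finset.image_insert, collapse_b ha hb hab hadj hne,
    collapse_image_fix hne (Finset.erase_subset_erase _ hT)]

lemma collapse_image_S (ha : a ∈ S) (hb : b ∈ S) (hab : a < b)
    (hadj : ∀ x ∈ S, ¬(a < x ∧ x < b)) (hne : (S.erase b).Nonempty) :
    S.image (rd (S.erase b) hne) = S.erase b := by
  rw [collapse_image_of_mem ha hb hab hadj hne (le_refl S) hb,
    Finset.insert_eq_self.2 (Finset.mem_erase.2 ⟨ne_of_lt hab, ha⟩)]

lemma coeff_collapse_zero (hφ : φ ∈ HomND n k l) (S : {S : Finset (Fin n) // S.card = k})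
    {a b : Fin n} (ha : a ∈ S.1) (hb : b ∈ S.1) (hab : a < b)
    (hadj : ∀ x ∈ S.1, ¬(a < x ∧ x < b)) (U : {S : Finset (Fin n) // S.card = l})
    (hUS : U.1 ⊆ S.1) (haU : a ∉ U.1) (hbU : b ∉ U.1) :
    (φ (Finsupp.single S 1)) U = 0 := by
  have hne : (S.1.erase b).Nonempty := ⟨a, Finset.mem_erase.2 ⟨ne_of_lt hab, ha⟩⟩
  set f := rd (S.1.erase b) hne with hf
  have hSne : S.1.Nonempty := ⟨b, hb⟩
  have hk1 : 0 < k := S.2 ▸ Finset.card_pos.2 hSne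
  have h0 : actOp n k f (Finsupp.single S 1) = 0 := by
    rw [actOp_single]
    unfold extImg
    rw [dif_neg]
    rw [collapse_image_S ha hb hab hadj hne, Finset.card_erase_of_mem hb, S.2]
    omega
  have h2 := homnd_eval hφ (rd_mono _ hne) (Finsupp.single S 1)
  rw [h0, map_zero] at h2
  have h3 := congrArg (fun v : ExtP n l => v U) h2
  simp only [Finsupp.coe_zero, Pi.zero_apply] at h3
  rw [actOp_apply_eval, sum_cond_eval _ _ {U}, Finset.sum_singleton] at h3
  · exact h3.symm
  intro T' hT'
  have hT'S : T'.1 ⊆ S.1 := by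
    by_contra hc
    exact hT' (coeff_zero_of_not_subset hφ S T' hSne hc)
  simp only [Finset.mem_singleton]
  constructor
  · intro he
    by_cases hbT' : b ∈ T'.1
    · exfalso
      apply haU
      rw [← he, collapse_image_of_mem ha hb hab hadj hne hT'S hbT']
      exact Finset.mem_insert_self a _
    · rw [collapse_image_fix hne (Finset.subset_erase.2 ⟨hT'S, hbT'⟩)] at he
      exact Subtype.ext he
  · rintro rfl
    exact collapse_image_fix hne (Finset.subset_erase.2 ⟨hUS, hbU⟩)

lemma coeff_collapse_rel (hφ : φ ∈ HomND n k l) (S : {S : Finset (Fin n) // S.card = k})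
    {a b : Fin n} (ha : a ∈ S.1) (hb : b ∈ S.1) (hab : a < b)
    (hadj : ∀ x ∈ S.1, ¬(a < x ∧ x < b)) (U : {S : Finset (Fin n) // S.card = l})
    (hUS : U.1 ⊆ S.1) (haU : a ∈ U.1) (hbU : b ∉ U.1)
    (hU' : (insert b (U.1.erase a)).card = l) :
    (φ (Finsupp.single S 1)) U
      = - (φ (Finsupp.single S 1)) ⟨insert b (U.1.erase a), hU'⟩ := by
  have hne : (S.1.erase b).Nonempty := ⟨a, Finset.mem_erase.2 ⟨ne_of_lt hab, ha⟩⟩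
  set f := rd (S.1.erase b) hne with hf
  have hSne : S.1.Nonempty := ⟨b, hb⟩
  have hk1 : 0 < k := S.2 ▸ Finset.card_pos.2 hSne
  have hl1 : 0 < l := U.2 ▸ Finset.card_pos.2 ⟨a, haU⟩
  have hUne : U ≠ (⟨insert b (U.1.erase a), hU'⟩ : {S : Finset (Fin n) // S.card = l}) := by
    intro hc
    apply hbU
    rw [Subtype.ext_iff] at hc
    rw [hc]
    exact Finset.mem_insert_self b _
  have h0 : actOp n k f (Finsupp.single S 1) = 0 := by
    rw [actOp_single]
    unfold extImg
    rw [dif_neg]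
    rw [collapse_image_S ha hb hab hadj hne, Finset.card_erase_of_mem hb, S.2]
    omega
  have h2 := homnd_eval hφ (rd_mono _ hne) (Finsupp.single S 1)
  rw [h0, map_zero] at h2
  have h3 := congrArg (fun v : ExtP n l => v U) h2
  simp only [Finsupp.coe_zero, Pi.zero_apply] at h3
  rw [actOp_apply_eval,
    sum_cond_eval _ _ {U, ⟨insert b (U.1.erase a), hU'⟩},
    Finset.sum_pair hUne] at h3
  · exact eq_neg_of_add_eq_zero_left h3.symm
  intro T' hT'
  have hT'S : T'.1 ⊆ S.1 := by
    by_contra hc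
    exact hT' (coeff_zero_of_not_subset hφ S T' hSne hc)
  simp only [Finset.mem_insert, Finset.mem_singleton]
  constructor
  · intro he
    by_cases hbT' : b ∈ T'.1
    · right
      rw [collapse_image_of_mem ha hb hab hadj hne hT'S hbT'] at he
      have haT' : a ∉ T'.1 := by
        intro haT'
        have h4 : a ∈ T'.1.erase b := Finset.mem_erase.2 ⟨ne_of_lt hab, haT'⟩
        rw [Finset.insert_eq_self.2 h4] at he
        have := congrArg Finset.card he
        rw [Finset.card_erase_of_mem hbT', T'.2, U.2] at this
        omega
      have h5 : U.1.erase a = T'.1.erase b := by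
        rw [← he, Finset.erase_insert]
        intro hc
        exact haT' (Finset.mem_of_mem_erase hc)
      refine Subtype.ext ?_
      show T'.1 = insert b (U.1.erase a)
      rw [h5, Finset.insert_erase hbT']
    · left
      rw [collapse_image_fix hne (Finset.subset_erase.2 ⟨hT'S, hbT'⟩)] at he
      exact Subtype.ext he
  · rintro (rfl | rfl)
    · exact collapse_image_fix hne (Finset.subset_erase.2 ⟨hUS, hbU⟩)
    · have hsub : insert b (U.1.erase a) ⊆ S.1 :=
        Finset.insert_subset hb ((Finset.erase_subset _ _).trans hUS)
      rw [collapse_image_of_mem ha hb hab hadj hne hsub (Finset.mem_insert_self b _)]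
      rw [Finset.erase_insert (fun hc => hbU (Finset.mem_of_mem_erase hc)),
        Finset.insert_erase haU]

end Collapse

section Transport

/-- The monotone transport map sending the finset `S` order-isomorphically to `S'`
(rounding everything else down into `S` first). -/
def tp (S S' : Finset (Fin n)) (hS : S.Nonempty) {m : ℕ} (hSc : S.card = m)
    (hS'c : S'.card = m) (x : Fin n) : Fin n :=
  ((S'.orderIsoOfFin hS'c) ((S.orderIsoOfFin hSc).symm ⟨rd S hS x, rd_mem S hS x⟩)).1

variable {S S' : Finset (Fin n)} {hS : S.Nonempty} {m : ℕ} {hSc : S.card = m}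
  {hS'c : S'.card = m}

lemma tp_mem (x : Fin n) : tp S S' hS hSc hS'c x ∈ S' :=
  ((S'.orderIsoOfFin hS'c) _).2

lemma tp_mono : Monotone (tp S S' hS hSc hS'c) := by
  intro x y hxy
  exact Subtype.coe_le_coe.2 ((S'.orderIsoOfFin hS'c).monotone
    ((S.orderIsoOfFin hSc).symm.monotone (Subtype.mk_le_mk.2 (rd_mono S hS hxy))))

lemma tp_strictMonoOn : StrictMonoOn (tp S S' hS hSc hS'c) ↑S := by
  intro a ha b hb hab
  have h1 : (⟨rd S hS a, rd_mem S hS a⟩ : {x // x ∈ S})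
      < ⟨rd S hS b, rd_mem S hS b⟩ := by
    rw [Subtype.mk_lt_mk, rd_fix S hS ha, rd_fix S hS hb]
    exact hab
  exact Subtype.coe_lt_coe.2 ((S'.orderIsoOfFin hS'c).strictMono
    ((S.orderIsoOfFin hSc).symm.strictMono h1))

lemma tp_injOn : Set.InjOn (tp S S' hS hSc hS'c) ↑S :=
  (tp_strictMonoOn).injOn

lemma tp_image : S.image (tp S S' hS hSc hS'c) = S' := by
  have hsub : S.image (tp S S' hS hSc hS'c) ⊆ S' := by
    intro y hy
    obtain ⟨x, _, rfl⟩ := Finset.mem_image.1 hy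
    exact tp_mem x
  have hcard : (S.image (tp S S' hS hSc hS'c)).card = m := by
    rw [Finset.card_image_of_injOn tp_injOn, hSc]
  exact Finset.eq_of_subset_of_card_le hsub (by rw [hcard, hS'c])

lemma tp_min (hS' : S'.Nonempty) :
    tp S S' hS hSc hS'c (S.min' hS) = S'.min' hS' := by
  refine le_antisymm ?_ (S'.min'_le _ (tp_mem _))
  have h1 : S'.min' hS' ∈ S.image (tp S S' hS hSc hS'c) := by
    rw [tp_image]; exact S'.min'_mem hS'
  obtain ⟨x, hx, hxe⟩ := Finset.mem_image.1 h1
  rw [← hxe]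
  exact tp_mono (S.min'_le x hx)

end Transport

/-- Image of an erase under an injective-on map. -/
lemma image_erase_of_injOn {g : Fin n → Fin n} {S T : Finset (Fin n)}
    (hinj : Set.InjOn g ↑S) (hT : T ⊆ S) {b : Fin n} (hb : b ∈ T) :
    (T.erase b).image g = (T.image g).erase (g b) := by
  ext y
  simp only [Finset.mem_image, Finset.mem_erase]
  constructor
  · rintro ⟨x, ⟨hxb, hxT⟩, rfl⟩
    refine ⟨fun hc => hxb (hinj (hT hxT) (hT hb) hc), x, hxT, rfl⟩
  · rintro ⟨hyb, x, hx, rfl⟩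
    exact ⟨x, ⟨fun hc => hyb (by rw [hc]), hx⟩, rfl⟩

lemma exists_pred {S : Finset (Fin n)} (hS : S.Nonempty) {b : Fin n} (hb : b ∈ S)
    (hmin : b ≠ S.min' hS) :
    ∃ a ∈ S, a < b ∧ ∀ x ∈ S, ¬(a < x ∧ x < b) := by
  have hmem : S.min' hS ∈ S.filter (· < b) :=
    Finset.mem_filter.2 ⟨S.min'_mem hS, lt_of_le_of_ne (S.min'_le b hb) (Ne.symm hmin)⟩
  have hne : (S.filter (· < b)).Nonempty := ⟨_, hmem⟩
  refine ⟨(S.filter (· < b)).max' hne, (Finset.mem_filter.1 ((S.filter (· < b)).max'_mem hne)).1,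
    (Finset.mem_filter.1 ((S.filter (· < b)).max'_mem hne)).2, ?_⟩
  rintro x hx ⟨h1, h2⟩
  exact absurd (Finset.le_max' (S.filter (· < b)) x (Finset.mem_filter.2 ⟨hx, h2⟩)) (not_le.2 h1)

lemma exists_succ {S : Finset (Fin n)} {a y : Fin n} (hy : y ∈ S) (hay : a < y) :
    ∃ s ∈ S, a < s ∧ ∀ x ∈ S, ¬(a < x ∧ x < s) := by
  have hne : (S.filter (a < ·)).Nonempty := ⟨y, Finset.mem_filter.2 ⟨hy, hay⟩⟩
  refine ⟨(S.filter (a < ·)).min' hne, (Finset.mem_filter.1 ((S.filter (a < ·)).min'_mem hne)).1,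
    (Finset.mem_filter.1 ((S.filter (a < ·)).min'_mem hne)).2, ?_⟩
  rintro x hx ⟨h1, h2⟩
  exact absurd (Finset.min'_le (S.filter (a < ·)) x (Finset.mem_filter.2 ⟨hx, h1⟩)) (not_le.2 h2)

lemma id_mem_homND : (LinearMap.id : ExtP n k →ₗ[ℂ] ExtP n k) ∈ HomND n k k :=
  fun f => by rw [LinearMap.id_comp, LinearMap.comp_id]

lemma homnd_diag (k : ℕ) (hk1 : 1 ≤ k) (hk2 : k ≤ n) :
    HomND n k k = Submodule.span ℂ {(LinearMap.id : ExtP n k →ₗ[ℂ] ExtP n k)} := by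
  obtain ⟨A, -, hA⟩ := Finset.exists_subset_card_eq (s := (Finset.univ : Finset (Fin n))) (n := k)
    (by simpa using hk2)
  have hAne : A.Nonempty := Finset.card_pos.1 (by omega)
  apply le_antisymm
  · intro φ hφ
    set c := (φ (Finsupp.single (⟨A, hA⟩ : {S : Finset (Fin n) // S.card = k}) 1)) ⟨A, hA⟩
      with hc
    have key : ∀ S : {S : Finset (Fin n) // S.card = k},
        φ (Finsupp.single S 1) = c • Finsupp.single S 1 := by
      intro S
      have hSne : S.1.Nonempty := Finset.card_pos.1 (by omega)
      have hcS : (A.image (tp A S.1 hAne hA S.2)).card = k := by rw [tp_image, S.2]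
      have ht := coeff_transport hφ ⟨A, hA⟩ ⟨A, hA⟩ hAne tp_mono tp_injOn
        (subset_refl A) hcS hcS
      have hAS : (⟨A.image (tp A S.1 hAne hA S.2), hcS⟩ :
          {S : Finset (Fin n) // S.card = k}) = S := Subtype.ext tp_image
      rw [hAS] at ht
      ext T
      rw [Finsupp.smul_apply, Finsupp.single_apply]
      by_cases hT : T = S
      · subst hT
        rw [if_pos rfl, smul_eq_mul, mul_one]
        exact ht
      · rw [if_neg (fun hc' => hT (hc'.symm)), smul_zero]
        by_cases hTS : T.1 ⊆ S.1
        · exfalso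
          exact hT (Subtype.ext (Finset.eq_of_subset_of_card_le hTS (by omega)))
        · exact coeff_zero_of_not_subset hφ S T hSne hTS
    have hφc : φ = c • LinearMap.id := by
      apply Finsupp.lhom_ext
      intro S y
      have h1 : (Finsupp.single S y : ExtP n k) = y • Finsupp.single S 1 := by
        rw [Finsupp.smul_single, smul_eq_mul, mul_one]
      rw [h1, map_smul, map_smul, key S]
      simp only [LinearMap.smul_apply, LinearMap.id_coe, id_eq]
    rw [hφc]
    exact Submodule.smul_mem _ _ (Submodule.mem_span_singleton_self _)
  · rw [Submodule.span_le, Set.singleton_subset_iff]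
    exact id_mem_homND

lemma homnd_coeff_zero_of_ne (hφ : φ ∈ HomND n k l) (hk1 : 1 ≤ k) (h1 : l ≠ k)
    (h2 : l + 1 ≠ k) (S : {S : Finset (Fin n) // S.card = k})
    (T : {S : Finset (Fin n) // S.card = l}) : (φ (Finsupp.single S 1)) T = 0 := by
  have hSne : S.1.Nonempty := Finset.card_pos.1 (by omega)
  by_cases hTS : T.1 ⊆ S.1
  swap
  · exact coeff_zero_of_not_subset hφ S T hSne hTS
  have hlk : l ≤ k := by
    have := Finset.card_le_card hTS
    omega
  have hlk2 : l + 2 ≤ k := by omega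
  clear hTS
  suffices H : ∀ m : ℕ, ∀ T : {S : Finset (Fin n) // S.card = l}, T.1 ⊆ S.1 →
      (∑ x ∈ S.1 \ T.1, (n - x.1)) = m → (φ (Finsupp.single S 1)) T = 0 by
    by_cases hTS : T.1 ⊆ S.1
    · exact H _ T hTS rfl
    · exact coeff_zero_of_not_subset hφ S T hSne hTS
  intro m
  induction m using Nat.strong_induction_on with
  | _ m IH =>
  intro T hTS hm
  set M := S.1 \ T.1 with hMdef
  have hMcard : M.card = k - l := by rw [hMdef, Finset.card_sdiff_of_subset hTS, S.2, T.2]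
  have hMne : M.Nonempty := Finset.card_pos.1 (by omega)
  set a := M.min' hMne with hadef
  have haM : a ∈ M := M.min'_mem hMne
  have haS : a ∈ S.1 := (Finset.mem_sdiff.1 haM).1
  have haT : a ∉ T.1 := (Finset.mem_sdiff.1 haM).2
  obtain ⟨b₂, hb₂M, hb₂ne⟩ := Finset.exists_mem_ne (s := M) (by omega) a
  have hab₂ : a < b₂ := lt_of_le_of_ne (M.min'_le _ hb₂M) (Ne.symm hb₂ne)
  obtain ⟨s, hsS, has, hadj⟩ := exists_succ (Finset.mem_sdiff.1 hb₂M).1 hab₂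
  by_cases hsT : s ∈ T.1
  swap
  · exact coeff_collapse_zero hφ S haS hsS has hadj T hTS haT hsT
  have hsa : a ≠ s := ne_of_lt has
  have haTe : a ∉ T.1.erase s := fun h => haT (Finset.mem_of_mem_erase h)
  have hl1 : 1 ≤ l := by
    have := Finset.card_pos.2 ⟨s, hsT⟩
    omega
  have hU' : (insert a (T.1.erase s)).card = l := by
    rw [Finset.card_insert_of_notMem haTe, Finset.card_erase_of_mem hsT, T.2]
    omega
  set U : {S : Finset (Fin n) // S.card = l} := ⟨insert a (T.1.erase s), hU'⟩ with hUdef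
  have hUS : U.1 ⊆ S.1 := Finset.insert_subset haS ((Finset.erase_subset _ _).trans hTS)
  have haU : a ∈ U.1 := Finset.mem_insert_self a _
  have hsU : s ∉ U.1 := by
    intro hc
    rcases Finset.mem_insert.1 hc with h | h
    · exact hsa h.symm
    · exact Finset.notMem_erase s _ h
  have hUT : insert s (U.1.erase a) = T.1 := by
    show insert s ((insert a (T.1.erase s)).erase a) = T.1
    rw [Finset.erase_insert haTe, Finset.insert_erase hsT]
  have hUTc : (insert s (U.1.erase a)).card = l := by rw [hUT, T.2]
  have hrel := coeff_collapse_rel hφ S haS hsS has hadj U hUS haU hsU hUTc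
  have hsub : (⟨insert s (U.1.erase a), hUTc⟩ : {S : Finset (Fin n) // S.card = l}) = T :=
    Subtype.ext hUT
  rw [hsub] at hrel
  have hSU : S.1 \ U.1 = insert s (M.erase a) := by
    ext x
    simp only [Finset.mem_sdiff, Finset.mem_insert, Finset.mem_erase, hUdef, hMdef]
    constructor
    · rintro ⟨hxS, hx2⟩
      push_neg at hx2
      by_cases hxs : x = s
      · exact Or.inl hxs
      · exact Or.inr ⟨hx2.1, hxS, hx2.2 hxs⟩
    · rintro (rfl | ⟨hxa, hxS, hxT⟩)
      · exact ⟨hsS, fun hc => hc.elim (fun h => hsa h.symm) (fun h => h.1 rfl)⟩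
      · exact ⟨hxS, fun hc => hc.elim (fun h => hxa h) (fun h => hxT h.2)⟩
  have hsMe : s ∉ M.erase a := by
    intro h
    exact (Finset.mem_sdiff.1 (Finset.mem_of_mem_erase h)).2 hsT
  have hmeas : (∑ x ∈ S.1 \ U.1, (n - x.1)) < m := by
    rw [hSU, Finset.sum_insert hsMe]
    have h2 : (n - a.1) + ∑ x ∈ M.erase a, (n - x.1) = ∑ x ∈ M, (n - x.1) :=
      Finset.add_sum_erase M (fun x => n - x.1) haM
    have hsn : s.1 < n := s.isLt
    have hasv : a.1 < s.1 := has
    omega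
  have hUz := IH _ hmeas U hUS rfl
  linear_combination hrel - hUz

lemma homnd_bot (hk1 : 1 ≤ k) (h1 : l ≠ k) (h2 : l + 1 ≠ k) : HomND n k l = ⊥ := by
  rw [eq_bot_iff]
  intro φ hφ
  rw [Submodule.mem_bot]
  apply Finsupp.lhom_ext
  intro S y
  have h1' : (Finsupp.single S y : ExtP n k) = y • Finsupp.single S 1 := by
    rw [Finsupp.smul_single, smul_eq_mul, mul_one]
  rw [h1', map_smul]
  have hz : φ (Finsupp.single S 1) = 0 := by
    ext T
    rw [homnd_coeff_zero_of_ne hφ hk1 h1 h2 S T]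
    rfl
  rw [hz, smul_zero, LinearMap.zero_apply]

/-! ### The boundary map -/

/-- Sign of an element within a finset. -/
def sgn (S : Finset (Fin n)) (b : Fin n) : ℂ := (-1 : ℂ) ^ (S.filter (· < b)).card

lemma sgn_adj {S : Finset (Fin n)} {a b : Fin n} (ha : a ∈ S) (hab : a < b)
    (hadj : ∀ x ∈ S, ¬(a < x ∧ x < b)) : sgn S b = - sgn S a := by
  unfold sgn
  have he : S.filter (· < b) = insert a (S.filter (· < a)) := by
    ext x
    simp only [Finset.mem_filter, Finset.mem_insert]
    constructor
    · rintro ⟨hxS, hxb⟩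
      rcases eq_or_ne x a with rfl | hxa
      · exact Or.inl rfl
      · refine Or.inr ⟨hxS, ?_⟩
        rcases lt_or_ge x a with h | h
        · exact h
        · exact absurd ⟨lt_of_le_of_ne h (Ne.symm hxa), hxb⟩ (hadj x hxS)
    · rintro (rfl | ⟨hxS, hxa⟩)
      · exact ⟨ha, hab⟩
      · exact ⟨hxS, lt_trans hxa hab⟩
  rw [he, Finset.card_insert_of_notMem, pow_succ]
  · ring
  · intro hc
    exact lt_irrefl a (Finset.mem_filter.1 hc).2

lemma sgn_min {S : Finset (Fin n)} (hS : S.Nonempty) : sgn S (S.min' hS) = 1 := by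
  unfold sgn
  have : S.filter (· < S.min' hS) = ∅ := by
    rw [Finset.filter_eq_empty_iff]
    intro x hx
    exact not_lt.2 (S.min'_le x hx)
  rw [this, Finset.card_empty, pow_zero]

lemma erase_image_eq {f : Fin n → Fin n} {S : Finset (Fin n)} {b p : Fin n}
    (hb : b ∈ S) (hp : p ∈ S) (hpb : p ≠ b) (hf : f p = f b) :
    (S.erase p).image f = (S.erase b).image f := by
  ext y
  simp only [Finset.mem_image, Finset.mem_erase]
  constructor
  · rintro ⟨x, ⟨hxp, hxS⟩, rfl⟩
    rcases eq_or_ne x b with rfl | hxb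
    · exact ⟨p, ⟨hpb, hp⟩, hf⟩
    · exact ⟨x, ⟨hxb, hxS⟩, rfl⟩
  · rintro ⟨x, ⟨hxb, hxS⟩, rfl⟩
    rcases eq_or_ne x p with rfl | hxp
    · exact ⟨b, ⟨Ne.symm hpb, hb⟩, hf.symm⟩
    · exact ⟨x, ⟨hxp, hxS⟩, rfl⟩

/-- The (unique) partner of `b`: an element with the same image under `f`. -/
def pup (f : Fin n → Fin n) (S : Finset (Fin n)) (b : {x // x ∈ S}) : {x // x ∈ S} :=
  if h : ∃ p, p ∈ S ∧ p ≠ b.1 ∧ f p = f b.1 then ⟨h.choose, h.choose_spec.1⟩ else b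

lemma pup_spec {f : Fin n → Fin n} {S : Finset (Fin n)} {b : {x // x ∈ S}}
    (h : ∃ p, p ∈ S ∧ p ≠ b.1 ∧ f p = f b.1) :
    (pup f S b).1 ≠ b.1 ∧ f (pup f S b).1 = f b.1 := by
  unfold pup
  rw [dif_pos h]
  exact ⟨h.choose_spec.2.1, h.choose_spec.2.2⟩

lemma pup_unique {f : Fin n → Fin n} {S : Finset (Fin n)} {b : {x // x ∈ S}}
    (h : ∃ p, p ∈ S ∧ p ≠ b.1 ∧ f p = f b.1)
    (hinjE : Set.InjOn f ↑(S.erase b.1)) {q : Fin n} (hq : q ∈ S) (hqb : q ≠ b.1)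
    (hfq : f q = f b.1) : q = (pup f S b).1 := by
  obtain ⟨hne, hfp⟩ := pup_spec h
  exact hinjE (Finset.mem_coe.2 (Finset.mem_erase.2 ⟨hqb, hq⟩))
    (Finset.mem_coe.2 (Finset.mem_erase.2 ⟨hne, (pup f S b).2⟩)) (by rw [hfq, hfp])

lemma exists_partner {f : Fin n → Fin n} {S : Finset (Fin n)} {b : Fin n}
    (hnotinj : ¬ Set.InjOn f ↑S) (hb : b ∈ S) (hinjE : Set.InjOn f ↑(S.erase b)) :
    ∃ p, p ∈ S ∧ p ≠ b ∧ f p = f b := by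
  have hpair : ∃ x, x ∈ S ∧ ∃ y, y ∈ S ∧ f x = f y ∧ x ≠ y := by
    by_contra hc
    push_neg at hc
    exact hnotinj fun u hu v hv huv =>
      hc u (Finset.mem_coe.1 hu) v (Finset.mem_coe.1 hv) huv
  obtain ⟨x, hx, y, hy, hfxy, hxy⟩ := hpair
  rcases eq_or_ne b x with rfl | hbx
  · exact ⟨y, hy, fun hc => hxy hc.symm, hfxy.symm⟩
  rcases eq_or_ne b y with rfl | hby
  · exact ⟨x, hx, fun hc => hxy hc, hfxy⟩
  exfalso
  exact hxy (hinjE (Finset.mem_coe.2 (Finset.mem_erase.2 ⟨fun hc => hbx hc.symm, hx⟩))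
    (Finset.mem_coe.2 (Finset.mem_erase.2 ⟨fun hc => hby hc.symm, hy⟩)) hfxy)

lemma sgn_partner {f : Fin n → Fin n} (hmono : Monotone f) {S : Finset (Fin n)} {b p : Fin n}
    (hb : b ∈ S) (hp : p ∈ S) (hpb : p ≠ b) (hf : f p = f b)
    (hinjE : Set.InjOn f ↑(S.erase b)) : sgn S p = - sgn S b := by
  rcases hpb.lt_or_gt with h | h
  · -- p < b : no element of S strictly between p and b
    have hadj : ∀ x ∈ S, ¬(p < x ∧ x < b) := by
      rintro x hxS ⟨h1, h2⟩
      have hfx : f x = f p := le_antisymm (hf ▸ hmono h2.le) (hmono h1.le)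
      have : x = p := hinjE (Finset.mem_coe.2 (Finset.mem_erase.2 ⟨ne_of_lt h2, hxS⟩))
        (Finset.mem_coe.2 (Finset.mem_erase.2 ⟨hpb, hp⟩)) hfx
      exact absurd this (ne_of_gt h1)
    have := sgn_adj hp h hadj
    rw [this]; ring
  · -- b < p
    have hadj : ∀ x ∈ S, ¬(b < x ∧ x < p) := by
      rintro x hxS ⟨h1, h2⟩
      have hfx : f x = f p := le_antisymm (hmono h2.le) (hf ▸ hmono h1.le)
      have : x = p := hinjE (Finset.mem_coe.2 (Finset.mem_erase.2 ⟨ne_of_gt h1, hxS⟩))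
        (Finset.mem_coe.2 (Finset.mem_erase.2 ⟨hpb, hp⟩)) hfx
      exact absurd this (ne_of_lt h2)
    exact sgn_adj hb h hadj

lemma sgn_image {f : Fin n → Fin n} (hmono : Monotone f) {S : Finset (Fin n)}
    (hinj : Set.InjOn f ↑S) {b : Fin n} (hb : b ∈ S) :
    sgn (S.image f) (f b) = sgn S b := by
  unfold sgn
  congr 1
  have he : (S.image f).filter (· < f b) = (S.filter (· < b)).image f := by
    ext y
    simp only [Finset.mem_filter, Finset.mem_image]
    constructor
    · rintro ⟨⟨x, hx, rfl⟩, hlt⟩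
      refine ⟨x, ⟨hx, ?_⟩, rfl⟩
      by_contra hc
      exact absurd (hmono (not_lt.1 hc)) (not_le.2 hlt)
    · rintro ⟨x, ⟨hx, hxb⟩, rfl⟩
      exact ⟨⟨x, hx, rfl⟩, lt_of_le_of_ne (hmono hxb.le)
        fun hc => (ne_of_lt hxb) (hinj (Finset.mem_coe.2 hx) (Finset.mem_coe.2 hb) hc)⟩
  rw [he, Finset.card_image_of_injOn (hinj.mono (by
    intro x hx
    exact Finset.mem_coe.2 (Finset.mem_filter.1 (Finset.mem_coe.1 hx)).1))]

/-- The summand `e_S ↦ ∑_{b ∈ S} (-1)^{pos of b} e_{S ∖ {b}}`. -/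
def bfun (l : ℕ) (S : {S : Finset (Fin n) // S.card = l + 1}) : ExtP n l :=
  ∑ b ∈ S.1.attach, sgn S.1 b.1 •
    Finsupp.single (⟨S.1.erase b.1, by rw [Finset.card_erase_of_mem b.2, S.2]; omega⟩ :
      {S : Finset (Fin n) // S.card = l}) 1

/-- The boundary map `Λ^{l+1} ℂ^n → Λ^l ℂ^n`. -/
def bdry (n l : ℕ) : ExtP n (l + 1) →ₗ[ℂ] ExtP n l :=
  Finsupp.lsum ℂ fun S => LinearMap.toSpanSingleton ℂ (ExtP n l) (bfun l S)

lemma bdry_single (S : {S : Finset (Fin n) // S.card = l + 1}) :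
    bdry n l (Finsupp.single S 1) = bfun l S := by
  simp [bdry, LinearMap.toSpanSingleton_apply]

lemma bfun_coeff (S : {S : Finset (Fin n) // S.card = l + 1}) {b : Fin n} (hb : b ∈ S.1)
    (hc : (S.1.erase b).card = l) :
    (bfun l S) ⟨S.1.erase b, hc⟩ = sgn S.1 b := by
  unfold bfun
  rw [Finset.sum_apply']
  rw [Finset.sum_eq_single_of_mem (⟨b, hb⟩ : {x // x ∈ S.1}) (Finset.mem_attach _ _)]
  · rw [Finsupp.smul_apply, Finsupp.single_apply, if_pos rfl, smul_eq_mul, mul_one]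
  · intro c _ hcb
    rw [Finsupp.smul_apply, Finsupp.single_apply, if_neg, smul_zero]
    intro he
    apply hcb
    apply Subtype.ext
    have he' : S.1.erase c.1 = S.1.erase b := congrArg Subtype.val he
    by_contra hcc
    have h1 : c.1 ∈ S.1.erase c.1 := by
      rw [he']
      exact Finset.mem_erase.2 ⟨hcc, c.2⟩
    exact Finset.notMem_erase c.1 S.1 h1

lemma bdry_mem (l : ℕ) : bdry n l ∈ HomND n (l + 1) l := by
  intro f
  apply Finsupp.lhom_ext
  intro S y
  have h1 : (Finsupp.single S y : ExtP n (l + 1)) = y • Finsupp.single S 1 := by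
    rw [Finsupp.smul_single, smul_eq_mul, mul_one]
  rw [LinearMap.comp_apply, LinearMap.comp_apply, h1, map_smul, map_smul, map_smul, map_smul]
  congr 1
  set g := f.1 with hgdef
  rw [actOp_single, bdry_single]
  have hR : actOp n l g (bfun l S) = ∑ b ∈ S.1.attach, sgn S.1 b.1 •
      extImg n l g ⟨S.1.erase b.1, by rw [Finset.card_erase_of_mem b.2, S.2]; omega⟩ := by
    unfold bfun
    rw [map_sum]
    refine Finset.sum_congr rfl fun b _ => ?_
    rw [map_smul, actOp_single]
  rw [hR]
  by_cases hA : (S.1.image g).card = l + 1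
  · -- f is injective on S
    have hinj : Set.InjOn g ↑S.1 := Finset.card_image_iff.1 (by rw [hA, S.2])
    have hL : extImg n (l + 1) g S = Finsupp.single
        (⟨S.1.image g, hA⟩ : {S : Finset (Fin n) // S.card = l + 1}) 1 := dif_pos hA
    rw [hL, bdry_single]
    unfold bfun
    refine (Finset.sum_bij (fun (b : {x // x ∈ S.1}) _ =>
      (⟨g b.1, Finset.mem_image_of_mem g b.2⟩ : {x // x ∈ S.1.image g}))
      (fun b _ => Finset.mem_attach _ _) ?_ ?_ ?_).symm
    · intro b₁ h₁ b₂ h₂ he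
      exact Subtype.ext (hinj (Finset.mem_coe.2 b₁.2) (Finset.mem_coe.2 b₂.2)
        (congrArg Subtype.val he))
    · intro y _
      obtain ⟨x, hx, hgx⟩ := Finset.mem_image.1 y.2
      exact ⟨⟨x, hx⟩, Finset.mem_attach _ _, Subtype.ext hgx⟩
    · intro b _
      have hEc : ((S.1.erase b.1).image g).card = l := by
        rw [image_erase_of_injOn hinj (subset_refl S.1) b.2,
          Finset.card_erase_of_mem (Finset.mem_image_of_mem g b.2), hA]
        omega
      have hEx : extImg n l g ⟨S.1.erase b.1, by rw [Finset.card_erase_of_mem b.2, S.2]; omega⟩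
          = Finsupp.single (⟨(S.1.erase b.1).image g, hEc⟩ :
            {S : Finset (Fin n) // S.card = l}) 1 := dif_pos hEc
      rw [hEx, sgn_image f.2 hinj b.2]
      have e4 : (⟨(S.1.erase b.1).image g, hEc⟩ : {S : Finset (Fin n) // S.card = l})
          = ⟨(S.1.image g).erase (g b.1),
            by rw [Finset.card_erase_of_mem (Finset.mem_image_of_mem g b.2), hA]; omega⟩ :=
        Subtype.ext (image_erase_of_injOn hinj (subset_refl S.1) b.2)
      rw [e4]
  · -- f is not injective on S
    have hL : extImg n (l + 1) g S = 0 := dif_neg hA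
    rw [hL, map_zero]
    have hnotinj : ¬ Set.InjOn g ↑S.1 := fun hin =>
      hA (by rw [Finset.card_image_of_injOn hin, S.2])
    have injE : ∀ b : {x // x ∈ S.1}, ((S.1.erase b.1).image g).card = l →
        Set.InjOn g ↑(S.1.erase b.1) := by
      intro b hc
      refine Finset.card_image_iff.1 ?_
      rw [hc, Finset.card_erase_of_mem b.2, S.2]
      omega
    have hex : ∀ b : {x // x ∈ S.1}, ((S.1.erase b.1).image g).card = l →
        ∃ p, p ∈ S.1 ∧ p ≠ b.1 ∧ g p = g b.1 := fun b hc =>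
      exists_partner hnotinj b.2 (injE b hc)
    have hcpup : ∀ b : {x // x ∈ S.1}, ∀ hc : ((S.1.erase b.1).image g).card = l,
        ((S.1.erase (pup g S.1 b).1).image g).card = l := by
      intro b hc
      obtain ⟨hne, hfp⟩ := pup_spec (hex b hc)
      rw [erase_image_eq b.2 (pup g S.1 b).2 hne hfp]
      exact hc
    symm
    refine Finset.sum_involution
      (fun b _ => if hc : ((S.1.erase b.1).image g).card = l then pup g S.1 b else b)
      ?_ ?_ (fun b _ => Finset.mem_attach _ _) ?_
    · -- cancellation
      intro b hb
      by_cases hc : ((S.1.erase b.1).image g).card = l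
      · simp only [dif_pos hc]
        obtain ⟨hne, hfp⟩ := pup_spec (hex b hc)
        have hcp := hcpup b hc
        have e1 : extImg n l g ⟨S.1.erase b.1,
            by rw [Finset.card_erase_of_mem b.2, S.2]; omega⟩
            = Finsupp.single (⟨(S.1.erase b.1).image g, hc⟩ :
              {S : Finset (Fin n) // S.card = l}) 1 := dif_pos hc
        have e2 : extImg n l g ⟨S.1.erase (pup g S.1 b).1,
            by rw [Finset.card_erase_of_mem (pup g S.1 b).2, S.2]; omega⟩
            = Finsupp.single (⟨(S.1.erase (pup g S.1 b).1).image g, hcp⟩ :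
              {S : Finset (Fin n) // S.card = l}) 1 := dif_pos hcp
        rw [e1, e2]
        have e3 : (⟨(S.1.erase (pup g S.1 b).1).image g, hcp⟩ :
            {S : Finset (Fin n) // S.card = l})
            = ⟨(S.1.erase b.1).image g, hc⟩ :=
          Subtype.ext (erase_image_eq b.2 (pup g S.1 b).2 hne hfp)
        rw [e3, ← add_smul, sgn_partner f.2 b.2 (pup g S.1 b).2 hne hfp (injE b hc),
          add_neg_cancel, zero_smul]
      · simp only [dif_neg hc]
        have e1 : extImg n l g ⟨S.1.erase b.1,
            by rw [Finset.card_erase_of_mem b.2, S.2]; omega⟩ = 0 := dif_neg hc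
        rw [e1, smul_zero, add_zero]
    · -- g_ne
      intro b hb hF
      by_cases hc : ((S.1.erase b.1).image g).card = l
      · simp only [dif_pos hc]
        intro he
        exact (pup_spec (hex b hc)).1 (congrArg Subtype.val he)
      · exfalso
        apply hF
        have e1 : extImg n l g ⟨S.1.erase b.1,
            by rw [Finset.card_erase_of_mem b.2, S.2]; omega⟩ = 0 := dif_neg hc
        rw [e1, smul_zero]
    · -- involution
      intro b hb
      by_cases hc : ((S.1.erase b.1).image g).card = l
      · simp only [dif_pos hc]
        have hcp := hcpup b hc
        simp only [dif_pos hcp]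
        obtain ⟨hne, hfp⟩ := pup_spec (hex b hc)
        have hexp : ∃ p, p ∈ S.1 ∧ p ≠ (pup g S.1 b).1 ∧ g p = g (pup g S.1 b).1 :=
          ⟨b.1, b.2, Ne.symm hne, hfp.symm⟩
        exact (Subtype.ext (pup_unique hexp (injE _ hcp) b.2 (Ne.symm hne) hfp.symm)).symm
      · simp only [dif_neg hc]

lemma homnd_offdiag (l : ℕ) (hl1 : 1 ≤ l) (hln : l + 1 ≤ n) :
    HomND n (l + 1) l = Submodule.span ℂ {bdry n l} := by
  obtain ⟨A, -, hA⟩ := Finset.exists_subset_card_eq (s := (Finset.univ : Finset (Fin n))) (n := (l + 1))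
    (by simpa using hln)
  have hAne : A.Nonempty := Finset.card_pos.1 (by omega)
  have hAm : A.min' hAne ∈ A := A.min'_mem hAne
  have hAe : (A.erase (A.min' hAne)).card = l := by
    rw [Finset.card_erase_of_mem hAm, hA]
    omega
  apply le_antisymm
  swap
  · rw [Submodule.span_le, Set.singleton_subset_iff]
    exact bdry_mem l
  intro φ hφ
  set c := (φ (Finsupp.single (⟨A, hA⟩ : {S : Finset (Fin n) // S.card = l + 1}) 1))
    ⟨A.erase (A.min' hAne), hAe⟩ with hc
  have hψmem : φ - c • bdry n l ∈ HomND n (l + 1) l :=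
    Submodule.sub_mem _ hφ (Submodule.smul_mem _ c (bdry_mem l))
  set ψ := φ - c • bdry n l with hψ
  have hkey : (ψ (Finsupp.single (⟨A, hA⟩ : {S : Finset (Fin n) // S.card = l + 1}) 1))
      ⟨A.erase (A.min' hAne), hAe⟩ = 0 := by
    rw [hψ]
    simp only [LinearMap.sub_apply, LinearMap.smul_apply, Finsupp.sub_apply,
      Finsupp.smul_apply]
    rw [bdry_single, bfun_coeff ⟨A, hA⟩ hAm hAe, sgn_min hAne, smul_eq_mul, mul_one, ← hc,
      sub_self]
  have step1 : ∀ (S : {S : Finset (Fin n) // S.card = l + 1}) (hSne : S.1.Nonempty)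
      (hSe : (S.1.erase (S.1.min' hSne)).card = l),
      (ψ (Finsupp.single S 1)) ⟨S.1.erase (S.1.min' hSne), hSe⟩ = 0 := by
    intro S hSne hSe
    set g := tp A S.1 hAne hA S.2 with hg
    have hcS : (A.image g).card = l + 1 := by rw [hg, tp_image, S.2]
    have hgm : g (A.min' hAne) ∈ A.image g := Finset.mem_image_of_mem g hAm
    have hcT : ((A.erase (A.min' hAne)).image g).card = l := by
      rw [image_erase_of_injOn tp_injOn (subset_refl A) hAm,
        Finset.card_erase_of_mem hgm, hcS]
      omega
    have ht := coeff_transport hψmem ⟨A, hA⟩ ⟨A.erase (A.min' hAne), hAe⟩ hAne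
      tp_mono tp_injOn (Finset.erase_subset _ _) hcS hcT
    have hidx1 : (⟨A.image g, hcS⟩ : {S : Finset (Fin n) // S.card = l + 1}) = S :=
      Subtype.ext tp_image
    have hidx2 : (⟨(A.erase (A.min' hAne)).image g, hcT⟩ :
        {S : Finset (Fin n) // S.card = l}) = ⟨S.1.erase (S.1.min' hSne), hSe⟩ := by
      apply Subtype.ext
      show (A.erase (A.min' hAne)).image g = S.1.erase (S.1.min' hSne)
      have e1 : (A.erase (A.min' hAne)).image g = (A.image g).erase (g (A.min' hAne)) :=
        image_erase_of_injOn tp_injOn (subset_refl A) hAm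
      have e2 : A.image g = S.1 := tp_image
      have e3 : g (A.min' hAne) = S.1.min' hSne := tp_min hSne
      rw [e1, e2, e3]
    rw [hidx1, hidx2] at ht
    exact ht.trans hkey
  have step2 : ∀ (S : {S : Finset (Fin n) // S.card = l + 1}) (b : Fin n) (hb : b ∈ S.1)
      (hbe : (S.1.erase b).card = l), (ψ (Finsupp.single S 1)) ⟨S.1.erase b, hbe⟩ = 0 := by
    intro S
    have hSne : S.1.Nonempty := Finset.card_pos.1 (by omega)
    suffices H : ∀ (m : ℕ) (b : Fin n), b ∈ S.1 → b.val = m →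
        ∀ hbe : (S.1.erase b).card = l, (ψ (Finsupp.single S 1)) ⟨S.1.erase b, hbe⟩ = 0 by
      intro b hb hbe
      exact H b.val b hb rfl hbe
    intro m
    induction m using Nat.strong_induction_on with
    | _ m IH =>
    intro b hb hm hbe
    by_cases hbmin : b = S.1.min' hSne
    · subst hbmin
      exact step1 S hSne hbe
    · obtain ⟨a, haS, hab, hadj⟩ := exists_pred hSne hb hbmin
      have haU : a ∈ S.1.erase b := Finset.mem_erase.2 ⟨ne_of_lt hab, haS⟩
      have hbU : b ∉ S.1.erase b := Finset.notMem_erase b S.1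
      have hbSa : b ∈ S.1.erase a := Finset.mem_erase.2 ⟨Ne.symm (ne_of_lt hab), hb⟩
      have hins : insert b ((S.1.erase b).erase a) = S.1.erase a := by
        rw [Finset.erase_right_comm]
        exact Finset.insert_erase hbSa
      have hinsc : (insert b ((S.1.erase b).erase a)).card = l := by
        rw [hins, Finset.card_erase_of_mem haS, S.2]
        omega
      have hrel := coeff_collapse_rel hψmem S haS hb hab hadj ⟨S.1.erase b, hbe⟩
        (Finset.erase_subset _ _) haU hbU hinsc
      have hae : (S.1.erase a).card = l := by
        rw [Finset.card_erase_of_mem haS, S.2]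
        omega
      have hidx : (⟨insert b ((S.1.erase b).erase a), hinsc⟩ :
          {S : Finset (Fin n) // S.card = l}) = ⟨S.1.erase a, hae⟩ := Subtype.ext hins
      rw [hidx] at hrel
      have hIH := IH a.val (by omega) a haS rfl hae
      rw [hrel, hIH, neg_zero]
  have hzero : ψ = 0 := by
    apply Finsupp.lhom_ext
    intro S y
    have h1 : (Finsupp.single S y : ExtP n (l + 1)) = y • Finsupp.single S 1 := by
      rw [Finsupp.smul_single, smul_eq_mul, mul_one]
    rw [h1, map_smul, map_smul]
    have hSne : S.1.Nonempty := Finset.card_pos.1 (by omega)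
    have hz : ψ (Finsupp.single S 1) = 0 := by
      ext T
      simp only [Finsupp.coe_zero, Pi.zero_apply]
      by_cases hTS : T.1 ⊆ S.1
      · have hMcard : (S.1 \ T.1).card = 1 := by
          rw [Finset.card_sdiff_of_subset hTS, S.2, T.2]
          omega
        obtain ⟨b, hbeq⟩ := Finset.card_eq_one.1 hMcard
        have hbS : b ∈ S.1 := by
          have hbm : b ∈ S.1 \ T.1 := hbeq ▸ Finset.mem_singleton_self b
          exact (Finset.mem_sdiff.1 hbm).1
        have hTe : T.1 = S.1.erase b := by
          calc T.1 = S.1 ∩ T.1 := (Finset.inter_eq_right.2 hTS).symm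
          _ = S.1 \ (S.1 \ T.1) := (Finset.sdiff_sdiff_self_left S.1 T.1).symm
          _ = S.1 \ {b} := by rw [hbeq]
          _ = S.1.erase b := (Finset.erase_eq S.1 b).symm
        have hTc : (S.1.erase b).card = l := by rw [← hTe]; exact T.2
        have hst := step2 S b hbS hTc
        have hidx : (⟨S.1.erase b, hTc⟩ : {S : Finset (Fin n) // S.card = l}) = T :=
          Subtype.ext hTe.symm
        rw [hidx] at hst
        exact hst
      · exact coeff_zero_of_not_subset hψmem S T hSne hTS
    rw [hz, smul_zero, LinearMap.zero_apply, smul_zero]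
  have hφeq : φ = c • bdry n l := by
    have := sub_eq_zero.1 hzero
    exact this
  rw [hφeq]
  exact Submodule.smul_mem _ _ (Submodule.mem_span_singleton_self _)

end Aux

/-- For `1 ≤ k, l ≤ n`,
`dim Hom_{ℂ[NDFₙ]}(Λ^k ℂ^n, Λ^l ℂ^n)` is `1` if `l ∈ {k, k-1}` and `0` otherwise. -/
theorem ndf_hom_dim (n : ℕ) (hn : 1 ≤ n) (k l : ℕ)
    (hk1 : 1 ≤ k) (hk2 : k ≤ n) (hl1 : 1 ≤ l) (hl2 : l ≤ n) :
    Module.finrank ℂ ↥(HomND n k l) = if l = k ∨ l + 1 = k then 1 else 0 := by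
  by_cases h : l = k ∨ l + 1 = k
  · rw [if_pos h]
    rcases h with rfl | h2
    · -- l = k
      rw [homnd_diag l hl1 hl2]
      refine finrank_span_singleton ?_
      intro hid
      obtain ⟨A, -, hA⟩ := Finset.exists_subset_card_eq (s := (Finset.univ : Finset (Fin n))) (n := l)
        (by simpa using hl2)
      have h1 := LinearMap.congr_fun hid
        (Finsupp.single (⟨A, hA⟩ : {S : Finset (Fin n) // S.card = l}) 1)
      rw [LinearMap.id_apply, LinearMap.zero_apply] at h1
      exact one_ne_zero (Finsupp.single_eq_zero.1 h1)
    · -- l + 1 = k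
      subst h2
      rw [homnd_offdiag l hl1 hk2]
      refine finrank_span_singleton ?_
      intro hb
      obtain ⟨A, -, hA⟩ := Finset.exists_subset_card_eq (s := (Finset.univ : Finset (Fin n))) (n := (l + 1))
        (by simpa using hk2)
      have hAne : A.Nonempty := Finset.card_pos.1 (by omega)
      have hAm : A.min' hAne ∈ A := A.min'_mem hAne
      have hAe : (A.erase (A.min' hAne)).card = l := by
        rw [Finset.card_erase_of_mem hAm, hA]
        omega
      have h1 := LinearMap.congr_fun hb
        (Finsupp.single (⟨A, hA⟩ : {S : Finset (Fin n) // S.card = l + 1}) 1)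
      rw [bdry_single, LinearMap.zero_apply] at h1
      have h2 := congrArg (fun v : ExtP n l => v ⟨A.erase (A.min' hAne), hAe⟩) h1
      simp only [Finsupp.coe_zero, Pi.zero_apply] at h2
      rw [bfun_coeff ⟨A, hA⟩ hAm hAe, sgn_min hAne] at h2
      exact one_ne_zero h2
  · rw [if_neg h]
    push_neg at h
    rw [homnd_bot hk1 h.1 h.2, finrank_bot]

end
end

section
/- Every simple right ℂ[NDPF_n]-module is one-dimensional, and there are exactly 2^{n−1} isomorphism classes of simple ℂ[NDPF_n]-modules. Explicitly, for each subset S ⊆ {1,…,n−1} there is a one-dimensional module on which the generator π_i acts by 0 if i ∈ S and by 1 if i ∉ S, and these 2^{n−1} modules are pairwise non-isomorphic and exhaust the simple ℂ[NDPF_n]-modules. -/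
open scoped Classical

set_option maxHeartbeats 1000000
set_option synthInstance.maxHeartbeats 400000

noncomputable section

/-- The monoid `NDPFₙ` of non-decreasing parking functions on `{1, …, n}`:
non-decreasing functions with `f(i) ≤ i`, under composition. -/
def NDPF (n : ℕ) : Type := {f : Fin n → Fin n // Monotone f ∧ ∀ i, f i ≤ i}

instance (n : ℕ) : Monoid (NDPF n) where
  mul f g := ⟨f.1 ∘ g.1, f.2.1.comp g.2.1, fun i => le_trans (f.2.2 (g.1 i)) (g.2.2 i)⟩
  one := ⟨id, monotone_id, fun _ => le_rfl⟩
  mul_assoc _ _ _ := Subtype.ext rfl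
  one_mul _ := Subtype.ext rfl
  mul_one _ := Subtype.ext rfl

/-- The generator `πᵢ` of `NDPFₙ`: the function sending `i+1` to `i` and fixing
every other point (0-indexed). -/
def piGen (n i : ℕ) (h : i + 1 < n) : NDPF n :=
  ⟨fun j => if (j : ℕ) = i + 1 then ⟨i, Nat.lt_of_succ_lt h⟩ else j,
   by
     intro a b hab
     have hab' : (a : ℕ) ≤ (b : ℕ) := hab
     dsimp only
     split_ifs with ha hb hb
     · exact le_rfl
     · rw [Fin.le_def]
       simp only
       omega
     · rw [Fin.le_def]
       simp only
       have hbv := b.isLt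
       omega
     · exact hab,
   by
     intro j
     dsimp only
     split_ifs with hj
     · rw [Fin.le_def]
       simp only
       omega
     · exact le_rfl⟩

namespace NDPFAux

variable {n : ℕ}

lemma mul_apply (f g : NDPF n) (j : Fin n) : (f * g).1 j = f.1 (g.1 j) := rfl

lemma one_apply (j : Fin n) : (1 : NDPF n).1 j = j := rfl

lemma fix_mul {f g : NDPF n} {j : Fin n} : (f * g).1 j = j ↔ f.1 j = j ∧ g.1 j = j := by
  constructor
  · intro h
    rw [mul_apply] at h
    have h1 : g.1 j ≤ j := g.2.2 j
    have h2 : f.1 (g.1 j) ≤ g.1 j := f.2.2 _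
    have hg : g.1 j = j := le_antisymm h1 (by
      calc j = f.1 (g.1 j) := h.symm
        _ ≤ g.1 j := h2)
    refine ⟨?_, hg⟩
    rwa [hg] at h
  · rintro ⟨h1, h2⟩
    rw [mul_apply, h2, h1]

/-- Two elements have the same set of fixed points ("same content"). -/
def SC (a b : NDPF n) : Prop := ∀ j, a.1 j = j ↔ b.1 j = j

lemma SC.mul_left {a b : NDPF n} (h : SC a b) (x : NDPF n) : SC (x * a) (x * b) := by
  intro j
  rw [fix_mul, fix_mul, h j]

lemma SC.mul_right {a b : NDPF n} (h : SC a b) (x : NDPF n) : SC (a * x) (b * x) := by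
  intro j
  rw [fix_mul, fix_mul, h j]

lemma SC.comm (a b : NDPF n) : SC (a * b) (b * a) := by
  intro j
  rw [fix_mul, fix_mul, and_comm]

/-- The weight of an element: total displacement. -/
def w (f : NDPF n) : ℕ := ∑ j : Fin n, ((j : ℕ) - (f.1 j : ℕ))

lemma w_le_bound (f : NDPF n) : w f ≤ n * n := by
  calc w f ≤ ∑ _j : Fin n, n := by
        refine Finset.sum_le_sum fun j _ => ?_
        exact le_trans (Nat.sub_le _ _) (le_of_lt j.isLt)
    _ = n * n := by simp [Finset.sum_const, Finset.card_univ, Nat.mul_comm]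

lemma le_w_mul_left (f g : NDPF n) : w f ≤ w (f * g) := by
  refine Finset.sum_le_sum fun j _ => ?_
  have : f.1 (g.1 j) ≤ f.1 j := f.2.1 (g.2.2 j)
  exact Nat.sub_le_sub_left this _

lemma le_w_mul_right (f g : NDPF n) : w g ≤ w (f * g) := by
  refine Finset.sum_le_sum fun j _ => ?_
  have : f.1 (g.1 j) ≤ g.1 j := f.2.2 _
  exact Nat.sub_le_sub_left this _

lemma key {a b : NDPF n} (hab : SC a b) (x : NDPF n) :
    (a * x = x ∧ b * x = x) ∨ (w x < w (a * x) ∧ w x < w (b * x)) := by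
  by_cases h : ∀ j, a.1 (x.1 j) = x.1 j
  · left
    have hb : ∀ j, b.1 (x.1 j) = x.1 j := fun j => (hab _).1 (h j)
    exact ⟨Subtype.ext (funext h), Subtype.ext (funext hb)⟩
  · right
    push_neg at h
    obtain ⟨j0, hj0⟩ := h
    have hxj : (x.1 j0 : ℕ) ≤ (j0 : ℕ) := x.2.2 j0
    have ha' : (a.1 (x.1 j0) : ℕ) < (x.1 j0 : ℕ) :=
      lt_of_le_of_ne (a.2.2 _) (fun hh => hj0 (Fin.ext hh))
    have hb' : (b.1 (x.1 j0) : ℕ) < (x.1 j0 : ℕ) := by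
      refine lt_of_le_of_ne (b.2.2 _) (fun hh => hj0 ?_)
      exact (hab _).2 (Fin.ext hh)
    constructor
    · refine Finset.sum_lt_sum (fun j _ => ?_) ⟨j0, Finset.mem_univ _, ?_⟩
      · exact Nat.sub_le_sub_left (a.2.2 _) _
      · rw [mul_apply]
        omega
    · refine Finset.sum_lt_sum (fun j _ => ?_) ⟨j0, Finset.mem_univ _, ?_⟩
      · exact Nat.sub_le_sub_left (b.2.2 _) _
      · rw [mul_apply]
        omega

section Algebra

abbrev Alg (n : ℕ) := MonoidAlgebra ℂ (NDPF n)

instance : Finite (NDPF n) := by unfold NDPF; infer_instance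

instance : Module.Finite ℂ (Alg n) := Module.Finite.equiv (MonoidAlgebra.coeffLinearEquiv ℂ).symm

/-- Shorthand for the canonical embedding of the monoid. -/
def af (n : ℕ) : NDPF n →* Alg n := MonoidAlgebra.of ℂ (NDPF n)

variable (n : ℕ)

lemma af_mul (a b : NDPF n) : af n a * af n b = af n (a * b) := (map_mul (af n) a b).symm

lemma of_eq_af (g : NDPF n) : MonoidAlgebra.of ℂ (NDPF n) g = af n g := rfl

/-- Span of basis elements of weight at least `k`. -/
def FF (k : ℕ) : Submodule ℂ (Alg n) := Submodule.span ℂ (af n '' {x | k ≤ w x})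

/-- Span of differences of same-content monoid elements. -/
def KK : Submodule ℂ (Alg n) :=
  Submodule.span ℂ {u | ∃ a b : NDPF n, SC a b ∧ u = af n a - af n b}

def Kp (k : ℕ) : Submodule ℂ (Alg n) := KK n ^ k * ⊤

lemma FF_zero : FF n 0 = ⊤ := by
  rw [eq_top_iff]
  intro r hr
  clear hr
  induction r using MonoidAlgebra.induction_on with
  | of g => exact Submodule.subset_span ⟨g, Nat.zero_le _, rfl⟩
  | add f g hf hg => exact add_mem hf hg
  | smul c f hf => exact Submodule.smul_mem _ _ hf

lemma FF_bot : FF n (n * n + 1) = ⊥ := by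
  have : {x : NDPF n | n * n + 1 ≤ w x} = ∅ := by
    ext x
    simp only [Set.mem_setOf_eq, Set.mem_empty_iff_false, iff_false, not_le]
    exact Nat.lt_succ_of_le (w_le_bound x)
  rw [FF, this, Set.image_empty, Submodule.span_empty]

lemma mul_FF {k : ℕ} {u : Alg n} (hu : u ∈ FF n k) (r : Alg n) : u * r ∈ FF n k := by
  induction hu using Submodule.span_induction with
  | mem x hx =>
    obtain ⟨x0, hx0, rfl⟩ := hx
    induction r using MonoidAlgebra.induction_on with
    | of g =>
      rw [of_eq_af, af_mul]
      exact Submodule.subset_span ⟨x0 * g, le_trans hx0 (le_w_mul_left x0 g), rfl⟩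
    | add f g hf hg => rw [mul_add]; exact add_mem hf hg
    | smul c f hf => rw [mul_smul_comm]; exact Submodule.smul_mem _ _ hf
  | zero => rw [zero_mul]; exact zero_mem _
  | add x y hx hy ihx ihy => rw [add_mul]; exact add_mem ihx ihy
  | smul c x hx ihx => rw [smul_mul_assoc]; exact Submodule.smul_mem _ _ ihx

lemma mul_KK (r : Alg n) {u : Alg n} (hu : u ∈ KK n) : r * u ∈ KK n := by
  induction hu using Submodule.span_induction with
  | mem x hx =>
    obtain ⟨a, b, hab, rfl⟩ := hx
    induction r using MonoidAlgebra.induction_on with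
    | of g =>
      rw [of_eq_af, mul_sub, af_mul, af_mul]
      exact Submodule.subset_span ⟨g * a, g * b, hab.mul_left g, rfl⟩
    | add f g hf hg => rw [add_mul]; exact add_mem hf hg
    | smul c f hf => rw [smul_mul_assoc]; exact Submodule.smul_mem _ _ hf
  | zero => rw [mul_zero]; exact zero_mem _
  | add x y hx hy ihx ihy => rw [mul_add]; exact add_mem ihx ihy
  | smul c x hx ihx => rw [mul_smul_comm]; exact Submodule.smul_mem _ _ ihx

lemma KK_mul_FF {k : ℕ} {u : Alg n} (hu : u ∈ KK n) {y : Alg n} (hy : y ∈ FF n k) :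
    u * y ∈ FF n (k + 1) := by
  induction hu using Submodule.span_induction with
  | mem x hx =>
    obtain ⟨a, b, hab, rfl⟩ := hx
    induction hy using Submodule.span_induction with
    | mem y hy =>
      obtain ⟨x0, hx0, rfl⟩ := hy
      rw [sub_mul, af_mul, af_mul]
      rcases key hab x0 with ⟨h1, h2⟩ | ⟨h1, h2⟩
      · rw [h1, h2, sub_self]; exact zero_mem _
      · refine sub_mem ?_ ?_ <;> refine Submodule.subset_span ⟨_, ?_, rfl⟩
        · exact Nat.succ_le_of_lt (lt_of_le_of_lt hx0 h1)
        · exact Nat.succ_le_of_lt (lt_of_le_of_lt hx0 h2)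
    | zero => rw [mul_zero]; exact zero_mem _
    | add y z hy hz ihy ihz => rw [mul_add]; exact add_mem ihy ihz
    | smul c y hy ihy => rw [mul_smul_comm]; exact Submodule.smul_mem _ _ ihy
  | zero => rw [zero_mul]; exact zero_mem _
  | add x y hx hy ihx ihy => rw [add_mul]; exact add_mem ihx ihy
  | smul c x hx ihx => rw [smul_mul_assoc]; exact Submodule.smul_mem _ _ ihx

lemma Kp_le_FF : ∀ k, Kp n k ≤ FF n k := by
  intro k
  induction k with
  | zero =>
    rw [FF_zero]
    exact le_top
  | succ k ih =>
    rw [Kp, pow_succ', mul_assoc]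
    refine Submodule.mul_le.2 fun u hu y hy => ?_
    exact KK_mul_FF n hu (ih hy)

lemma top_mul_top : (⊤ : Submodule ℂ (Alg n)) * ⊤ = ⊤ := by
  rw [eq_top_iff]
  intro r _
  have : r * 1 ∈ (⊤ : Submodule ℂ (Alg n)) * ⊤ :=
    Submodule.mul_mem_mul Submodule.mem_top Submodule.mem_top
  rwa [mul_one] at this

lemma Kp_mul_right {k : ℕ} {z : Alg n} (hz : z ∈ Kp n k) (r : Alg n) : z * r ∈ Kp n k := by
  have : z * r ∈ (KK n ^ k * ⊤) * ⊤ := Submodule.mul_mem_mul hz Submodule.mem_top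
  rwa [mul_assoc, top_mul_top] at this

lemma Kp_mul_KK {k : ℕ} {z : Alg n} (hz : z ∈ Kp n k) {u : Alg n} (hu : u ∈ KK n) :
    z * u ∈ Kp n (k + 1) := by
  have h1 : z * u ∈ (KK n ^ k * ⊤) * KK n := Submodule.mul_mem_mul hz hu
  have h2 : (KK n ^ k * ⊤) * KK n ≤ Kp n (k + 1) := by
    rw [mul_assoc]
    have htK : (⊤ : Submodule ℂ (Alg n)) * KK n ≤ KK n * ⊤ := by
      refine Submodule.mul_le.2 fun r _ u' hu' => ?_
      have h3 : r * u' ∈ KK n := mul_KK n r hu'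
      have h4 : (r * u') * 1 ∈ KK n * ⊤ := Submodule.mul_mem_mul h3 Submodule.mem_top
      rwa [mul_one] at h4
    calc KK n ^ k * ((⊤ : Submodule ℂ (Alg n)) * KK n)
        ≤ KK n ^ k * (KK n * ⊤) := mul_le_mul' le_rfl htK
      _ = Kp n (k + 1) := by rw [Kp, ← mul_assoc, ← pow_succ]
  exact h2 h1

end Algebra

section ModuleSec

variable {n : ℕ} (M : Type) [AddCommGroup M] [Module (Alg n) M]

lemma sc_smul (hM : IsSimpleModule (Alg n) M) {a b : NDPF n} (hab : SC a b) (m : M) :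
    af n a • m = af n b • m := by
  haveI := hM
  set Dset : Set M :=
    {x | ∃ (a b : NDPF n) (m : M), SC a b ∧ x = af n a • m - af n b • m} with hD
  rcases eq_bot_or_eq_top (Submodule.span (Alg n) Dset) with hbot | htop
  · have hmem : af n a • m - af n b • m ∈ Submodule.span (Alg n) Dset :=
      Submodule.subset_span ⟨a, b, m, hab, rfl⟩
    rw [hbot, Submodule.mem_bot] at hmem
    exact sub_eq_zero.1 hmem
  · exfalso
    letI : Module ℂ M := Module.compHom M (algebraMap ℂ (Alg n))
    set QQ : ℕ → Submodule ℂ M := fun k =>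
      Submodule.span ℂ {x : M | ∃ z, z ∈ Kp n k ∧ ∃ m : M, x = z • m} with hQQ
    have Kp_zero : (1 : Alg n) ∈ Kp n 0 := by
      rw [Kp, pow_zero, one_mul]; exact Submodule.mem_top
    have step0 : ∀ (k : ℕ) (m0 : M), ∀ z ∈ Kp n k, z • m0 ∈ QQ (k + 1) := by
      intro k m0
      have hm0 : m0 ∈ Submodule.span (Alg n) Dset := htop ▸ Submodule.mem_top
      induction hm0 using Submodule.span_induction with
      | mem x hx =>
        intro z hz
        obtain ⟨a', b', m1, hab', rfl⟩ := hx
        have heq : z • (af n a' • m1 - af n b' • m1) = (z * (af n a' - af n b')) • m1 := by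
          rw [mul_smul, sub_smul]
        rw [heq]
        refine Submodule.subset_span ⟨_, ?_, m1, rfl⟩
        exact Kp_mul_KK n hz (Submodule.subset_span ⟨a', b', hab', rfl⟩)
      | zero => intro z hz; rw [smul_zero]; exact zero_mem _
      | add x y hx hy ihx ihy => intro z hz; rw [smul_add]; exact add_mem (ihx z hz) (ihy z hz)
      | smul r x hx ihx =>
        intro z hz
        rw [← mul_smul]
        exact ihx _ (Kp_mul_right n hz r)
    have all : ∀ (k : ℕ) (m0 : M), m0 ∈ QQ k := by
      intro k
      induction k with
      | zero =>
        intro m0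
        exact Submodule.subset_span ⟨1, Kp_zero, m0, (one_smul _ m0).symm⟩
      | succ k ih =>
        intro m0
        have h1 : QQ k ≤ QQ (k + 1) := by
          refine Submodule.span_le.2 ?_
          rintro x ⟨z, hz, m1, rfl⟩
          exact step0 k m1 z hz
        exact h1 (ih m0)
    have hzero : ∀ m0 : M, m0 = 0 := by
      intro m0
      have h1 : m0 ∈ QQ (n * n + 1) := all _ m0
      have h2 : QQ (n * n + 1) ≤ ⊥ := by
        refine Submodule.span_le.2 ?_
        rintro x ⟨z, hz, m1, rfl⟩
        have hzF : z ∈ FF n (n * n + 1) := Kp_le_FF n _ hz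
        rw [FF_bot, Submodule.mem_bot] at hzF
        rw [SetLike.mem_coe, hzF, zero_smul]
        exact Submodule.zero_mem ⊥
      exact (Submodule.mem_bot ℂ).1 (h2 h1)
    haveI := IsSimpleModule.nontrivial (Alg n) M
    obtain ⟨x, y, hxy⟩ := exists_pair_ne M
    exact hxy (by rw [hzero x, hzero y])

lemma exists_scalar (hM : IsSimpleModule (Alg n) M) (f : NDPF n) :
    ∃ c : ℂ, ∀ x : M, af n f • x = algebraMap ℂ (Alg n) c • x := by
  haveI := hM
  haveI := IsSimpleModule.nontrivial (Alg n) M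
  letI : Module ℂ M := Module.compHom M (algebraMap ℂ (Alg n))
  have csmul : ∀ (c : ℂ) (x : M), c • x = algebraMap ℂ (Alg n) c • x := fun _ _ => rfl
  have algswap : ∀ (c : ℂ) (r : Alg n) (x : M),
      r • (algebraMap ℂ (Alg n) c • x) = algebraMap ℂ (Alg n) c • (r • x) := by
    intro c r x
    rw [← mul_smul, ← mul_smul, Algebra.commutes]
  obtain ⟨m₀, hm₀⟩ := exists_ne (0 : M)
  have hspan : Submodule.span (Alg n) {m₀} = ⊤ := by
    rcases eq_bot_or_eq_top (Submodule.span (Alg n) {m₀}) with h | h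
    · exfalso
      have : m₀ ∈ Submodule.span (Alg n) {m₀} := Submodule.mem_span_singleton_self m₀
      rw [h, Submodule.mem_bot] at this
      exact hm₀ this
    · exact h
  let L : Alg n →ₗ[ℂ] M :=
    { toFun := fun r => r • m₀
      map_add' := fun r s => add_smul r s m₀
      map_smul' := fun c r => by
        show (c • r) • m₀ = c • (r • m₀)
        rw [Algebra.smul_def, mul_smul, csmul] }
  have hLsurj : Function.Surjective L := by
    intro x
    have hx : x ∈ Submodule.span (Alg n) {m₀} := hspan ▸ Submodule.mem_top
    obtain ⟨r, hr⟩ := Submodule.mem_span_singleton.1 hx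
    exact ⟨r, hr⟩
  haveI : Module.Finite ℂ M := Module.Finite.of_surjective L hLsurj
  have swap : ∀ (g : NDPF n) (x : M), af n f • (af n g • x) = af n g • (af n f • x) := by
    intro g x
    rw [← mul_smul, ← mul_smul, af_mul, af_mul]
    exact sc_smul M hM (SC.comm f g) x
  have swapA : ∀ (r : Alg n) (x : M), af n f • (r • x) = r • (af n f • x) := by
    intro r
    induction r using MonoidAlgebra.induction_on with
    | of g => intro x; rw [of_eq_af]; exact swap g x
    | add r s hr hs => intro x; rw [add_smul, add_smul, smul_add, hr, hs]
    | smul c r hr =>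
      intro x
      rw [Algebra.smul_def, mul_smul, mul_smul, algswap, hr]
  let φ : Module.End ℂ M :=
    { toFun := fun x => af n f • x
      map_add' := fun x y => smul_add _ x y
      map_smul' := fun c x => by
        show af n f • (c • x) = c • (af n f • x)
        rw [csmul, csmul]
        exact algswap c (af n f) x }
  obtain ⟨c, hc⟩ := Module.End.exists_eigenvalue φ
  obtain ⟨v, hv⟩ := hc.exists_hasEigenvector
  have hv1 : af n f • v = algebraMap ℂ (Alg n) c • v := by
    have h1 : φ v = c • v := hv.apply_eq_smul
    rw [csmul] at h1
    exact h1
  let ψ : M →ₗ[Alg n] M :=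
    { toFun := fun x => af n f • x - algebraMap ℂ (Alg n) c • x
      map_add' := fun x y => by
        show af n f • (x + y) - algebraMap ℂ (Alg n) c • (x + y) =
          (af n f • x - algebraMap ℂ (Alg n) c • x) + (af n f • y - algebraMap ℂ (Alg n) c • y)
        rw [smul_add, smul_add]
        abel
      map_smul' := fun r x => by
        show af n f • (r • x) - algebraMap ℂ (Alg n) c • (r • x) =
          r • (af n f • x - algebraMap ℂ (Alg n) c • x)
        rw [smul_sub, swapA, algswap] }
  have hψv : ψ v = 0 := by
    show af n f • v - algebraMap ℂ (Alg n) c • v = 0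
    rw [hv1, sub_self]
  rcases LinearMap.bijective_or_eq_zero ψ with hbij | hzero
  · exfalso
    have : v = 0 := hbij.injective (by rw [hψv, map_zero])
    exact hv.right this
  · refine ⟨c, fun x => ?_⟩
    have h1 : ψ x = 0 := by rw [hzero]; rfl
    have h2 : af n f • x - algebraMap ℂ (Alg n) c • x = 0 := h1
    exact sub_eq_zero.1 h2

lemma onedim (hM : IsSimpleModule (Alg n) M) :
    ∃ m : M, m ≠ 0 ∧ ∀ m' : M, ∃ c : ℂ, m' = algebraMap ℂ (Alg n) c • m := by
  haveI := hM
  haveI := IsSimpleModule.nontrivial (Alg n) M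
  obtain ⟨m, hm⟩ := exists_ne (0 : M)
  have hspan : Submodule.span (Alg n) {m} = ⊤ := by
    rcases eq_bot_or_eq_top (Submodule.span (Alg n) {m}) with h | h
    · exfalso
      have h2 : m ∈ Submodule.span (Alg n) {m} := Submodule.mem_span_singleton_self m
      rw [h, Submodule.mem_bot] at h2
      exact hm h2
    · exact h
  refine ⟨m, hm, fun m' => ?_⟩
  have claim : ∀ r : Alg n, ∃ c : ℂ, r • m = algebraMap ℂ (Alg n) c • m := by
    intro r
    induction r using MonoidAlgebra.induction_on with
    | of g =>
      obtain ⟨c, hc⟩ := exists_scalar M hM g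
      exact ⟨c, hc m⟩
    | add r s hr hs =>
      obtain ⟨c1, h1⟩ := hr
      obtain ⟨c2, h2⟩ := hs
      exact ⟨c1 + c2, by rw [add_smul, h1, h2, map_add, add_smul]⟩
    | smul c r hr =>
      obtain ⟨c1, h1⟩ := hr
      refine ⟨c * c1, ?_⟩
      rw [Algebra.smul_def, mul_smul, h1, ← mul_smul, ← map_mul]
  have hx : m' ∈ Submodule.span (Alg n) {m} := hspan ▸ Submodule.mem_top
  obtain ⟨r, hr⟩ := Submodule.mem_span_singleton.1 hx
  obtain ⟨c, hc⟩ := claim r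
  exact ⟨c, by rw [← hr, hc]⟩

lemma alg_smul_cancel {m : M} (hm : m ≠ 0) {c c' : ℂ}
    (h : algebraMap ℂ (Alg n) c • m = algebraMap ℂ (Alg n) c' • m) : c = c' := by
  by_contra hne
  have h1 : algebraMap ℂ (Alg n) (c - c') • m = 0 := by
    rw [map_sub, sub_smul, h, sub_self]
  have h2 : m = 0 := by
    have h3 := congrArg (fun x : M => algebraMap ℂ (Alg n) (c - c')⁻¹ • x) h1
    rwa [← mul_smul, ← map_mul, inv_mul_cancel₀ (sub_ne_zero.2 hne), map_one, one_smul,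
      smul_zero] at h3
  exact hm h2

end ModuleSec

section PiGenSec

lemma piGen_apply {n i : ℕ} (h : i + 1 < n) (j : Fin n) :
    (piGen n i h).1 j = if (j : ℕ) = i + 1 then ⟨i, Nat.lt_of_succ_lt h⟩ else j := rfl

lemma piGen_apply_eq {n i : ℕ} (h : i + 1 < n) {j : Fin n} (hj : (j : ℕ) = i + 1) :
    (piGen n i h).1 j = ⟨i, Nat.lt_of_succ_lt h⟩ := by
  rw [piGen_apply, if_pos hj]

lemma piGen_apply_ne {n i : ℕ} (h : i + 1 < n) {j : Fin n} (hj : (j : ℕ) ≠ i + 1) :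
    (piGen n i h).1 j = j := by
  rw [piGen_apply, if_neg hj]

lemma piGen_idem {n i : ℕ} (h : i + 1 < n) : piGen n i h * piGen n i h = piGen n i h := by
  apply Subtype.ext
  funext j
  show (piGen n i h).1 ((piGen n i h).1 j) = (piGen n i h).1 j
  by_cases hj : (j : ℕ) = i + 1
  · rw [piGen_apply_eq h hj, piGen_apply_ne h]
    exact (by omega : ¬ (i = i + 1))
  · rw [piGen_apply_ne h hj, piGen_apply_ne h hj]

/-- The character of `NDPF n` associated to a set `S` of generator indices. -/
def chi (n : ℕ) (S : Set ℕ) : NDPF n →* ℂ where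
  toFun := fun f => if ∀ i ∈ S, ∀ h : i + 1 < n, f.1 ⟨i + 1, h⟩ = ⟨i + 1, h⟩ then 1 else 0
  map_one' := if_pos (fun _ _ _ => rfl)
  map_mul' := fun f g => by
    have hiff : (∀ i ∈ S, ∀ h : i + 1 < n, (f * g).1 ⟨i + 1, h⟩ = ⟨i + 1, h⟩) ↔
        ((∀ i ∈ S, ∀ h : i + 1 < n, f.1 ⟨i + 1, h⟩ = ⟨i + 1, h⟩) ∧
         (∀ i ∈ S, ∀ h : i + 1 < n, g.1 ⟨i + 1, h⟩ = ⟨i + 1, h⟩)) := by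
      constructor
      · intro hc
        exact ⟨fun i hi hh => (fix_mul.1 (hc i hi hh)).1,
          fun i hi hh => (fix_mul.1 (hc i hi hh)).2⟩
      · rintro ⟨h1, h2⟩ i hi hh
        exact fix_mul.2 ⟨h1 i hi hh, h2 i hi hh⟩
    show (if _ then (1:ℂ) else 0) = (if _ then (1:ℂ) else 0) * (if _ then (1:ℂ) else 0)
    by_cases h1 : (∀ i ∈ S, ∀ h : i + 1 < n, f.1 ⟨i + 1, h⟩ = ⟨i + 1, h⟩)
    · by_cases h2 : (∀ i ∈ S, ∀ h : i + 1 < n, g.1 ⟨i + 1, h⟩ = ⟨i + 1, h⟩)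
      · rw [if_pos (hiff.2 ⟨h1, h2⟩), if_pos h1, if_pos h2]
        norm_num
      · rw [if_neg (fun hc => h2 ((hiff.1 hc).2)), if_pos h1, if_neg h2]
        norm_num
    · rw [if_neg (fun hc => h1 ((hiff.1 hc).1)), if_neg h1]
      norm_num

lemma chi_piGen {n : ℕ} (S : Set ℕ) (i : ℕ) (h : i + 1 < n) :
    chi n S (piGen n i h) = if i ∈ S then 0 else 1 := by
  by_cases hiS : i ∈ S
  · rw [if_pos hiS]
    have hC : ¬ (∀ i' ∈ S, ∀ h' : i' + 1 < n, (piGen n i h).1 ⟨i' + 1, h'⟩ = ⟨i' + 1, h'⟩) := by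
      intro hC
      have h1 := hC i hiS h
      rw [piGen_apply_eq h (by simp)] at h1
      have h2 : i = i + 1 := congrArg Fin.val h1
      omega
    exact if_neg hC
  · rw [if_neg hiS]
    have hC : ∀ i' ∈ S, ∀ h' : i' + 1 < n, (piGen n i h).1 ⟨i' + 1, h'⟩ = ⟨i' + 1, h'⟩ := by
      intro i' hi' h'
      have hne : i' ≠ i := fun hh => hiS (hh ▸ hi')
      rw [piGen_apply_ne h (by simp; omega)]
    exact if_pos hC

end PiGenSec

end NDPFAux

/-- **Statement 17.** Every simple `ℂ[NDPFₙ]`-module is one-dimensional; for each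
subset `S` of the generator indices there is a character of `NDPFₙ` (hence a
one-dimensional module) sending `πᵢ` to `0` for `i ∈ S` and to `1` for `i ∉ S`; and
every simple module arises this way, for exactly one subset `S` (so there are
exactly `2^{n-1}` isomorphism classes of simple `ℂ[NDPFₙ]`-modules, one for each
subset of `{0, …, n-2}`). -/
theorem ndpf_simple_modules (n : ℕ) (hn : 1 ≤ n) :
    (∀ (M : Type) [AddCommGroup M] [Module (MonoidAlgebra ℂ (NDPF n)) M],
      IsSimpleModule (MonoidAlgebra ℂ (NDPF n)) M →
      ∃ m : M, m ≠ 0 ∧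
        ∀ m' : M, ∃ c : ℂ, m' = algebraMap ℂ (MonoidAlgebra ℂ (NDPF n)) c • m) ∧
    (∀ S : Set ℕ, (∀ i ∈ S, i + 1 < n) →
      ∃ χ : NDPF n →* ℂ, ∀ (i : ℕ) (h : i + 1 < n),
        χ (piGen n i h) = if i ∈ S then 0 else 1) ∧
    (∀ (M : Type) [AddCommGroup M] [Module (MonoidAlgebra ℂ (NDPF n)) M],
      IsSimpleModule (MonoidAlgebra ℂ (NDPF n)) M →
      ∃! S : Set ℕ, (∀ i ∈ S, i + 1 < n) ∧
        ∃ m : M, m ≠ 0 ∧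
          (∀ m' : M, ∃ c : ℂ, m' = algebraMap ℂ (MonoidAlgebra ℂ (NDPF n)) c • m) ∧
          ∀ (i : ℕ) (h : i + 1 < n),
            (MonoidAlgebra.of ℂ (NDPF n) (piGen n i h)) • m =
              if i ∈ S then 0 else m) := by
  refine ⟨?_, ?_, ?_⟩
  · intro M _ _ hM
    exact NDPFAux.onedim M hM
  · intro S hS
    exact ⟨NDPFAux.chi n S, fun i h => NDPFAux.chi_piGen S i h⟩
  · intro M _ _ hM
    haveI := hM
    obtain ⟨m, hm, hall⟩ := NDPFAux.onedim M hM
    have hscal : ∀ (i : ℕ) (h : i + 1 < n), ∃ c : ℂ, (c = 0 ∨ c = 1) ∧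
        ∀ x : M, MonoidAlgebra.of ℂ (NDPF n) (piGen n i h) • x
          = algebraMap ℂ (MonoidAlgebra ℂ (NDPF n)) c • x := by
      intro i h
      obtain ⟨c, hc⟩ := NDPFAux.exists_scalar M hM (piGen n i h)
      refine ⟨c, ?_, fun x => hc x⟩
      have h1 : NDPFAux.af n (piGen n i h) • (NDPFAux.af n (piGen n i h) • m)
          = algebraMap ℂ (NDPFAux.Alg n) (c * c) • m := by
        rw [hc, hc, ← mul_smul, ← map_mul]
      have h2 : NDPFAux.af n (piGen n i h) • (NDPFAux.af n (piGen n i h) • m)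
          = algebraMap ℂ (NDPFAux.Alg n) c • m := by
        rw [← mul_smul, NDPFAux.af_mul, NDPFAux.piGen_idem h, hc]
      have h3 : c * c = c := NDPFAux.alg_smul_cancel M hm (h1.symm.trans h2)
      have h4 : c * (c - 1) = 0 := by ring_nf; linear_combination h3
      rcases mul_eq_zero.1 h4 with h5 | h5
      · exact Or.inl h5
      · exact Or.inr (by linear_combination h5)
    choose cg hcg01 hcg using hscal
    refine ⟨{i | ∃ h : i + 1 < n, cg i h = 0}, ⟨fun i hi => hi.choose, m, hm, hall, ?_⟩, ?_⟩
    · intro i h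
      by_cases hiS : i ∈ {i | ∃ h : i + 1 < n, cg i h = 0}
      · rw [if_pos hiS]
        obtain ⟨h', hc0⟩ := hiS
        have hcc : cg i h = 0 := by rw [Subsingleton.elim h h']; exact hc0
        rw [hcg i h m, hcc, map_zero, zero_smul]
      · rw [if_neg hiS]
        have hc1 : cg i h = 1 := (hcg01 i h).resolve_left (fun h0 => hiS ⟨h, h0⟩)
        rw [hcg i h m, hc1, map_one, one_smul]
    · rintro S' ⟨hS'bound, m', hm', hall', hact'⟩
      ext i
      constructor
      · intro hiS'
        have h : i + 1 < n := hS'bound i hiS'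
        have h1 := hact' i h
        rw [if_pos hiS', hcg i h m'] at h1
        have hc0 : cg i h = 0 := by
          refine NDPFAux.alg_smul_cancel M hm' (h1.trans ?_)
          rw [map_zero, zero_smul]
        exact ⟨h, hc0⟩
      · rintro ⟨h, hc0⟩
        by_contra hiS'
        have h1 := hact' i h
        rw [if_neg hiS', hcg i h m', hc0, map_zero, zero_smul] at h1
        exact hm' h1.symm


end
end

section
/- There is an isomorphism of ℂ-algebras ℂ[NDPF_n] ≅ ⊕_{k=0}^{n−1} ℂ[G_{n−1,k}], where G_{m,k} denotes the poset of k-element subsets of {1,…,m} ordered by: S ≤ T if and only if, writing S = {s_1 < ⋯ < s_k} and T = {t_1 < ⋯ < t_k}, one has s_i ≤ t_i for all i = 1,…,k. -/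
open scoped Classical

set_option maxHeartbeats 1000000
set_option synthInstance.maxHeartbeats 400000

noncomputable section

/-- The set `G_{m,k}` of `k`-element subsets of `{1, …, m}` (modeled as `Fin m`). -/
def GType (m k : ℕ) : Type := {S : Finset (Fin m) // S.card = k}

/-- The product (Gale) order on `G_{m,k}`: `S ≤ T` iff `sᵢ ≤ tᵢ` for all `i`, where
`s₁ < ⋯ < s_k` and `t₁ < ⋯ < t_k` are the elements of `S` and `T` written in
increasing order. -/
instance (m k : ℕ) : PartialOrder (GType m k) where
  le S T := List.Forall₂ (· ≤ ·) (S.1.sort (· ≤ ·)) (T.1.sort (· ≤ ·))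
  le_refl S := List.forall₂_same.2 fun x _ => le_rfl
  le_trans S T U hST hTU := by
    replace hST : List.Forall₂ (· ≤ ·) (S.1.sort (· ≤ ·)) (T.1.sort (· ≤ ·)) := hST
    replace hTU : List.Forall₂ (· ≤ ·) (T.1.sort (· ≤ ·)) (U.1.sort (· ≤ ·)) := hTU
    show List.Forall₂ (· ≤ ·) (S.1.sort (· ≤ ·)) (U.1.sort (· ≤ ·))
    rw [List.forall₂_iff_get] at hST hTU ⊢
    obtain ⟨h1, h2⟩ := hST
    obtain ⟨h3, h4⟩ := hTU
    refine ⟨h1.trans h3, fun i hi1 hi2 => ?_⟩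
    exact le_trans (h2 i hi1 (by omega)) (h4 i (by omega) hi2)
  le_antisymm S T hST hTS := by
    replace hST : List.Forall₂ (· ≤ ·) (S.1.sort (· ≤ ·)) (T.1.sort (· ≤ ·)) := hST
    replace hTS : List.Forall₂ (· ≤ ·) (T.1.sort (· ≤ ·)) (S.1.sort (· ≤ ·)) := hTS
    rw [List.forall₂_iff_get] at hST hTS
    obtain ⟨h1, h2⟩ := hST
    obtain ⟨h3, h4⟩ := hTS
    have hlist : S.1.sort (· ≤ ·) = T.1.sort (· ≤ ·) := by
      apply List.ext_get h1
      intro i hi1 hi2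
      exact le_antisymm (h2 i hi1 hi2) (h4 i hi2 hi1)
    have : S.1 = T.1 := by
      have hs := Finset.sort_toFinset S.1 (· ≤ ·)
      have ht := Finset.sort_toFinset T.1 (· ≤ ·)
      rw [← hs, ← ht, hlist]
    exact Subtype.ext this

instance (m k : ℕ) : Fintype (GType m k) :=
  inferInstanceAs (Fintype {S : Finset (Fin m) // S.card = k})

instance (m k : ℕ) : DecidableEq (GType m k) := Classical.decEq _

/-- The incidence algebra `ℂ[P]` of a finite poset `P`, realized concretely as the
algebra of matrices supported on the pairs `(u, v)` with `u ≤ v`.  Its basis elements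
`E_{(u,v)}` (`u ≤ v`) multiply by `E_{(u,v)} · E_{(u',v')} = δ_{v,u'} E_{(u,v')}`,
which is the multiplication rule of the paper. -/
def incMatAlg (P : Type) [Fintype P] [PartialOrder P] [DecidableEq P] :
    Subalgebra ℂ (Matrix P P ℂ) where
  carrier := {M | ∀ u v : P, ¬ u ≤ v → M u v = 0}
  mul_mem' := by
    intro a b ha hb u v huv
    rw [Matrix.mul_apply]
    refine Finset.sum_eq_zero fun c _ => ?_
    by_cases hc : u ≤ c
    · rw [hb c v fun hcv => huv (hc.trans hcv), mul_zero]
    · rw [ha u c hc, zero_mul]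
  add_mem' := by
    intro a b ha hb u v huv
    simp [Matrix.add_apply, ha u v huv, hb u v huv]
  algebraMap_mem' := by
    intro c u v huv
    have : u ≠ v := fun h => huv (h ▸ le_refl u)
    simp [Matrix.algebraMap_matrix_apply, this]

namespace NDPFProof

variable {m : ℕ}

/-- general sorted-image lemma -/
lemma map_sort_of_injOn {α : Type*} [LinearOrder α] [DecidableEq α] {f : α → α} (hf : Monotone f)
    (T : Finset α) (hinj : Set.InjOn f T) :
    (T.image f).sort (· ≤ ·) = (T.sort (· ≤ ·)).map f := by
  apply List.Perm.eq_of_pairwise' (r := (· ≤ ·)) ?_ ?_ ?_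
  rotate_left 2
  · apply List.perm_of_nodup_nodup_toFinset_eq
    · exact Finset.sort_nodup _ _
    · refine List.Nodup.map_on ?_ (Finset.sort_nodup _ _)
      intro x hx y hy hxy
      exact hinj (by simpa using (Finset.mem_sort _).1 hx)
        (by simpa using (Finset.mem_sort _).1 hy) hxy
    · ext x
      simp only [Finset.sort_toFinset, List.mem_toFinset, List.mem_map,
        Finset.mem_image]
      constructor
      · rintro ⟨y, hy, rfl⟩
        exact ⟨y, (Finset.mem_sort _).2 hy, rfl⟩
      · rintro ⟨y, hy, rfl⟩
        exact ⟨y, (Finset.mem_sort _).1 hy, rfl⟩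
  · exact Finset.pairwise_sort _ _
  · exact List.Pairwise.map f (fun a b hab => hf hab) (Finset.pairwise_sort _ _)

def hat (S : Finset (Fin m)) : Finset (Fin (m + 1)) := insert 0 (S.map (Fin.succEmb m))

lemma zero_mem_hat (S : Finset (Fin m)) : (0 : Fin (m + 1)) ∈ hat S :=
  Finset.mem_insert_self _ _

lemma mem_hat {S : Finset (Fin m)} {x : Fin (m + 1)} :
    x ∈ hat S ↔ x = 0 ∨ ∃ y ∈ S, y.succ = x := by
  simp [hat, Fin.succEmb]

lemma card_hat (S : Finset (Fin m)) : (hat S).card = S.card + 1 := by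
  rw [hat, Finset.card_insert_of_notMem, Finset.card_map]
  simp only [Finset.mem_map]
  rintro ⟨y, -, hy⟩
  exact absurd hy (Fin.succ_ne_zero y)

lemma hat_injective : Function.Injective (hat (m := m)) := by
  intro S T h
  ext y
  constructor <;> intro hy
  · have : (y.succ : Fin (m+1)) ∈ hat T := by
      rw [← h, mem_hat]; exact Or.inr ⟨y, hy, rfl⟩
    rcases mem_hat.1 this with h0 | ⟨z, hz, hzy⟩
    · exact absurd h0 (Fin.succ_ne_zero y)
    · rwa [← Fin.succ_injective _ hzy]
  · have : (y.succ : Fin (m+1)) ∈ hat S := by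
      rw [h, mem_hat]; exact Or.inr ⟨y, hy, rfl⟩
    rcases mem_hat.1 this with h0 | ⟨z, hz, hzy⟩
    · exact absurd h0 (Fin.succ_ne_zero y)
    · rwa [← Fin.succ_injective _ hzy]

def unhat (S : Finset (Fin (m + 1))) : Finset (Fin m) :=
  Finset.univ.filter (fun i => i.succ ∈ S)

lemma hat_unhat {S : Finset (Fin (m + 1))} (h0 : 0 ∈ S) : hat (unhat S) = S := by
  ext x
  rw [mem_hat]
  constructor
  · rintro (rfl | ⟨y, hy, rfl⟩)
    · exact h0
    · simpa [unhat] using hy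
  · intro hx
    rcases Fin.eq_zero_or_eq_succ x with rfl | ⟨y, rfl⟩
    · exact Or.inl rfl
    · exact Or.inr ⟨y, by simpa [unhat] using hx, rfl⟩

lemma card_unhat {S : Finset (Fin (m + 1))} (h0 : 0 ∈ S) :
    (unhat S).card + 1 = S.card := by
  rw [← card_hat, hat_unhat h0]

lemma sort_hat (S : Finset (Fin m)) :
    (hat S).sort (· ≤ ·) = 0 :: (S.sort (· ≤ ·)).map Fin.succ := by
  apply List.Perm.eq_of_pairwise' (r := (· ≤ ·)) ?_ ?_ ?_
  rotate_left 2
  · apply List.perm_of_nodup_nodup_toFinset_eq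
    · exact Finset.sort_nodup _ _
    · refine List.nodup_cons.2 ⟨?_, List.Nodup.map (Fin.succ_injective m) (Finset.sort_nodup _ _)⟩
      simp only [List.mem_map]
      rintro ⟨y, -, hy⟩
      exact absurd hy (Fin.succ_ne_zero y)
    · ext x
      simp only [Finset.sort_toFinset, List.toFinset_cons, List.mem_toFinset,
        Finset.mem_insert, List.mem_map, mem_hat]
      constructor
      · rintro (rfl | ⟨y, hy, rfl⟩)
        · exact Or.inl rfl
        · exact Or.inr ⟨y, (Finset.mem_sort _).2 hy, rfl⟩
      · rintro (rfl | ⟨y, hy, rfl⟩)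
        · exact Or.inl rfl
        · exact Or.inr ⟨y, (Finset.mem_sort _).1 hy, rfl⟩
  · exact Finset.pairwise_sort _ _
  · rw [List.pairwise_cons]
    constructor
    · intro b hb
      exact Fin.zero_le (a := b)
    · exact List.Pairwise.map Fin.succ (fun a b hab => Fin.succ_le_succ_iff.2 hab)
        (Finset.pairwise_sort _ _)

lemma gale_le_def {k : ℕ} (A B : GType m k) :
    A ≤ B ↔ List.Forall₂ (· ≤ ·) (A.1.sort (· ≤ ·)) (B.1.sort (· ≤ ·)) := Iff.rfl

lemma gale_le_hat {k : ℕ} (A B : GType m k) :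
    A ≤ B ↔ List.Forall₂ (· ≤ ·) ((hat A.1).sort (· ≤ ·)) ((hat B.1).sort (· ≤ ·)) := by
  rw [gale_le_def, sort_hat, sort_hat, List.forall₂_cons]
  rw [List.forall₂_map_left_iff, List.forall₂_map_right_iff]
  constructor
  · intro h
    exact ⟨le_refl 0, h.imp fun {a b} hab => Fin.succ_le_succ_iff.2 hab⟩
  · rintro ⟨-, h⟩
    exact h.imp fun {a b} hab => by
      simpa [Fin.succ_le_succ_iff] using hab

-- ### The matrix representation

lemma ndpf_zero (f : NDPF (m + 1)) : f.1 0 = 0 :=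
  Fin.le_zero_iff.1 (f.2.2 0)

lemma ndpf_one_val : (1 : NDPF (m + 1)).1 = id := rfl

lemma ndpf_mul_val (f g : NDPF (m + 1)) : (f * g).1 = f.1 ∘ g.1 := rfl

def ndpfMat (f : NDPF (m + 1)) (k : Fin (m + 1)) : Matrix (GType m k.1) (GType m k.1) ℂ :=
  fun A B => if (hat B.1).image f.1 = hat A.1 then 1 else 0

lemma le_of_image_hat {k : ℕ} (f : NDPF (m + 1)) {A B : GType m k}
    (him : (hat B.1).image f.1 = hat A.1) : A ≤ B := by
  have hcard : ((hat B.1).image f.1).card = (hat B.1).card := by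
    rw [him, card_hat, card_hat, A.2, B.2]
  have hinj : Set.InjOn f.1 (hat B.1) := Finset.card_image_iff.1 hcard
  rw [gale_le_hat, ← him, map_sort_of_injOn f.2.1 _ hinj, List.forall₂_map_left_iff]
  exact List.forall₂_same.2 fun x _ => f.2.2 x

lemma ndpfMat_mem (f : NDPF (m + 1)) (k : Fin (m + 1)) :
    ndpfMat f k ∈ incMatAlg (GType m k.1) := by
  intro A B hAB
  rw [ndpfMat, if_neg]
  intro him
  exact hAB (le_of_image_hat f him)

lemma zero_mem_image_hat (g : NDPF (m + 1)) (B : Finset (Fin m)) :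
    (0 : Fin (m + 1)) ∈ (hat B).image g.1 :=
  Finset.mem_image.2 ⟨0, zero_mem_hat B, ndpf_zero g⟩

def phi : NDPF (m + 1) →* (∀ k : Fin (m + 1), ↥(incMatAlg (GType m k.1))) where
  toFun f := fun k => ⟨ndpfMat f k, ndpfMat_mem f k⟩
  map_one' := by
    funext k
    apply Subtype.ext
    show ndpfMat 1 k = (1 : Matrix _ _ ℂ)
    funext A B
    rw [ndpfMat]
    show (if (hat B.1).image id = hat A.1 then (1:ℂ) else 0) = _
    rw [Finset.image_id, Matrix.one_apply]
    by_cases h : A = B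
    · subst h; rw [if_pos rfl, if_pos rfl]
    · rw [if_neg h, if_neg fun hh => h (Subtype.ext (hat_injective hh)).symm]
  map_mul' := by
    intro f g
    funext k
    apply Subtype.ext
    show ndpfMat (f * g) k = ndpfMat f k * ndpfMat g k
    funext A B
    rw [Matrix.mul_apply]
    by_cases hc : ∃ U : GType m k.1, hat U.1 = (hat B.1).image g.1
    · obtain ⟨U₀, hU₀⟩ := hc
      rw [Finset.sum_eq_single U₀]
      · show (if (hat B.1).image (f*g).1 = hat A.1 then (1:ℂ) else 0)
            = (if (hat U₀.1).image f.1 = hat A.1 then (1:ℂ) else 0) *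
              (if (hat B.1).image g.1 = hat U₀.1 then (1:ℂ) else 0)
        rw [if_pos hU₀.symm, mul_one, ndpf_mul_val, ← Finset.image_image, ← hU₀]
      · intro U _ hU
        show _ * (if (hat B.1).image g.1 = hat U.1 then (1:ℂ) else 0) = 0
        rw [if_neg, mul_zero]
        intro hh
        exact hU (Subtype.ext (hat_injective (hU₀.trans hh))).symm
      · intro h
        exact absurd (Finset.mem_univ U₀) h
    · have h1 : ∀ U : GType m k.1, ndpfMat f k A U * ndpfMat g k U B = 0 := by
        intro U
        show _ * (if (hat B.1).image g.1 = hat U.1 then (1:ℂ) else 0) = 0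
        rw [if_neg fun hh => hc ⟨U, hh.symm⟩, mul_zero]
      rw [Finset.sum_eq_zero fun U _ => h1 U]
      rw [ndpfMat, if_neg]
      intro him
      have h0 : (0 : Fin (m+1)) ∈ (hat B.1).image g.1 := zero_mem_image_hat g B.1
      have hcle : ((hat B.1).image g.1).card ≤ k.1 + 1 :=
        le_trans (Finset.card_image_le) (le_of_eq (by rw [card_hat, B.2]))
      have hcge : k.1 + 1 ≤ ((hat B.1).image g.1).card := by
        have : ((hat B.1).image g.1).image f.1 = hat A.1 := by
          rw [Finset.image_image, ← ndpf_mul_val, him]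
        calc k.1 + 1 = (hat A.1).card := by rw [card_hat, A.2]
          _ = (((hat B.1).image g.1).image f.1).card := by rw [this]
          _ ≤ ((hat B.1).image g.1).card := Finset.card_image_le
      have hcard : ((hat B.1).image g.1).card = k.1 + 1 := le_antisymm hcle hcge
      refine hc ⟨⟨unhat ((hat B.1).image g.1), ?_⟩, hat_unhat h0⟩
      have := card_unhat h0
      omega

-- ### The algebra homomorphism

abbrev Tgt (m : ℕ) := ∀ k : Fin (m + 1), ↥(incMatAlg (GType m k.1))

def Phi : MonoidAlgebra ℂ (NDPF (m + 1)) →ₐ[ℂ] Tgt m :=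
  MonoidAlgebra.lift ℂ (Tgt m) (NDPF (m + 1)) phi

lemma Phi_apply_entry (x : MonoidAlgebra ℂ (NDPF (m + 1))) (k : Fin (m + 1))
    (A B : GType m k.1) :
    ((Phi x k : Matrix (GType m k.1) (GType m k.1) ℂ) A B) =
      x.coeff.sum fun f c => c * (if (hat B.1).image f.1 = hat A.1 then 1 else 0) := by
  rw [Phi, MonoidAlgebra.lift_apply, Finsupp.sum, Finsupp.sum]
  rw [Finset.sum_apply]
  rw [AddSubmonoidClass.coe_finset_sum, Matrix.sum_apply]
  refine Finset.sum_congr rfl fun f _ => ?_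
  show ((x.coeff f • phi f) k : Matrix _ _ ℂ) A B = _
  rw [Pi.smul_apply]
  show (x.coeff f • (phi f k : Matrix _ _ ℂ)) A B = _
  rw [Matrix.smul_apply, smul_eq_mul]
  rfl

-- ### Fibre minima

def fib (f : NDPF (m + 1)) (i : Fin (m + 1)) : Finset (Fin (m + 1)) :=
  Finset.univ.filter fun j => f.1 j = f.1 i

lemma mem_fib_self (f : NDPF (m + 1)) (i : Fin (m + 1)) : i ∈ fib f i := by
  simp [fib]

def tmin (f : NDPF (m + 1)) (i : Fin (m + 1)) : Fin (m + 1) :=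
  (fib f i).min' ⟨i, mem_fib_self f i⟩

lemma tmin_le (f : NDPF (m + 1)) (i : Fin (m + 1)) : tmin f i ≤ i :=
  Finset.min'_le _ _ (mem_fib_self f i)

lemma f_tmin (f : NDPF (m + 1)) (i : Fin (m + 1)) : f.1 (tmin f i) = f.1 i := by
  have := Finset.min'_mem (fib f i) ⟨i, mem_fib_self f i⟩
  simpa [fib, tmin] using this

lemma tmin_eq_of_eq {f : NDPF (m + 1)} {a b : Fin (m + 1)} (h : f.1 a = f.1 b) :
    tmin f a = tmin f b := by
  have hfib : fib f a = fib f b := by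
    ext j; simp [fib, h]
  simp only [tmin]
  congr 1

def Tset (f : NDPF (m + 1)) : Finset (Fin (m + 1)) := Finset.univ.image (tmin f)

def Vset (f : NDPF (m + 1)) : Finset (Fin (m + 1)) := Finset.univ.image f.1

lemma zero_mem_Tset (f : NDPF (m + 1)) : 0 ∈ Tset f := by
  have h : tmin f 0 = 0 := le_antisymm (tmin_le f 0) (Fin.zero_le _)
  exact Finset.mem_image.2 ⟨0, Finset.mem_univ _, h⟩

lemma zero_mem_Vset (f : NDPF (m + 1)) : 0 ∈ Vset f :=
  Finset.mem_image.2 ⟨0, Finset.mem_univ _, ndpf_zero f⟩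

lemma image_Tset (f : NDPF (m + 1)) : (Tset f).image f.1 = Vset f := by
  rw [Tset, Finset.image_image, Vset]
  congr 1
  funext i
  exact f_tmin f i

lemma injOn_Tset (f : NDPF (m + 1)) : Set.InjOn f.1 (Tset f) := by
  intro a ha b hb hab
  simp only [Tset, Finset.coe_image, Set.mem_image] at ha hb
  obtain ⟨i, -, rfl⟩ := ha
  obtain ⟨j, -, rfl⟩ := hb
  have h1 : tmin f (tmin f i) = tmin f i := tmin_eq_of_eq (f_tmin f i)
  have h2 : tmin f (tmin f j) = tmin f j := tmin_eq_of_eq (f_tmin f j)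
  rw [← h1, ← h2]
  exact tmin_eq_of_eq hab

lemma card_TV (f : NDPF (m + 1)) : (Tset f).card = (Vset f).card := by
  rw [← image_Tset]
  exact (Finset.card_image_of_injOn (injOn_Tset f)).symm

lemma ge_of_image_Tset {f g : NDPF (m + 1)} (h : (Tset f).image g.1 = Vset f) :
    ∀ i, f.1 i ≤ g.1 i := by
  have hinjg : Set.InjOn g.1 (Tset f) := by
    apply Finset.card_image_iff.1
    rw [h, ← card_TV]
  have e1 : ((Tset f).image g.1).sort (· ≤ ·) = ((Tset f).sort (· ≤ ·)).map g.1 :=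
    map_sort_of_injOn g.2.1 _ hinjg
  have e2 : ((Tset f).image f.1).sort (· ≤ ·) = ((Tset f).sort (· ≤ ·)).map f.1 :=
    map_sort_of_injOn f.2.1 _ (injOn_Tset f)
  rw [h] at e1
  rw [image_Tset] at e2
  have hmaps : ((Tset f).sort (· ≤ ·)).map f.1 = ((Tset f).sort (· ≤ ·)).map g.1 := by
    rw [← e1, ← e2]
  have heq : ∀ a ∈ Tset f, f.1 a = g.1 a := by
    intro a ha
    exact List.map_eq_map_iff.1 hmaps a ((Finset.mem_sort _).2 ha)
  intro i
  have htm : tmin f i ∈ Tset f := Finset.mem_image.2 ⟨i, Finset.mem_univ _, rfl⟩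
  calc f.1 i = f.1 (tmin f i) := (f_tmin f i).symm
    _ = g.1 (tmin f i) := heq _ htm
    _ ≤ g.1 i := g.2.1 (tmin_le f i)

-- ### Weights

def wt (f : NDPF (m + 1)) : ℕ := ∑ i, (f.1 i : ℕ)

lemma wt_lt (f : NDPF (m + 1)) : wt f < (m + 1) * (m + 1) := by
  have h : wt f ≤ (Finset.univ : Finset (Fin (m+1))).card • m := by
    apply Finset.sum_le_card_nsmul
    intro i _
    exact Fin.is_le _
  simp only [Finset.card_univ, Fintype.card_fin, smul_eq_mul] at h
  nlinarith

lemma wt_lt_of_le_ne {f g : NDPF (m + 1)} (hle : ∀ i, f.1 i ≤ g.1 i) (hne : f ≠ g) :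
    wt f < wt g := by
  have hex : ∃ i, f.1 i ≠ g.1 i := by
    by_contra hc
    push_neg at hc
    exact hne (Subtype.ext (funext hc))
  obtain ⟨i, hi⟩ := hex
  apply Finset.sum_lt_sum (fun j _ => Fin.le_def.1 (hle j))
  exact ⟨i, Finset.mem_univ _, Nat.lt_of_le_of_ne (Fin.le_def.1 (hle i))
    (fun hc => hi (Fin.val_injective hc))⟩

-- ### Injectivity

lemma Phi_injective : Function.Injective (Phi (m := m)) := by
  rw [injective_iff_map_eq_zero]
  intro x hx
  have key : ∀ N (f : NDPF (m + 1)), (m + 1) * (m + 1) - wt f ≤ N → x.coeff f = 0 := by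
    intro N
    induction N with
    | zero => intro f hf; have := wt_lt f; omega
    | succ N ih =>
      intro f hf
      by_cases hmem : f ∈ x.coeff.support
      swap
      · exact Finsupp.notMem_support_iff.1 hmem
      have hcV1 : 1 ≤ (Vset f).card := Finset.card_pos.2 ⟨0, zero_mem_Vset f⟩
      have hcVm : (Vset f).card ≤ m + 1 := by
        calc (Vset f).card ≤ (Finset.univ : Finset (Fin (m+1))).card :=
            Finset.card_le_card (Finset.subset_univ _)
          _ = m + 1 := by simp
      set k : Fin (m + 1) := ⟨(Vset f).card - 1, by omega⟩ with hk
      have hcB := card_unhat (zero_mem_Tset f)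
      have hcA := card_unhat (zero_mem_Vset f)
      have hTV := card_TV f
      set B : GType m k.1 := ⟨unhat (Tset f), by simp only [hk]; omega⟩ with hBdef
      set A : GType m k.1 := ⟨unhat (Vset f), by simp only [hk]; omega⟩ with hAdef
      have hB : hat B.1 = Tset f := hat_unhat (zero_mem_Tset f)
      have hA : hat A.1 = Vset f := hat_unhat (zero_mem_Vset f)
      have hentry : ((Phi x k : Matrix (GType m k.1) (GType m k.1) ℂ) A B) = 0 := by
        rw [hx]
        rfl
      rw [Phi_apply_entry, hB, hA, Finsupp.sum,
        Finset.sum_eq_single_of_mem f hmem] at hentry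
      · rw [if_pos (image_Tset f), mul_one] at hentry
        exact hentry
      · intro g hg hgf
        by_cases him : (Tset f).image g.1 = Vset f
        · have hle := ge_of_image_Tset him
          have hwt : wt f < wt g := wt_lt_of_le_ne hle (fun hc => hgf (hc.symm ▸ rfl))
          have : x.coeff g = 0 := ih g (by omega)
          rw [this, zero_mul]
        · rw [if_neg him, mul_zero]
  refine MonoidAlgebra.ext (Finsupp.ext fun f => key ((m + 1) * (m + 1)) f (by omega))

-- ### Basis elements of the target

lemma stdBasis_mem {k : Fin (m + 1)} (A B : GType m k.1) (h : A ≤ B) :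
    Matrix.single A B (1 : ℂ) ∈ incMatAlg (GType m k.1) := by
  intro u v huv
  have hne : ¬(A = u ∧ B = v) := by rintro ⟨rfl, rfl⟩; exact huv h
  simp [Matrix.single, hne]

def Ebas (k : Fin (m + 1)) (A B : GType m k.1) (h : A ≤ B) : Tgt m :=
  Pi.single k ⟨Matrix.single A B 1, stdBasis_mem A B h⟩

lemma mem_of_entries (S : Subalgebra ℂ (Tgt m)) (y : Tgt m)
    (hE : ∀ (k : Fin (m + 1)) (A B : GType m k.1) (h : A ≤ B),
      ((y k : Matrix (GType m k.1) (GType m k.1) ℂ) A B) ≠ 0 → Ebas k A B h ∈ S) :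
    y ∈ S := by
  have hdecomp : y = ∑ k : Fin (m + 1), ∑ A : GType m k.1, ∑ B : GType m k.1,
      (if h : A ≤ B then ((y k : Matrix (GType m k.1) (GType m k.1) ℂ) A B) • Ebas k A B h
       else 0) := by
    funext k'
    simp only [Finset.sum_apply]
    rw [Finset.sum_eq_single k']
    · have hterm : ∀ A B : GType m k'.1,
          (if h : A ≤ B then ((y k' : Matrix _ _ ℂ) A B) • Ebas k' A B h else 0) k'
          = (if h : A ≤ B then
              (((y k' : Matrix _ _ ℂ) A B) • (⟨Matrix.single A B 1, stdBasis_mem A B h⟩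
                : ↥(incMatAlg (GType m k'.1)))) else 0) := by
        intro A B
        by_cases h : A ≤ B
        · rw [dif_pos h, dif_pos h, Pi.smul_apply, Ebas, Pi.single_eq_same]
        · rw [dif_neg h, dif_neg h, Pi.zero_apply]
      rw [Finset.sum_congr rfl fun A _ => Finset.sum_congr rfl fun B _ => hterm A B]
      apply Subtype.ext
      rw [AddSubmonoidClass.coe_finset_sum]
      rw [Finset.sum_congr rfl fun A (_ : A ∈ Finset.univ) =>
        AddSubmonoidClass.coe_finset_sum (M := Matrix (GType m k'.1) (GType m k'.1) ℂ) _ _]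
      have hmx := Matrix.matrix_eq_sum_single
        ((y k' : Matrix (GType m k'.1) (GType m k'.1) ℂ))
      refine hmx.trans (Finset.sum_congr rfl fun A _ => Finset.sum_congr rfl fun B _ => ?_)
      by_cases h : A ≤ B
      · rw [dif_pos h]
        show _ = ((y k' : Matrix _ _ ℂ) A B) • Matrix.single A B (1:ℂ)
        rw [Matrix.smul_single, smul_eq_mul, mul_one]
      · rw [dif_neg h]
        show _ = (0 : Matrix (GType m k'.1) (GType m k'.1) ℂ)
        rw [(y k').2 A B h, Matrix.single_zero]
    · intro k _ hk
      refine Finset.sum_eq_zero fun A _ => Finset.sum_eq_zero fun B _ => ?_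
      by_cases h : A ≤ B
      · rw [dif_pos h, Pi.smul_apply, Ebas, Pi.single_eq_of_ne hk.symm, smul_zero]
      · rw [dif_neg h, Pi.zero_apply]
    · intro h
      exact absurd (Finset.mem_univ k') h
  rw [hdecomp]
  refine Subalgebra.sum_mem S fun k _ => Subalgebra.sum_mem S fun A _ =>
    Subalgebra.sum_mem S fun B _ => ?_
  by_cases h : A ≤ B
  · rw [dif_pos h]
    by_cases hz : ((y k : Matrix (GType m k.1) (GType m k.1) ℂ) A B) = 0
    · rw [hz, zero_smul]; exact S.zero_mem
    · exact S.smul_mem (hE k A B h hz) _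
  · rw [dif_neg h]; exact S.zero_mem

-- ### Weights of finsets

def wtF (S : Finset (Fin (m + 1))) : ℕ := ∑ x ∈ S, (x : ℕ)

lemma wtF_eq_sort (S : Finset (Fin (m + 1))) :
    wtF S = ((S.sort (· ≤ ·)).map Fin.val).sum := by
  rw [wtF, ← Finset.sum_map_toList]
  exact (List.Perm.sum_eq (List.Perm.map Fin.val (Finset.sort_perm_toList S _))).symm

lemma forall₂_val_sum : ∀ {l l' : List (Fin (m + 1))}, List.Forall₂ (· ≤ ·) l l' →
    (l.map Fin.val).sum ≤ (l'.map Fin.val).sum ∧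
      ((l.map Fin.val).sum = (l'.map Fin.val).sum → l = l') := by
  intro l l' h
  induction h with
  | nil => exact ⟨le_rfl, fun _ => rfl⟩
  | @cons a b l l' hab hrest ih =>
    have h2 : (a : ℕ) ≤ (b : ℕ) := hab
    constructor
    · simp only [List.map_cons, List.sum_cons]
      omega
    · intro hs
      simp only [List.map_cons, List.sum_cons] at hs
      have h1 := ih.1
      have hv : (a : ℕ) = (b : ℕ) := by omega
      have hsum : (l.map Fin.val).sum = (l'.map Fin.val).sum := by omega
      rw [Fin.val_injective hv, ih.2 hsum]

lemma wtF_le_of_forall₂ {S S' : Finset (Fin (m + 1))}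
    (h : List.Forall₂ (· ≤ ·) (S.sort (· ≤ ·)) (S'.sort (· ≤ ·))) :
    wtF S ≤ wtF S' ∧ (wtF S = wtF S' → S = S') := by
  have := forall₂_val_sum h
  rw [wtF_eq_sort, wtF_eq_sort]
  refine ⟨this.1, fun he => ?_⟩
  have hsort := this.2 he
  rw [← Finset.sort_toFinset S (· ≤ ·), ← Finset.sort_toFinset S' (· ≤ ·), hsort]

lemma wtF_le_W (S : Finset (Fin (m + 1))) : wtF S ≤ (m + 1) * (m + 1) := by
  have h1 : wtF S ≤ wtF (Finset.univ : Finset (Fin (m + 1))) :=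
    Finset.sum_le_sum_of_subset (Finset.subset_univ _)
  have h2 : wtF (Finset.univ : Finset (Fin (m + 1))) ≤ (m + 1) * m := by
    have := Finset.sum_le_card_nsmul (Finset.univ : Finset (Fin (m + 1)))
      (fun x => (x : ℕ)) m (fun x _ => Fin.is_le _)
    simpa [wtF] using this
  nlinarith

-- ### The parking function attached to a pair A ≤ B

lemma cardHat {k : Fin (m + 1)} (X : GType m k.1) : (hat X.1).card = k.1 + 1 := by
  rw [card_hat, X.2]

lemma filter_le_nonempty {k : Fin (m + 1)} (B : GType m k.1) (i : Fin (m + 1)) :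
    ((hat B.1).filter (· ≤ i)).Nonempty :=
  ⟨0, Finset.mem_filter.2 ⟨zero_mem_hat _, Fin.zero_le _⟩⟩

def tmax {k : Fin (m + 1)} (B : GType m k.1) (i : Fin (m + 1)) : Fin (m + 1) :=
  ((hat B.1).filter (· ≤ i)).max' (filter_le_nonempty B i)

lemma tmax_mem {k : Fin (m + 1)} (B : GType m k.1) (i : Fin (m + 1)) :
    tmax B i ∈ hat B.1 :=
  (Finset.mem_filter.1 (Finset.max'_mem _ (filter_le_nonempty B i))).1

lemma tmax_le {k : Fin (m + 1)} (B : GType m k.1) (i : Fin (m + 1)) : tmax B i ≤ i :=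
  (Finset.mem_filter.1 (Finset.max'_mem _ (filter_le_nonempty B i))).2

lemma tmax_mono {k : Fin (m + 1)} (B : GType m k.1) {i i' : Fin (m + 1)} (h : i ≤ i') :
    tmax B i ≤ tmax B i' := by
  apply Finset.max'_subset
  intro x hx
  rw [Finset.mem_filter] at hx ⊢
  exact ⟨hx.1, le_trans hx.2 h⟩

lemma tmax_of_mem {k : Fin (m + 1)} (B : GType m k.1) {x : Fin (m + 1)}
    (hx : x ∈ hat B.1) : tmax B x = x := by
  refine le_antisymm (tmax_le B x) ?_
  apply Finset.le_max'
  rw [Finset.mem_filter]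
  exact ⟨hx, le_rfl⟩

def idx {k : Fin (m + 1)} (B : GType m k.1) (x : Fin (m + 1)) (hx : x ∈ hat B.1) :
    Fin (k.1 + 1) :=
  ((hat B.1).orderIsoOfFin (cardHat B)).symm ⟨x, hx⟩

lemma emb_idx {k : Fin (m + 1)} (B : GType m k.1) (x : Fin (m + 1)) (hx : x ∈ hat B.1) :
    (hat B.1).orderEmbOfFin (cardHat B) (idx B x hx) = x := by
  rw [← Finset.coe_orderIsoOfFin_apply, idx, OrderIso.apply_symm_apply]

lemma idx_emb {k : Fin (m + 1)} (B : GType m k.1) (j : Fin (k.1 + 1)) :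
    idx B ((hat B.1).orderEmbOfFin (cardHat B) j) (Finset.orderEmbOfFin_mem _ _ _) = j := by
  rw [idx]
  apply ((hat B.1).orderIsoOfFin (cardHat B)).symm_apply_eq.2
  exact Subtype.ext (Finset.coe_orderIsoOfFin_apply _ _ _).symm

lemma gale_emb {k : Fin (m + 1)} {A B : GType m k.1} (hAB : A ≤ B) (j : Fin (k.1 + 1)) :
    (hat A.1).orderEmbOfFin (cardHat A) j ≤ (hat B.1).orderEmbOfFin (cardHat B) j := by
  have h := (gale_le_hat A B).1 hAB
  rw [List.forall₂_iff_get] at h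
  have hlA : ((hat A.1).sort (· ≤ ·)).length = k.1 + 1 := by
    rw [Finset.length_sort, cardHat]
  have hlB : ((hat B.1).sort (· ≤ ·)).length = k.1 + 1 := by
    rw [Finset.length_sort, cardHat]
  have := h.2 j.1 (by omega) (by omega)
  rw [Finset.orderEmbOfFin_apply, Finset.orderEmbOfFin_apply]
  simpa [List.get_eq_getElem] using this

def fAB (k : Fin (m + 1)) (A B : GType m k.1) (hAB : A ≤ B) : NDPF (m + 1) :=
  ⟨fun i => (hat A.1).orderEmbOfFin (cardHat A) (idx B (tmax B i) (tmax_mem B i)),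
   by
     intro a b hab
     apply ((hat A.1).orderEmbOfFin (cardHat A)).monotone
     apply (((hat B.1).orderIsoOfFin (cardHat B)).symm).monotone
     exact Subtype.mk_le_mk.2 (tmax_mono B hab),
   by
     intro i
     calc (hat A.1).orderEmbOfFin (cardHat A) (idx B (tmax B i) (tmax_mem B i))
         ≤ (hat B.1).orderEmbOfFin (cardHat B) (idx B (tmax B i) (tmax_mem B i)) :=
           gale_emb hAB _
       _ = tmax B i := emb_idx B _ _
       _ ≤ i := tmax_le B i⟩

lemma fAB_emb {k : Fin (m + 1)} {A B : GType m k.1} (hAB : A ≤ B) (j : Fin (k.1 + 1)) :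
    (fAB k A B hAB).1 ((hat B.1).orderEmbOfFin (cardHat B) j)
      = (hat A.1).orderEmbOfFin (cardHat A) j := by
  have h1 : tmax B ((hat B.1).orderEmbOfFin (cardHat B) j)
      = (hat B.1).orderEmbOfFin (cardHat B) j :=
    tmax_of_mem B (Finset.orderEmbOfFin_mem _ _ _)
  have h2 : idx B (tmax B ((hat B.1).orderEmbOfFin (cardHat B) j))
      (tmax_mem B _) = j := by
    rw [idx]
    have h3 : (⟨tmax B ((hat B.1).orderEmbOfFin (cardHat B) j), tmax_mem B _⟩ :
        {x // x ∈ hat B.1}) = ((hat B.1).orderIsoOfFin (cardHat B)) j :=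
      Subtype.ext (h1.trans (Finset.coe_orderIsoOfFin_apply _ _ _).symm)
    rw [h3, OrderIso.symm_apply_apply]
  show (hat A.1).orderEmbOfFin (cardHat A)
      (idx B (tmax B ((hat B.1).orderEmbOfFin (cardHat B) j)) (tmax_mem B _)) = _
  rw [h2]

lemma fAB_mem_hatA {k : Fin (m + 1)} {A B : GType m k.1} (hAB : A ≤ B) (i : Fin (m + 1)) :
    (fAB k A B hAB).1 i ∈ hat A.1 :=
  Finset.orderEmbOfFin_mem _ _ _

lemma fAB_image_univ {k : Fin (m + 1)} {A B : GType m k.1} (hAB : A ≤ B) :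
    Finset.univ.image (fAB k A B hAB).1 = hat A.1 := by
  apply Finset.Subset.antisymm
  · intro a ha
    obtain ⟨i, -, rfl⟩ := Finset.mem_image.1 ha
    exact fAB_mem_hatA hAB i
  · intro a ha
    have : a ∈ Set.range ⇑((hat A.1).orderEmbOfFin (cardHat A)) := by
      rw [Finset.range_orderEmbOfFin]; exact ha
    obtain ⟨j, rfl⟩ := this
    exact Finset.mem_image.2 ⟨(hat B.1).orderEmbOfFin (cardHat B) j, Finset.mem_univ _,
      fAB_emb hAB j⟩

lemma fAB_image_hatB {k : Fin (m + 1)} {A B : GType m k.1} (hAB : A ≤ B) :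
    (hat B.1).image (fAB k A B hAB).1 = hat A.1 := by
  apply Finset.Subset.antisymm
  · intro a ha
    obtain ⟨i, -, rfl⟩ := Finset.mem_image.1 ha
    exact fAB_mem_hatA hAB i
  · intro a ha
    have : a ∈ Set.range ⇑((hat A.1).orderEmbOfFin (cardHat A)) := by
      rw [Finset.range_orderEmbOfFin]; exact ha
    obtain ⟨j, rfl⟩ := this
    exact Finset.mem_image.2 ⟨(hat B.1).orderEmbOfFin (cardHat B) j,
      Finset.orderEmbOfFin_mem _ _ _, fAB_emb hAB j⟩


lemma support_analysis {k : Fin (m + 1)} {A B : GType m k.1} (hAB : A ≤ B)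
    (C D : Finset (Fin (m + 1))) (hcard : D.card = C.card)
    (him : D.image (fAB k A B hAB).1 = C) :
    C.card < k.1 + 1 ∨ (C = hat A.1 ∧
      List.Forall₂ (· ≤ ·) ((hat B.1).sort (· ≤ ·)) (D.sort (· ≤ ·))) := by
  set f := fAB k A B hAB with hf
  have hsub : C ⊆ hat A.1 := by
    rw [← him, ← fAB_image_univ hAB, ← hf]
    exact Finset.image_subset_image (Finset.subset_univ D)
  have hle : C.card ≤ k.1 + 1 := le_trans (Finset.card_le_card hsub) (le_of_eq (cardHat A))
  rcases lt_or_eq_of_le hle with hlt | heq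
  · exact Or.inl hlt
  right
  have hCA : C = hat A.1 := Finset.eq_of_subset_of_card_le hsub (by rw [cardHat, heq])
  refine ⟨hCA, ?_⟩
  have hinj : Set.InjOn f.1 D := by
    apply Finset.card_image_iff.1
    rw [him, hcard]
  have hsort : C.sort (· ≤ ·) = (D.sort (· ≤ ·)).map f.1 := by
    rw [← him]
    exact map_sort_of_injOn f.2.1 D hinj
  have hlB : ((hat B.1).sort (· ≤ ·)).length = k.1 + 1 := by
    rw [Finset.length_sort, cardHat]
  have hlD : (D.sort (· ≤ ·)).length = k.1 + 1 := by
    rw [Finset.length_sort, hcard, heq]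
  rw [List.forall₂_iff_get]
  refine ⟨by omega, fun i hi1 hi2 => ?_⟩
  have hiD : i < (D.sort (· ≤ ·)).length := hi2
  set x : Fin (m + 1) := (D.sort (· ≤ ·))[i] with hx
  have hxD : x ∈ D := (Finset.mem_sort _).1 (List.getElem_mem _)
  have hfx : f.1 x = (hat A.1).orderEmbOfFin (cardHat A) ⟨i, by omega⟩ := by
    have e1 : (C.sort (· ≤ ·))[i]'(by rw [Finset.length_sort, heq]; omega)
        = (List.map f.1 (D.sort (· ≤ ·)))[i]'(by rw [List.length_map]; omega) :=
      List.getElem_of_eq hsort (by rw [Finset.length_sort, heq]; omega)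
    have e2 : (List.map f.1 (D.sort (· ≤ ·)))[i]'(by rw [List.length_map]; omega)
        = f.1 x := by
      rw [List.getElem_map]
    have e3 : (C.sort (· ≤ ·))[i]'(by rw [Finset.length_sort, heq]; omega)
        = ((hat A.1).sort (· ≤ ·))[i]'(by rw [Finset.length_sort, cardHat]; omega) :=
      List.getElem_of_eq (by rw [hCA]) (by rw [Finset.length_sort, heq]; omega)
    rw [Finset.orderEmbOfFin_apply]
    exact (e3.symm.trans (e1.trans e2)).symm
  have htm : tmax B x = (hat B.1).orderEmbOfFin (cardHat B) ⟨i, by omega⟩ := by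
    have h2 : (hat A.1).orderEmbOfFin (cardHat A) (idx B (tmax B x) (tmax_mem B x))
        = (hat A.1).orderEmbOfFin (cardHat A) ⟨i, by omega⟩ := hfx
    have h3 : idx B (tmax B x) (tmax_mem B x) = ⟨i, by omega⟩ :=
      ((hat A.1).orderEmbOfFin (cardHat A)).injective h2
    rw [← h3, emb_idx]
  have hgoal : ((hat B.1).sort (· ≤ ·)).get ⟨i, hi1⟩ = tmax B x := by
    rw [htm]
    exact List.get_eq_getElem.trans
      (Finset.orderEmbOfFin_apply (hat B.1) (cardHat B) ⟨i, by omega⟩).symm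
  have hgd : (D.sort (· ≤ ·)).get ⟨i, hi2⟩ = x := by
    rw [List.get_eq_getElem, hx]
  rw [hgoal, hgd]
  exact tmax_le B x


-- ### Measure and surjectivity

def meas (k : Fin (m + 1)) (B : GType m k.1) : ℕ :=
  k.1 * ((m + 1) * (m + 1) + 1) + ((m + 1) * (m + 1) - wtF (hat B.1))

lemma phi_entry (f : NDPF (m + 1)) (k : Fin (m + 1)) (A B : GType m k.1) :
    ((phi f k : Matrix (GType m k.1) (GType m k.1) ℂ) A B)
      = if (hat B.1).image f.1 = hat A.1 then 1 else 0 := rfl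

lemma Ebas_mem_range (N : ℕ) :
    ∀ (k : Fin (m + 1)) (A B : GType m k.1) (h : A ≤ B), meas k B ≤ N →
      Ebas k A B h ∈ (Phi (m := m)).range := by
  induction N using Nat.strong_induction_on with
  | _ N ih =>
  intro k A B hAB hm
  set f := fAB k A B hAB with hfdef
  have hphi : (phi f : Tgt m) ∈ (Phi (m := m)).range := by
    refine (AlgHom.mem_range _).2 ⟨MonoidAlgebra.single f 1, ?_⟩
    show (MonoidAlgebra.lift ℂ (Tgt m) (NDPF (m + 1))) phi (MonoidAlgebra.single f 1) = phi f
    rw [MonoidAlgebra.lift_single, one_smul]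
  set r : Tgt m := (phi f : Tgt m) - Ebas k A B hAB with hrdef
  have hrr : r ∈ (Phi (m := m)).range := by
    apply mem_of_entries
    intro k'' A'' B'' h'' hne
    have hEntry : ((r k'' : Matrix (GType m k''.1) (GType m k''.1) ℂ) A'' B'')
        = ((phi f k'' : Matrix (GType m k''.1) (GType m k''.1) ℂ) A'' B'')
          - (((Ebas k A B hAB) k'' : Matrix (GType m k''.1) (GType m k''.1) ℂ) A'' B'') := by
      rw [hrdef, Pi.sub_apply, AddSubgroupClass.coe_sub, Matrix.sub_apply]
    by_cases hkk : k'' = k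
    · subst hkk
      have hEb : (((Ebas k'' A B hAB) k'' : Matrix (GType m k''.1) (GType m k''.1) ℂ) A'' B'')
          = if A = A'' ∧ B = B'' then 1 else 0 := by
        rw [Ebas, Pi.single_eq_same]
        show Matrix.single A B (1 : ℂ) A'' B'' = _
        simp [Matrix.single]
      by_cases hpair : A = A'' ∧ B = B''
      · exfalso
        apply hne
        rw [hEntry, hEb, if_pos hpair, phi_entry]
        obtain ⟨rfl, rfl⟩ := hpair
        rw [if_pos (fAB_image_hatB hAB)]
        ring
      · have hphine : ((phi f k'' : Matrix (GType m k''.1) (GType m k''.1) ℂ) A'' B'') ≠ 0 := by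
          intro h0
          apply hne
          rw [hEntry, hEb, if_neg hpair, h0]
          ring
        rw [phi_entry] at hphine
        have him : (hat B''.1).image f.1 = hat A''.1 := by
          by_contra hcon
          rw [if_neg hcon] at hphine
          exact hphine rfl
        have hcard : (hat B''.1).card = (hat A''.1).card := by rw [cardHat, cardHat]
        rcases support_analysis hAB _ _ hcard him with hlt | ⟨hCA, hfa⟩
        · have := cardHat A''
          omega
        · have hA : A'' = A := Subtype.ext (hat_injective hCA)
          have hBne : B'' ≠ B := fun hB => hpair ⟨hA.symm, hB.symm⟩
          have hwle := wtF_le_of_forall₂ hfa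
          have hwlt : wtF (hat B.1) < wtF (hat B''.1) :=
            lt_of_le_of_ne hwle.1 (fun he => hBne (Subtype.ext (hat_injective (hwle.2 he))).symm)
          apply ih (meas k'' B'') _ k'' A'' B'' h'' le_rfl
          have h1 : wtF (hat B''.1) ≤ (m + 1) * (m + 1) := wtF_le_W _
          have hsub : (m + 1) * (m + 1) - wtF (hat B''.1)
              < (m + 1) * (m + 1) - wtF (hat B.1) := by omega
          have hmeas : meas k'' B'' < meas k'' B := Nat.add_lt_add_left hsub _
          omega
    · have hEb0 : (((Ebas k A B hAB) k'' : Matrix (GType m k''.1) (GType m k''.1) ℂ) A'' B'')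
          = 0 := by
        rw [Ebas, Pi.single_eq_of_ne hkk]
        rfl
      have hphine : ((phi f k'' : Matrix (GType m k''.1) (GType m k''.1) ℂ) A'' B'') ≠ 0 := by
        intro h0
        apply hne
        rw [hEntry, hEb0, h0]
        ring
      rw [phi_entry] at hphine
      have him : (hat B''.1).image f.1 = hat A''.1 := by
        by_contra hcon
        rw [if_neg hcon] at hphine
        exact hphine rfl
      have hcard : (hat B''.1).card = (hat A''.1).card := by rw [cardHat, cardHat]
      rcases support_analysis hAB _ _ hcard him with hlt | ⟨hCA, -⟩
      · have hklt : k''.1 < k.1 := by have := cardHat A''; omega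
        apply ih (meas k'' B'') _ k'' A'' B'' h'' le_rfl
        have h1 : (m + 1) * (m + 1) - wtF (hat B''.1) ≤ (m + 1) * (m + 1) := Nat.sub_le _ _
        have hsucc : k''.1 + 1 ≤ k.1 := Nat.succ_le_of_lt hklt
        have hmid : (k''.1 + 1) * ((m + 1) * (m + 1) + 1)
            = k''.1 * ((m + 1) * (m + 1) + 1) + ((m + 1) * (m + 1) + 1) := add_one_mul _ _
        have hmul : (k''.1 + 1) * ((m + 1) * (m + 1) + 1)
            ≤ k.1 * ((m + 1) * (m + 1) + 1) := Nat.mul_le_mul_right _ hsucc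
        have hmeas : meas k'' B'' < meas k B := by
          have e1 : meas k'' B'' ≤ k''.1 * ((m + 1) * (m + 1) + 1) + (m + 1) * (m + 1) :=
            Nat.add_le_add_left h1 _
          have e2 : k.1 * ((m + 1) * (m + 1) + 1) ≤ meas k B := Nat.le_add_right _ _
          omega
        omega
      · exfalso
        apply hkk
        have h1 : (hat A''.1).card = k''.1 + 1 := cardHat A''
        have h2 : (hat A''.1).card = k.1 + 1 := by rw [hCA]; exact cardHat A
        exact Fin.ext (by omega)
  have hEq : Ebas k A B hAB = (phi f : Tgt m) - r := by rw [hrdef, sub_sub_cancel]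
  rw [hEq]
  exact Subalgebra.sub_mem _ hphi hrr

lemma Phi_surjective : Function.Surjective (Phi (m := m)) := by
  intro y
  have hy : y ∈ (Phi (m := m)).range :=
    mem_of_entries _ y fun k A B h _ => Ebas_mem_range (meas k B) k A B h le_rfl
  exact (AlgHom.mem_range _).1 hy

end NDPFProof


/-- **Statement 19.** The monoid algebra `ℂ[NDPFₙ]` is isomorphic, as a `ℂ`-algebra,
to the direct sum `⊕_{k=0}^{n-1} ℂ[G_{n-1,k}]` of the incidence algebras of the
posets `G_{n-1,k}` of `k`-element subsets of `{1, …, n-1}` with the componentwise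
(Gale) order. -/
theorem ndpf_incidence_decomposition (n : ℕ) (hn : 1 ≤ n) :
    Nonempty (MonoidAlgebra ℂ (NDPF n) ≃ₐ[ℂ]
      ((k : Fin n) → ↥(incMatAlg (GType (n - 1) k.1)))) := by
  obtain ⟨m, rfl⟩ : ∃ m, n = m + 1 := ⟨n - 1, by omega⟩
  exact ⟨AlgEquiv.ofBijective NDPFProof.Phi
    ⟨NDPFProof.Phi_injective, NDPFProof.Phi_surjective⟩⟩

end
end
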